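/- arXiv:2003.09254 — 7 statements merged into one kernel-verified Lean document; each statement's English description precedes it below -/
import Mathlib

section
/- F2 is atomless conditionally to F1 if and only if there exists a sub-σ-algebra B ⊆ F2 that is independent of F1 and atomless for P, i.e., for every set G ∈ B with P[G] > 0 there exists H ∈ B with H ⊆ G and 0 < P[H] < P[G]. -/
open MeasureTheory ProbabilityTheory Set Filter
open scoped ENNReal Topology

/-- The conditional expectation (under `P`, defined on `F2`) of the indicator of `A`
given the sub-σ-algebra `F1`. -/
noncomputable def cexpInd {Ω : Type*} (F1 F2 : MeasurableSpace Ω) (P : @Measure Ω F2)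
    (A : Set Ω) : Ω → ℝ :=
  P[A.indicator (fun _ => (1 : ℝ)) | F1]

/-- `F2` is atomless conditionally to `F1`: for every `A ∈ F2` there is `B ∈ F2`, `B ⊆ A`,
with `0 < E[1_B | F1] < E[1_A | F1]` almost surely on the set `{E[1_A | F1] > 0}`. -/
def CondAtomless {Ω : Type*} (F1 F2 : MeasurableSpace Ω) (P : @Measure Ω F2) : Prop :=
  ∀ A : Set Ω, MeasurableSet[F2] A → ∃ B : Set Ω, MeasurableSet[F2] B ∧ B ⊆ A ∧
    ∀ᵐ ω ∂P, 0 < cexpInd F1 F2 P A ω →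
      0 < cexpInd F1 F2 P B ω ∧ cexpInd F1 F2 P B ω < cexpInd F1 F2 P A ω

section Basics

variable {Ω : Type*} {F1 F2 : MeasurableSpace Ω} {P : @Measure Ω F2}

lemma intInd (hP : @IsFiniteMeasure Ω F2 P) {A : Set Ω} (hA : MeasurableSet[F2] A) :
    Integrable (A.indicator (fun _ => (1 : ℝ))) P := by
  haveI := hP
  exact (integrable_const (1 : ℝ)).indicator hA

lemma ce_sm {A : Set Ω} : StronglyMeasurable[F1] (cexpInd F1 F2 P A) :=
  stronglyMeasurable_condExp

lemma ce_meas {A : Set Ω} : Measurable[F1] (cexpInd F1 F2 P A) :=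
  (ce_sm (P := P)).measurable

lemma ce_int {A : Set Ω} : Integrable (cexpInd F1 F2 P A) P :=
  integrable_condExp

lemma sigmaFiniteTrim (hle : F1 ≤ F2) (hP : @IsFiniteMeasure Ω F2 P) :
    SigmaFinite (P.trim hle) := by
  haveI := hP
  infer_instance

lemma ce_nonneg (hP : @IsFiniteMeasure Ω F2 P) {A : Set Ω} :
    ∀ᵐ ω ∂P, 0 ≤ cexpInd F1 F2 P A ω := by
  haveI := hP
  exact condExp_nonneg (Eventually.of_forall fun ω =>
    Set.indicator_nonneg (fun _ _ => zero_le_one) ω)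

lemma setIntegral_ce (hle : F1 ≤ F2) (hP : @IsFiniteMeasure Ω F2 P) {A F : Set Ω}
    (hA : MeasurableSet[F2] A) (hF : MeasurableSet[F1] F) :
    ∫ ω in F, cexpInd F1 F2 P A ω ∂P = (P (A ∩ F)).toReal := by
  haveI := hP
  haveI := sigmaFiniteTrim hle hP
  rw [cexpInd, setIntegral_condExp hle (intInd hP hA) hF,
    setIntegral_indicator hA, setIntegral_const, smul_eq_mul, mul_one,
    Set.inter_comm, measureReal_def]

lemma ce_mono (hP : @IsFiniteMeasure Ω F2 P) {A B : Set Ω}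
    (hA : MeasurableSet[F2] A) (hB : MeasurableSet[F2] B) (hAB : A ⊆ B) :
    ∀ᵐ ω ∂P, cexpInd F1 F2 P A ω ≤ cexpInd F1 F2 P B ω := by
  haveI := hP
  exact condExp_mono (intInd hP hA) (intInd hP hB)
    (Eventually.of_forall fun ω => Set.indicator_le_indicator_of_subset hAB
      (fun _ => zero_le_one) ω)

lemma ce_le_one (hle : F1 ≤ F2) (hP : @IsProbabilityMeasure Ω F2 P) {A : Set Ω}
    (hA : MeasurableSet[F2] A) :
    ∀ᵐ ω ∂P, cexpInd F1 F2 P A ω ≤ 1 := by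
  haveI := hP
  haveI := sigmaFiniteTrim hle (by infer_instance : @IsFiniteMeasure Ω F2 P)
  have h := condExp_mono (μ := P) (m := F1) (intInd (by infer_instance : @IsFiniteMeasure Ω F2 P) hA)
    (integrable_const (1 : ℝ))
    (Eventually.of_forall fun ω => Set.indicator_le_self' (fun _ _ => zero_le_one) ω)
  filter_upwards [h] with ω hω
  rw [condExp_const hle] at hω
  exact hω

lemma ce_union (hP : @IsFiniteMeasure Ω F2 P) {A B : Set Ω}
    (hA : MeasurableSet[F2] A) (hB : MeasurableSet[F2] B) (hd : Disjoint A B) :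
    cexpInd F1 F2 P (A ∪ B) =ᵐ[P] cexpInd F1 F2 P A + cexpInd F1 F2 P B := by
  haveI := hP
  have : (A ∪ B).indicator (fun _ => (1 : ℝ)) =
      A.indicator (fun _ => (1 : ℝ)) + B.indicator (fun _ => (1 : ℝ)) := by
    ext ω
    exact congrFun (Set.indicator_union_of_disjoint hd _) ω
  rw [cexpInd, this]
  exact condExp_add (intInd hP hA) (intInd hP hB) F1

lemma ce_diff (hP : @IsFiniteMeasure Ω F2 P) {A B : Set Ω}
    (hA : MeasurableSet[F2] A) (hB : MeasurableSet[F2] B) (hBA : B ⊆ A) :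
    cexpInd F1 F2 P (A \ B) =ᵐ[P] cexpInd F1 F2 P A - cexpInd F1 F2 P B := by
  have h := ce_union (F1 := F1) hP (hA.diff hB) hB disjoint_sdiff_self_left
  rw [Set.diff_union_of_subset hBA] at h
  filter_upwards [h] with ω hω
  simp only [Pi.add_apply, Pi.sub_apply] at *
  linarith

lemma ce_inter_F1 (hle : F1 ≤ F2) (hP : @IsFiniteMeasure Ω F2 P) {A F : Set Ω}
    (hA : MeasurableSet[F2] A) (hF : MeasurableSet[F1] F) :
    cexpInd F1 F2 P (A ∩ F) =ᵐ[P] F.indicator (cexpInd F1 F2 P A) := by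
  haveI := hP
  have : (A ∩ F).indicator (fun _ => (1 : ℝ)) =
      F.indicator (A.indicator (fun _ => (1 : ℝ))) := by
    rw [Set.indicator_indicator, Set.inter_comm]
  rw [cexpInd, this]
  exact condExp_indicator (intInd hP hA) hF

end Basics

section Order

variable {Ω : Type*} {F1 F2 : MeasurableSpace Ω} {P : @Measure Ω F2}

/-- If an `F1`-strongly measurable integrable function has nonpositive integral on every
`F1`-measurable set, it is a.e. nonpositive. -/
lemma ae_nonpos_of_setIntegral (hle : F1 ≤ F2) (hP : @IsFiniteMeasure Ω F2 P)
    {g : Ω → ℝ} (hgm : StronglyMeasurable[F1] g) (hgi : Integrable g P)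
    (h : ∀ F : Set Ω, MeasurableSet[F1] F → ∫ ω in F, g ω ∂P ≤ 0) :
    ∀ᵐ ω ∂P, g ω ≤ 0 := by
  haveI := hP
  have hmeas : ∀ n : ℕ, MeasurableSet[F2] {ω | (1 : ℝ) / (n + 1) ≤ g ω} := by
    intro n
    exact hle _ (hgm.measurable measurableSet_Ici)
  have hnull : ∀ n : ℕ, P {ω | (1 : ℝ) / (n + 1) ≤ g ω} = 0 := by
    intro n
    by_contra hpos
    have hFn : MeasurableSet[F1] {ω | (1 : ℝ) / (n + 1) ≤ g ω} :=
      hgm.measurable measurableSet_Ici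
    have h1 : ∫ ω in {ω | (1 : ℝ) / (n + 1) ≤ g ω}, ((1 : ℝ) / (n + 1)) ∂P ≤
        ∫ ω in {ω | (1 : ℝ) / (n + 1) ≤ g ω}, g ω ∂P := by
      refine setIntegral_mono_on integrableOn_const
        hgi.integrableOn (hmeas n) ?_
      intro ω hω
      exact hω
    have h2 : (0 : ℝ) < ∫ ω in {ω | (1 : ℝ) / (n + 1) ≤ g ω}, ((1 : ℝ) / (n + 1)) ∂P := by
      rw [setIntegral_const, smul_eq_mul]
      have : 0 < (P {ω | (1 : ℝ) / (n + 1) ≤ g ω}).toReal := by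
        refine ENNReal.toReal_pos hpos (measure_ne_top _ _)
      positivity
    linarith [h _ hFn]
  have : P {ω | 0 < g ω} = 0 := by
    have hsub : {ω | 0 < g ω} ⊆ ⋃ n : ℕ, {ω | (1 : ℝ) / (n + 1) ≤ g ω} := by
      intro ω hω
      obtain ⟨n, hn⟩ := exists_nat_one_div_lt (show (0:ℝ) < g ω from hω)
      exact Set.mem_iUnion.2 ⟨n, le_of_lt hn⟩
    refine le_antisymm (le_trans (measure_mono hsub) ?_) (zero_le)
    rw [measure_iUnion_null hnull]
  filter_upwards [measure_eq_zero_iff_ae_notMem.1 this] with ω hω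
  simpa using hω

/-- Positivity: if `g ≥ 0` a.e., `g > 0` a.e. on `V`, `V` has positive measure, then
`∫_V g > 0`. -/
lemma setIntegral_pos' (hP : @IsFiniteMeasure Ω F2 P) {g : Ω → ℝ} {V : Set Ω}
    (hV : MeasurableSet[F2] V) (hgi : Integrable g P)
    (hg0 : ∀ᵐ ω ∂P, 0 ≤ g ω) (hgV : ∀ᵐ ω ∂P, ω ∈ V → 0 < g ω)
    (hVpos : 0 < P V) : 0 < ∫ ω in V, g ω ∂P := by
  haveI := hP
  have h1 : 0 ≤ᵐ[P.restrict V] g := ae_restrict_of_ae hg0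
  rw [setIntegral_pos_iff_support_of_nonneg_ae h1 hgi.integrableOn]
  have hnull : P (V \ Function.support g) = 0 := by
    have : ∀ᵐ ω ∂P, ω ∉ V \ Function.support g := by
      filter_upwards [hgV] with ω hω
      intro hmem
      exact hmem.2 (ne_of_gt (hω hmem.1))
    exact measure_eq_zero_iff_ae_notMem.2 this
  have hle2 : P V ≤ P (V ∩ Function.support g) + P (V \ Function.support g) :=
    measure_le_inter_add_diff P V (Function.support g)
  rw [hnull, add_zero] at hle2
  rw [Set.inter_comm] at hle2
  exact lt_of_lt_of_le hVpos hle2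


lemma setIntegral_ind (hP : @IsFiniteMeasure Ω F2 P) {A F : Set Ω}
    (hA : MeasurableSet[F2] A) (hF : MeasurableSet[F2] F) :
    ∫ ω in F, A.indicator (fun _ => (1 : ℝ)) ω ∂P = (P (A ∩ F)).toReal := by
  haveI := hP
  rw [setIntegral_indicator hA, setIntegral_const, smul_eq_mul, mul_one,
    Set.inter_comm, measureReal_def]

/-- Uniqueness wrapper: an `F1`-strongly measurable integrable function with the right
set integrals is a version of `cexpInd`. -/
lemma ce_ae_eq (hle : F1 ≤ F2) (hP : @IsFiniteMeasure Ω F2 P) {A : Set Ω}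
    (hA : MeasurableSet[F2] A) {g : Ω → ℝ} (hgm : StronglyMeasurable[F1] g)
    (hgi : Integrable g P)
    (h : ∀ F : Set Ω, MeasurableSet[F1] F → ∫ ω in F, g ω ∂P = (P (A ∩ F)).toReal) :
    g =ᵐ[P] cexpInd F1 F2 P A := by
  haveI := hP
  haveI := sigmaFiniteTrim hle hP
  refine ae_eq_condExp_of_forall_setIntegral_eq hle (intInd hP hA)
    (fun s _ _ => hgi.integrableOn) (fun s hs _ => ?_)
    (hgm.aestronglyMeasurable ) 
  rw [h s hs, setIntegral_ind hP hA (hle _ hs)]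

/-- If `G` belongs to a σ-algebra independent of `F1`, then `E[1_G | F1]` is a.e. the
constant `P G`. -/
lemma ce_const_of_indep (hle : F1 ≤ F2) (hP : @IsProbabilityMeasure Ω F2 P)
    {B : MeasurableSpace Ω} (hB : B ≤ F2) (hind : ProbabilityTheory.Indep B F1 P)
    {G : Set Ω} (hG : MeasurableSet[B] G) :
    cexpInd F1 F2 P G =ᵐ[P] fun _ => (P G).toReal := by
  haveI := hP
  have hmul := (ProbabilityTheory.Indep_iff B F1 P).1 hind
  refine (ce_ae_eq hle (by infer_instance) (hB _ hG)
    (@stronglyMeasurable_const Ω ℝ F1 _ _)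
    (@integrable_const Ω ℝ F2 P _ _ ((P G).toReal))
    (fun F hF => ?_)).symm
  rw [integral_const, smul_eq_mul, measureReal_def, Measure.restrict_apply_univ,
    hmul G F hG hF, ENNReal.toReal_mul, mul_comm]

end Order

section Forward

variable {Ω : Type*} {F1 F2 : MeasurableSpace Ω} {P : @Measure Ω F2}

/-- From conditional atomlessness: a subset whose conditional expectation is at most half,
and still positive where the original is positive. -/
lemma halve_le (hle : F1 ≤ F2) (hP : @IsFiniteMeasure Ω F2 P)
    (hCA : CondAtomless F1 F2 P) {C : Set Ω} (hC : MeasurableSet[F2] C) :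
    ∃ C' : Set Ω, MeasurableSet[F2] C' ∧ C' ⊆ C ∧
      (∀ᵐ ω ∂P, cexpInd F1 F2 P C' ω ≤ cexpInd F1 F2 P C ω / 2) ∧
      (∀ᵐ ω ∂P, 0 < cexpInd F1 F2 P C ω → 0 < cexpInd F1 F2 P C' ω) := by
  haveI := hP
  obtain ⟨D, hD, hDC, hae⟩ := hCA C hC
  set T : Set Ω := {ω | cexpInd F1 F2 P D ω ≤ cexpInd F1 F2 P C ω / 2} with hT_def
  have hT : MeasurableSet[F1] T := by
    exact measurableSet_le ce_meas (ce_meas.div_const 2)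
  set C' : Set Ω := (D ∩ T) ∪ ((C \ D) ∩ Tᶜ) with hC'_def
  have hC'm : MeasurableSet[F2] C' :=
    ((hD.inter (hle _ hT)).union ((hC.diff hD).inter (hle _ hT.compl)))
  have hsub : C' ⊆ C := by
    intro ω hω
    rcases hω with h | h
    · exact hDC h.1
    · exact h.1.1
  have hdisj : Disjoint (D ∩ T) ((C \ D) ∩ Tᶜ) := by
    refine Set.disjoint_left.2 fun ω h1 h2 => h2.1.2 h1.1
  have h4 := ce_union (F1 := F1) hP (hD.inter (hle _ hT)) ((hC.diff hD).inter (hle _ hT.compl)) hdisj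
  have h1 := ce_inter_F1 hle hP hD hT
  have h2 := ce_inter_F1 hle hP (hC.diff hD) hT.compl
  have h3 := ce_diff (F1 := F1) hP hC hD hDC
  have h5 := ce_mono (F1 := F1) hP hD hC hDC
  have h0D := ce_nonneg (F1 := F1) (A := D) hP
  refine ⟨C', hC'm, hsub, ?_, ?_⟩
  · filter_upwards [h4, h1, h2, h3, h5, h0D] with ω e4 e1 e2 e3 e5 e0
    have e4' : cexpInd F1 F2 P C' ω =
        cexpInd F1 F2 P (D ∩ T) ω + cexpInd F1 F2 P ((C \ D) ∩ Tᶜ) ω := by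
      rw [hC'_def]; exact e4
    rw [e4', e1, e2]
    by_cases hω : ω ∈ T
    · rw [Set.indicator_of_mem hω, Set.indicator_of_notMem (by simpa using hω)]
      rw [add_zero]; exact hω
    · rw [Set.indicator_of_notMem hω, Set.indicator_of_mem (by simpa using hω)]
      have hnt : ¬ (cexpInd F1 F2 P D ω ≤ cexpInd F1 F2 P C ω / 2) := hω
      rw [e3]
      simp only [Pi.sub_apply]
      linarith [not_le.1 hnt]
  · filter_upwards [h4, h1, h2, h3, hae] with ω e4 e1 e2 e3 ehae hpos
    obtain ⟨hD1, hD2⟩ := ehae hpos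
    have e4' : cexpInd F1 F2 P C' ω =
        cexpInd F1 F2 P (D ∩ T) ω + cexpInd F1 F2 P ((C \ D) ∩ Tᶜ) ω := by
      rw [hC'_def]; exact e4
    rw [e4', e1, e2]
    by_cases hω : ω ∈ T
    · rw [Set.indicator_of_mem hω, Set.indicator_of_notMem (by simpa using hω)]
      simpa using hD1
    · rw [Set.indicator_of_notMem hω, Set.indicator_of_mem (by simpa using hω)]
      rw [e3]
      simp only [Pi.sub_apply]
      linarith

/-- Iterated halving: subsets with conditional expectation at most `(1/2)^n` times. -/
lemma small_piece (hle : F1 ≤ F2) (hP : @IsFiniteMeasure Ω F2 P)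
    (hCA : CondAtomless F1 F2 P) {C : Set Ω} (hC : MeasurableSet[F2] C) (n : ℕ) :
    ∃ C' : Set Ω, MeasurableSet[F2] C' ∧ C' ⊆ C ∧
      (∀ᵐ ω ∂P, cexpInd F1 F2 P C' ω ≤ (1 / 2) ^ n * cexpInd F1 F2 P C ω) ∧
      (∀ᵐ ω ∂P, 0 < cexpInd F1 F2 P C ω → 0 < cexpInd F1 F2 P C' ω) := by
  haveI := hP
  induction n with
  | zero =>
    exact ⟨C, hC, subset_rfl, by filter_upwards with ω; simp, by filter_upwards with ω h; exact h⟩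
  | succ n ih =>
    obtain ⟨Cn, hCn, hCnsub, hCnle, hCnpos⟩ := ih
    obtain ⟨C', hC', hC'sub, hC'le, hC'pos⟩ := halve_le hle hP hCA hCn
    have h0 := ce_nonneg (F1 := F1) (A := Cn) hP
    refine ⟨C', hC', hC'sub.trans hCnsub, ?_, ?_⟩
    · filter_upwards [hC'le, hCnle, h0] with ω e1 e2 e0
      calc cexpInd F1 F2 P C' ω ≤ cexpInd F1 F2 P Cn ω / 2 := e1
        _ ≤ ((1 / 2) ^ n * cexpInd F1 F2 P C ω) / 2 := by linarith
        _ = (1 / 2) ^ (n + 1) * cexpInd F1 F2 P C ω := by ring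
    · filter_upwards [hCnpos, hC'pos] with ω e1 e2 hpos
      exact e2 (e1 hpos)

end Forward

section Exhaustion

variable {Ω : Type*} {F1 F2 : MeasurableSpace Ω} {P : @Measure Ω F2}

lemma ce_empty : cexpInd F1 F2 P ∅ = 0 := by
  rw [cexpInd]
  have : (∅ : Set Ω).indicator (fun _ => (1 : ℝ)) = 0 := by
    ext ω; simp
  rw [this, condExp_zero]

/-- Exact conditional halving: under conditional atomlessness, every measurable set `A`
contains a measurable subset whose conditional expectation is exactly half that of `A`. -/
lemma exists_half (hle : F1 ≤ F2) (hP : @IsProbabilityMeasure Ω F2 P)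
    (hCA : CondAtomless F1 F2 P) {A : Set Ω} (hA : MeasurableSet[F2] A) :
    ∃ B : Set Ω, MeasurableSet[F2] B ∧ B ⊆ A ∧
      (∀ᵐ ω ∂P, cexpInd F1 F2 P B ω = cexpInd F1 F2 P A ω / 2) := by
  haveI := hP
  haveI hPf : @IsFiniteMeasure Ω F2 P := by infer_instance
  -- invariant
  set Inv : Set Ω → Prop := fun B => MeasurableSet[F2] B ∧ B ⊆ A ∧
    (∀ᵐ ω ∂P, cexpInd F1 F2 P B ω ≤ cexpInd F1 F2 P A ω / 2) with hInv_def
  -- admissibility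
  set adm : Set Ω → Set Ω → Prop := fun B C => MeasurableSet[F2] C ∧ C ⊆ A \ B ∧
    (∀ᵐ ω ∂P, cexpInd F1 F2 P C ω ≤ cexpInd F1 F2 P A ω / 2 - cexpInd F1 F2 P B ω)
    with hadm_def
  set mset : Set Ω → Set ℝ≥0∞ := fun B => {x | ∃ C, adm B C ∧ x = P C} with hmset_def
  have hadm_empty : ∀ B : Set Ω, Inv B → adm B ∅ := by
    intro B hB
    refine ⟨MeasurableSet.empty, Set.empty_subset _, ?_⟩
    filter_upwards [hB.2.2] with ω hω
    rw [ce_empty]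
    simp only [Pi.zero_apply]
    linarith
  -- the choice step
  have step : ∀ B : {B : Set Ω // Inv B}, ∃ C : Set Ω, adm B.1 C ∧
      sSup (mset B.1) ≤ 2 * P C := by
    rintro ⟨B, hB⟩
    by_cases hm : sSup (mset B) = 0
    · exact ⟨∅, hadm_empty B hB, by rw [hm]; exact zero_le⟩
    · have hbdd : sSup (mset B) ≤ 1 := by
        refine sSup_le ?_
        rintro x ⟨C, _, rfl⟩
        exact prob_le_one
      have hlt : sSup (mset B) / 2 < sSup (mset B) :=
        ENNReal.half_lt_self hm (ne_top_of_le_ne_top ENNReal.one_ne_top hbdd)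
      obtain ⟨x, ⟨C, hC, rfl⟩, hx⟩ := lt_sSup_iff.1 hlt
      refine ⟨C, hC, ?_⟩
      have h2 : sSup (mset B) / 2 * 2 ≤ P C * 2 :=
        mul_le_mul_left hx.le 2
      rwa [ENNReal.div_mul_cancel (by norm_num) (by norm_num), mul_comm] at h2
  choose f hf1 hf2 using step
  have hInv_empty : Inv ∅ := by
    refine ⟨MeasurableSet.empty, Set.empty_subset _, ?_⟩
    filter_upwards [ce_nonneg (F1 := F1) (A := A) hPf] with ω hω
    rw [ce_empty]
    simp only [Pi.zero_apply]
    linarith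
  have hnext : ∀ B : {B : Set Ω // Inv B}, Inv (B.1 ∪ f B) := by
    rintro B
    obtain ⟨hBm, hBA, hBae⟩ := B.2
    obtain ⟨hCm, hCsub, hCae⟩ := hf1 B
    refine ⟨hBm.union hCm, Set.union_subset hBA (hCsub.trans Set.diff_subset), ?_⟩
    have hdisj : Disjoint B.1 (f B) := by
      refine Set.disjoint_left.2 fun ω h1 h2 => (hCsub h2).2 h1
    filter_upwards [ce_union (F1 := F1) hPf hBm hCm hdisj, hBae, hCae] with ω e1 e2 e3
    rw [e1]
    simp only [Pi.add_apply]
    linarith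
  set g : {B : Set Ω // Inv B} → {B : Set Ω // Inv B} := fun B => ⟨B.1 ∪ f B, hnext B⟩
    with hg_def
  set S : ℕ → {B : Set Ω // Inv B} := fun n => g^[n] ⟨∅, hInv_empty⟩ with hS_def
  have hS_succ : ∀ n, S (n + 1) = g (S n) := by
    intro n
    rw [hS_def]
    simp only
    rw [Function.iterate_succ_apply']
  have hmono : ∀ n, (S n).1 ⊆ (S (n + 1)).1 := by
    intro n
    rw [hS_succ n]
    exact Set.subset_union_left
  have hmono' : Monotone (fun n => (S n).1) := monotone_nat_of_le_succ hmono
  set Binf : Set Ω := ⋃ n, (S n).1 with hBinf_def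
  have hBinfm : MeasurableSet[F2] Binf := MeasurableSet.iUnion (fun n => (S n).2.1)
  have hBinfA : Binf ⊆ A := Set.iUnion_subset (fun n => (S n).2.2.1)
  -- conditional expectation of Binf is at most half
  have hBinfle : ∀ᵐ ω ∂P, cexpInd F1 F2 P Binf ω ≤ cexpInd F1 F2 P A ω / 2 := by
    have key : ∀ F : Set Ω, MeasurableSet[F1] F →
        ∫ ω in F, (cexpInd F1 F2 P Binf ω - cexpInd F1 F2 P A ω / 2) ∂P ≤ 0 := by
      intro F hF
      have hint1 : Integrable (cexpInd F1 F2 P Binf) P := ce_int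
      have hint2 : Integrable (fun ω => cexpInd F1 F2 P A ω / 2) P := ce_int.div_const 2
      rw [integral_sub hint1.integrableOn hint2.integrableOn]
      rw [sub_nonpos, setIntegral_ce hle hPf hBinfm hF]
      -- limit of measures
      have hun : (⋃ n, (S n).1 ∩ F) = Binf ∩ F := by
        rw [hBinf_def, Set.iUnion_inter]
      have htend : Filter.Tendsto (fun n => P ((S n).1 ∩ F)) Filter.atTop
          (nhds (P (Binf ∩ F))) := by
        rw [← hun]
        exact tendsto_measure_iUnion_atTop
          (fun n m hnm => Set.inter_subset_inter_left F (hmono' hnm))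
      have htendR : Filter.Tendsto (fun n => (P ((S n).1 ∩ F)).toReal) Filter.atTop
          (nhds ((P (Binf ∩ F)).toReal)) :=
        (ENNReal.tendsto_toReal (measure_ne_top _ _)).comp htend
      refine le_of_tendsto htendR (Filter.Eventually.of_forall fun n => ?_)
      rw [← setIntegral_ce hle hPf (S n).2.1 hF]
      refine integral_mono_ae ce_int.integrableOn hint2.integrableOn ?_
      exact ae_restrict_of_ae (S n).2.2.2
    have := ae_nonpos_of_setIntegral hle hPf
      (g := fun ω => cexpInd F1 F2 P Binf ω - cexpInd F1 F2 P A ω / 2)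
      ((ce_meas.sub (ce_meas.div_const 2)).stronglyMeasurable) (ce_int.sub (ce_int.div_const 2)) key
    filter_upwards [this] with ω hω
    linarith
  refine ⟨Binf, hBinfm, hBinfA, ?_⟩
  -- it remains to rule out strict inequality on a positive measure set
  set W : Set Ω := {ω | cexpInd F1 F2 P Binf ω < cexpInd F1 F2 P A ω / 2} with hW_def
  have hWm : MeasurableSet[F1] W := measurableSet_lt ce_meas (ce_meas.div_const 2)
  by_cases hPW : P W = 0
  · filter_upwards [hBinfle, measure_eq_zero_iff_ae_notMem.1 hPW] with ω h1 h2
    have h2' : ¬ (cexpInd F1 F2 P Binf ω < cexpInd F1 F2 P A ω / 2) := h2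
    linarith [not_lt.1 h2']
  · exfalso
    -- the gap sets
    set Wk : ℕ → Set Ω := fun k =>
      {ω | ((1 : ℝ) / 2) ^ k < cexpInd F1 F2 P A ω / 2 - cexpInd F1 F2 P Binf ω} with hWk_def
    have hWkm : ∀ k, MeasurableSet[F1] (Wk k) := by
      intro k
      exact measurableSet_lt measurable_const ((ce_meas.div_const 2).sub ce_meas)
    have hWsub : W ⊆ ⋃ k, Wk k := by
      intro ω hω
      have hpos : (0:ℝ) < cexpInd F1 F2 P A ω / 2 - cexpInd F1 F2 P Binf ω := by
        have : cexpInd F1 F2 P Binf ω < cexpInd F1 F2 P A ω / 2 := hω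
        linarith
      obtain ⟨k, hk⟩ := exists_pow_lt_of_lt_one hpos (by norm_num : (1:ℝ)/2 < 1)
      exact Set.mem_iUnion.2 ⟨k, hk⟩
    obtain ⟨k, hk⟩ : ∃ k, P (Wk k) ≠ 0 := by
      by_contra hall
      push_neg at hall
      exact hPW (le_antisymm (le_trans (measure_mono hWsub)
        (le_of_eq (measure_iUnion_null hall))) (zero_le))
    -- a small piece inside A \ Binf
    obtain ⟨C', hC'm, hC'sub, hC'le, hC'pos⟩ :=
      small_piece hle hPf hCA (hA.diff hBinfm) k
    set C : Set Ω := C' ∩ Wk k with hC_def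
    have hCm : MeasurableSet[F2] C := hC'm.inter (hle _ (hWkm k))
    have hdiffAB := ce_diff (F1 := F1) hPf hA hBinfm hBinfA
    have hdiff_le_one := ce_le_one hle hP (hA.diff hBinfm)
    have hdiff_nonneg := ce_nonneg (F1 := F1) (A := A \ Binf) hPf
    have hceC := ce_inter_F1 hle hPf hC'm (hWkm k)
    have hA_nonneg := ce_nonneg (F1 := F1) (A := A) hPf
    -- admissibility of C with respect to Binf
    have hadmC : ∀ᵐ ω ∂P, cexpInd F1 F2 P C ω ≤
        cexpInd F1 F2 P A ω / 2 - cexpInd F1 F2 P Binf ω := by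
      filter_upwards [hceC, hC'le, hdiff_le_one, hdiff_nonneg, hBinfle] with ω e1 e2 e3 e4 e5
      rw [hC_def, e1]
      by_cases hω : ω ∈ Wk k
      · rw [Set.indicator_of_mem hω]
        have hgap : ((1:ℝ)/2) ^ k < cexpInd F1 F2 P A ω / 2 - cexpInd F1 F2 P Binf ω := hω
        have hh : ((1:ℝ)/2) ^ k * cexpInd F1 F2 P (A \ Binf) ω ≤ ((1:ℝ)/2) ^ k := by
          calc ((1:ℝ)/2) ^ k * cexpInd F1 F2 P (A \ Binf) ω
              ≤ ((1:ℝ)/2) ^ k * 1 := by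
                refine mul_le_mul_of_nonneg_left e3 (by positivity)
            _ = ((1:ℝ)/2) ^ k := mul_one _
        linarith
      · rw [Set.indicator_of_notMem hω]
        linarith
    -- C has positive measure
    have hPC : P C ≠ 0 := by
      have hWkpos : 0 < P (Wk k) := pos_iff_ne_zero.2 hk
      have hintpos : 0 < ∫ ω in Wk k, cexpInd F1 F2 P C' ω ∂P := by
        refine setIntegral_pos' hPf (hle _ (hWkm k)) ce_int
          (ce_nonneg hPf) ?_ hWkpos
        filter_upwards [hC'pos, hdiffAB, hA_nonneg] with ω e1 e2 e3
        intro hω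
        have hgap : ((1:ℝ)/2) ^ k < cexpInd F1 F2 P A ω / 2 - cexpInd F1 F2 P Binf ω := hω
        refine e1 ?_
        rw [e2]
        simp only [Pi.sub_apply]
        have : (0:ℝ) < ((1:ℝ)/2) ^ k := by positivity
        linarith
      rw [setIntegral_ce hle hPf hC'm (hWkm k)] at hintpos
      intro hzero
      rw [hC_def] at hzero
      rw [hzero] at hintpos
      simp at hintpos
    -- C is admissible at every stage
    have hadm_stage : ∀ n, P C ∈ mset (S n).1 := by
      intro n
      refine ⟨C, ⟨hCm, ?_, ?_⟩, rfl⟩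
      · refine Set.Subset.trans ?_ (Set.diff_subset_diff_right (Set.subset_iUnion (fun n => (S n).1) n))
        rw [hC_def]
        exact Set.Subset.trans Set.inter_subset_left hC'sub
      · have hmonoce := ce_mono (F1 := F1) hPf (S n).2.1 hBinfm
          (Set.subset_iUnion (fun n => (S n).1) n)
        filter_upwards [hadmC, hmonoce] with ω e1 e2
        linarith
    have hstage : ∀ n, P C ≤ 2 * P (f (S n)) := by
      intro n
      exact le_trans (le_sSup (hadm_stage n)) (hf2 (S n))
    -- the chosen pieces are pairwise disjoint
    have hfd : Pairwise (Function.onFun Disjoint fun n => f (S n)) := by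
      have hsub_next : ∀ n, f (S n) ⊆ (S (n+1)).1 := by
        intro n
        rw [hS_succ n]
        exact Set.subset_union_right
      have hsubBn : ∀ m n, m < n → f (S m) ⊆ (S n).1 := by
        intro m n hmn
        exact (hsub_next m).trans (hmono' hmn)
      have hdis : ∀ m n, m < n → Disjoint (f (S m)) (f (S n)) := by
        intro m n hmn
        refine Set.disjoint_left.2 fun ω h1 h2 => ?_
        exact ((hf1 (S n)).2.1 h2).2 (hsubBn m n hmn h1)
      intro m n hmn
      rcases lt_or_gt_of_ne hmn with h | h
      · exact hdis m n h
      · exact (hdis n m h).symm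
    have hsum : P (⋃ n, f (S n)) = ∑' n, P (f (S n)) :=
      measure_iUnion hfd (fun n => (hf1 (S n)).1)
    have htop : (⊤ : ℝ≥0∞) ≤ ∑' n : ℕ, P (f (S n)) := by
      have hPCd : P C / 2 ≠ 0 := by
        simp only [ne_eq, ENNReal.div_eq_zero_iff]
        push_neg
        exact ⟨hPC, by norm_num⟩
      calc (⊤ : ℝ≥0∞) = ∑' _ : ℕ, P C / 2 := (ENNReal.tsum_const_eq_top_of_ne_zero hPCd).symm
        _ ≤ ∑' n : ℕ, P (f (S n)) := by
            refine ENNReal.tsum_le_tsum fun n => ?_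
            have := hstage n
            rw [ENNReal.div_le_iff_le_mul (Or.inl (by norm_num)) (Or.inl (by norm_num))]
            rwa [mul_comm]
    rw [← hsum] at htop
    exact absurd (le_trans htop (prob_le_one)) (by simp)

end Exhaustion

section Dyadic

variable {Ω : Type*} {F1 F2 : MeasurableSpace Ω} {P : @Measure Ω F2}

lemma ce_univ_eq (hle : F1 ≤ F2) (hP : @IsFiniteMeasure Ω F2 P) :
    cexpInd F1 F2 P Set.univ = fun _ => (1 : ℝ) := by
  haveI := hP
  rw [cexpInd]
  have : (Set.univ : Set Ω).indicator (fun _ => (1 : ℝ)) = fun _ => (1 : ℝ) := by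
    ext ω; simp
  rw [this, condExp_const hle]

/-- A helper: if `cexpInd` of `A` is a.e. a constant `c`, then `P (A ∩ F) = c * P F`
for every `F1`-measurable `F`. -/
lemma measure_inter_of_ce_const (hle : F1 ≤ F2) (hP : @IsProbabilityMeasure Ω F2 P)
    {A : Set Ω} (hA : MeasurableSet[F2] A) {c : ℝ}
    (hc : cexpInd F1 F2 P A =ᵐ[P] fun _ => c) {F : Set Ω} (hF : MeasurableSet[F1] F) :
    (P (A ∩ F)).toReal = c * (P F).toReal := by
  haveI := hP
  haveI : @IsFiniteMeasure Ω F2 P := by infer_instance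
  rw [← setIntegral_ce hle this hA hF,
    setIntegral_congr_ae (g := fun _ => c) (hle _ hF)
      (by filter_upwards [hc] with ω hω; exact fun _ => hω),
    integral_const, smul_eq_mul, measureReal_def, Measure.restrict_apply_univ, mul_comm]

theorem forward_direction {Ω : Type*} {F1 F2 : MeasurableSpace Ω} (hle : F1 ≤ F2)
    {P : @Measure Ω F2} (hP : @IsProbabilityMeasure Ω F2 P) (hCA : CondAtomless F1 F2 P) :
    ∃ B : MeasurableSpace Ω, B ≤ F2 ∧ ProbabilityTheory.Indep B F1 P ∧
      ∀ G : Set Ω, MeasurableSet[B] G → 0 < P G →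
        ∃ H : Set Ω, MeasurableSet[B] H ∧ H ⊆ G ∧ 0 < P H ∧ P H < P G := by
  haveI := hP
  haveI hPf : @IsFiniteMeasure Ω F2 P := by infer_instance
  -- choice of halves
  have H : ∀ A : {A : Set Ω // MeasurableSet[F2] A}, ∃ B : Set Ω,
      MeasurableSet[F2] B ∧ B ⊆ A.1 ∧
      (∀ᵐ ω ∂P, cexpInd F1 F2 P B ω = cexpInd F1 F2 P A.1 ω / 2) :=
    fun A => exists_half hle hP hCA A.2
  choose hf hfm hfsub hfce using H
  -- dyadic cells
  let D : List Bool → {A : Set Ω // MeasurableSet[F2] A} := fun s =>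
    List.rec ⟨Set.univ, MeasurableSet.univ⟩
      (fun b _ ih => if b then ⟨ih.1 \ hf ih, ih.2.diff (hfm ih)⟩ else ⟨hf ih, hfm ih⟩) s
  have hD_nil : D [] = ⟨Set.univ, MeasurableSet.univ⟩ := rfl
  have hD_cons : ∀ (b : Bool) (s : List Bool),
      D (b :: s) = if b then ⟨(D s).1 \ hf (D s), ((D s).2).diff (hfm (D s))⟩
        else ⟨hf (D s), hfm (D s)⟩ := fun b s => rfl
  have hD_sub : ∀ (b : Bool) (s : List Bool), (D (b :: s)).1 ⊆ (D s).1 := by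
    intro b s
    rw [hD_cons]
    cases b
    · simpa using hfsub (D s)
    · simpa using Set.diff_subset
  -- conditional expectations of cells
  have hD_ce : ∀ s : List Bool,
      cexpInd F1 F2 P (D s).1 =ᵐ[P] fun _ => ((1 : ℝ) / 2) ^ s.length := by
    intro s
    induction s with
    | nil =>
      rw [hD_nil]
      simp only [List.length_nil, pow_zero]
      rw [ce_univ_eq hle hPf]
    | cons b s ih =>
      have hhalf : ∀ᵐ ω ∂P, cexpInd F1 F2 P (hf (D s)) ω = ((1 : ℝ) / 2) ^ (s.length + 1) := by
        filter_upwards [hfce (D s), ih] with ω e1 e2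
        rw [e1, e2]
        ring
      have hd2 : cexpInd F1 F2 P ((D s).1 \ hf (D s)) =ᵐ[P]
          fun _ => ((1 : ℝ) / 2) ^ (s.length + 1) := by
        have hdiff := ce_diff (F1 := F1) hPf (D s).2 (hfm (D s)) (hfsub (D s))
        filter_upwards [hdiff, hhalf, ih] with ω e1 e2 e3
        rw [e1]
        simp only [Pi.sub_apply]
        rw [e2, e3]
        ring
      cases b
      · exact hhalf
      · exact hd2
  -- disjointness of equal-length distinct cells
  have hD_disj_eqlen : ∀ s t : List Bool, s.length = t.length → s ≠ t →
      (D s).1 ∩ (D t).1 = ∅ := by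
    intro s
    induction s with
    | nil =>
      intro t hlen hne
      exact absurd (List.length_eq_zero_iff.1 hlen.symm).symm hne
    | cons b s ih =>
      intro t hlen hne
      cases t with
      | nil => simp at hlen
      | cons c t =>
        simp only [List.length_cons, Nat.add_right_cancel_iff] at hlen
        by_cases hst : s = t
        · subst hst
          have hbc : b ≠ c := fun h => hne (by rw [h])
          have key : ∀ u : List Bool, (D (false :: u)).1 ∩ (D (true :: u)).1 = ∅ := by
            intro u
            refine Set.eq_empty_of_subset_empty fun ω hω => ?_
            have h1 : ω ∈ hf (D u) := hω.1
            have h2 : ω ∈ (D u).1 \ hf (D u) := hω.2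
            exact absurd h1 h2.2
          cases b <;> cases c
          · exact absurd rfl hbc
          · exact key s
          · rw [Set.inter_comm]; exact key s
          · exact absurd rfl hbc
        · have h0 := ih t hlen hst
          refine Set.eq_empty_of_subset_empty ?_
          refine Set.Subset.trans (Set.inter_subset_inter (hD_sub b s) (hD_sub c t)) ?_
          rw [h0]
  -- comparable or disjoint
  have hD_tri : ∀ t s : List Bool, s.length ≤ t.length →
      (D t).1 ⊆ (D s).1 ∨ (D s).1 ∩ (D t).1 = ∅ := by
    intro t
    induction t with
    | nil =>
      intro s hlen
      have : s = [] := List.length_eq_zero_iff.1 (Nat.le_zero.1 hlen)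
      subst this
      exact Or.inl subset_rfl
    | cons c t ih =>
      intro s hlen
      rcases Nat.lt_or_ge s.length (c :: t).length with hlt | hge
      · have hle' : s.length ≤ t.length := by
          simpa [List.length_cons, Nat.lt_succ_iff] using hlt
        rcases ih s hle' with h | h
        · exact Or.inl ((hD_sub c t).trans h)
        · refine Or.inr (Set.eq_empty_of_subset_empty ?_)
          refine Set.Subset.trans (Set.inter_subset_inter subset_rfl (hD_sub c t)) ?_
          rw [h]
      · have heq : s.length = (c :: t).length := le_antisymm hlen hge
        by_cases hst : s = c :: t
        · subst hst; exact Or.inl subset_rfl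
        · exact Or.inr (hD_disj_eqlen s (c :: t) heq hst)
  -- covering at each level
  have hD_cover : ∀ (n : ℕ) (ω : Ω), ∃ s : List Bool, s.length = n ∧ ω ∈ (D s).1 := by
    intro n
    induction n with
    | zero => exact fun ω => ⟨[], rfl, Set.mem_univ ω⟩
    | succ n ih =>
      intro ω
      obtain ⟨s, hslen, hωs⟩ := ih ω
      by_cases hω : ω ∈ hf (D s)
      · exact ⟨false :: s, by simp [hslen], by simpa [hD_cons] using hω⟩
      · exact ⟨true :: s, by simp [hslen], by simpa [hD_cons] using ⟨hωs, hω⟩⟩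
  -- the sub-σ-algebra
  set p1 : Set (Set Ω) := Set.range (fun s : List Bool => (D s).1) with hp1_def
  set B : MeasurableSpace Ω := MeasurableSpace.generateFrom p1 with hB_def
  have hBle : B ≤ F2 := by
    rw [hB_def]
    refine MeasurableSpace.generateFrom_le ?_
    rintro _ ⟨s, rfl⟩
    exact (D s).2
  have hDmeasB : ∀ s : List Bool, MeasurableSet[B] (D s).1 := by
    intro s
    exact MeasurableSpace.measurableSet_generateFrom ⟨s, rfl⟩
  have hp1pi : IsPiSystem p1 := by
    rintro _ ⟨s, rfl⟩ _ ⟨t, rfl⟩ hne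
    simp only at hne ⊢
    rcases le_total s.length t.length with hl | hl
    · rcases hD_tri t s hl with h | h
      · rw [Set.inter_eq_self_of_subset_right h]
        exact ⟨t, rfl⟩
      · exact absurd h (Set.nonempty_iff_ne_empty.1 hne)
    · rcases hD_tri s t hl with h | h
      · rw [Set.inter_eq_self_of_subset_left h]
        exact ⟨s, rfl⟩
      · rw [Set.inter_comm] at hne
        exact absurd h (Set.nonempty_iff_ne_empty.1 hne)
  -- measure of cells
  have hD_meas_cell : ∀ s : List Bool, (P (D s).1).toReal = ((1 : ℝ) / 2) ^ s.length := by
    intro s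
    have := measure_inter_of_ce_const hle hP (D s).2 (hD_ce s) (F := Set.univ)
      MeasurableSet.univ
    rw [Set.inter_univ] at this
    rw [this]
    simp
  -- independence
  have hIndep : ProbabilityTheory.Indep B F1 P := by
    refine ProbabilityTheory.IndepSets.indep hBle hle hp1pi
      (@MeasurableSpace.isPiSystem_measurableSet Ω F1) hB_def
      (@MeasurableSpace.generateFrom_measurableSet Ω F1).symm ?_
    rw [ProbabilityTheory.IndepSets_iff]
    rintro _ F ⟨s, rfl⟩ hF
    show P ((D s).1 ∩ F) = P (D s).1 * P F
    have h1 := measure_inter_of_ce_const hle hP (D s).2 (hD_ce s) hF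
    have h2 : (P ((D s).1 ∩ F)).toReal = (P (D s).1).toReal * (P F).toReal := by
      rw [h1, hD_meas_cell s]
    have hfin1 : P ((D s).1 ∩ F) ≠ ⊤ := measure_ne_top _ _
    have hfin2 : P (D s).1 * P F ≠ ⊤ :=
      ENNReal.mul_ne_top (measure_ne_top _ _) (measure_ne_top _ _)
    rw [← ENNReal.toReal_eq_toReal_iff' hfin1 hfin2, h2, ENNReal.toReal_mul]
  refine ⟨B, hBle, hIndep, ?_⟩
  -- atomlessness
  intro G hG hGpos
  by_contra hno
  push_neg at hno
  have hGfin : (P G).toReal > 0 := ENNReal.toReal_pos (ne_of_gt hGpos) (measure_ne_top _ _)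
  obtain ⟨n, hn⟩ := exists_pow_lt_of_lt_one hGfin (by norm_num : (1:ℝ)/2 < 1)
  -- each level-n piece of G is null
  have hcell_null : ∀ s : List Bool, s.length = n → P (G ∩ (D s).1) = 0 := by
    intro s hslen
    by_contra hne
    have hpos : 0 < P (G ∩ (D s).1) := pos_iff_ne_zero.2 hne
    have hlt : P (G ∩ (D s).1) < P G := by
      have hle1 : P (G ∩ (D s).1) ≤ P (D s).1 := measure_mono Set.inter_subset_right
      have : (P (G ∩ (D s).1)).toReal < (P G).toReal := by
        calc (P (G ∩ (D s).1)).toReal ≤ (P (D s).1).toReal := by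
              exact ENNReal.toReal_mono (measure_ne_top _ _) hle1
          _ = ((1:ℝ)/2) ^ s.length := hD_meas_cell s
          _ < (P G).toReal := by rw [hslen]; exact hn
        
      exact (ENNReal.toReal_lt_toReal (measure_ne_top _ _) (measure_ne_top _ _)).1 this
    exact absurd hlt (not_lt.2 (hno (G ∩ (D s).1) (hG.inter (hDmeasB s))
      Set.inter_subset_left hpos))
  have hGsub : G ⊆ ⋃ s ∈ {s : List Bool | s.length = n}, G ∩ (D s).1 := by
    intro ω hω
    obtain ⟨s, hslen, hωs⟩ := hD_cover n ω
    exact Set.mem_biUnion hslen ⟨hω, hωs⟩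
  have hcnt : ({s : List Bool | s.length = n}).Countable := Set.to_countable _
  have : P G = 0 := by
    refine measure_mono_null hGsub ?_
    exact (measure_biUnion_null_iff hcnt).2 (fun s hs => hcell_null s hs)
  exact absurd this (ne_of_gt hGpos)

end Dyadic

section Reverse

variable {Ω : Type*} {F2 : MeasurableSpace Ω} {P : @Measure Ω F2}

/-- Splitting property for a sub-σ-algebra. -/
def SplitProp (B : MeasurableSpace Ω) (F2 : MeasurableSpace Ω) (P : @Measure Ω F2) : Prop :=
  ∀ G : Set Ω, MeasurableSet[B] G → 0 < P G →
    ∃ H : Set Ω, MeasurableSet[B] H ∧ H ⊆ G ∧ 0 < P H ∧ P H < P G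

lemma split_half {B : MeasurableSpace Ω} (hB : B ≤ F2) (hP : @IsFiniteMeasure Ω F2 P)
    (hsplit : SplitProp B F2 P) {G : Set Ω} (hG : MeasurableSet[B] G) (hGpos : 0 < P G) :
    ∃ H : Set Ω, MeasurableSet[B] H ∧ H ⊆ G ∧ 0 < P H ∧ P H ≤ P G / 2 := by
  haveI := hP
  obtain ⟨H0, hH0m, hH0sub, hH0pos, hH0lt⟩ := hsplit G hG hGpos
  have hdiff : P (G \ H0) = P G - P H0 :=
    measure_diff hH0sub (hB _ hH0m).nullMeasurableSet (measure_ne_top _ _)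
  have hsum : P H0 + P (G \ H0) = P G := by
    rw [hdiff]
    rw [add_tsub_cancel_of_le (measure_mono hH0sub)]
  have hdiffpos : 0 < P (G \ H0) := by
    rw [hdiff]
    exact tsub_pos_of_lt hH0lt
  rcases le_total (P H0) (P (G \ H0)) with h | h
  · refine ⟨H0, hH0m, hH0sub, hH0pos, ?_⟩
    rw [ENNReal.le_div_iff_mul_le (Or.inl (by norm_num)) (Or.inl (by norm_num))]
    calc P H0 * 2 = P H0 + P H0 := by ring
      _ ≤ P H0 + P (G \ H0) := by exact add_le_add_right h _
      _ = P G := hsum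
  · refine ⟨G \ H0, hG.diff hH0m, Set.diff_subset, hdiffpos, ?_⟩
    rw [ENNReal.le_div_iff_mul_le (Or.inl (by norm_num)) (Or.inl (by norm_num))]
    calc P (G \ H0) * 2 = P (G \ H0) + P (G \ H0) := by ring
      _ ≤ P H0 + P (G \ H0) := by exact add_le_add_left h _
      _ = P G := hsum

lemma split_small {B : MeasurableSpace Ω} (hB : B ≤ F2) (hP : @IsProbabilityMeasure Ω F2 P)
    (hsplit : SplitProp B F2 P) {G : Set Ω} (hG : MeasurableSet[B] G) (hGpos : 0 < P G)
    {ε : ℝ≥0∞} (hε : ε ≠ 0) :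
    ∃ H : Set Ω, MeasurableSet[B] H ∧ H ⊆ G ∧ 0 < P H ∧ P H ≤ ε := by
  haveI := hP
  haveI hPf : @IsFiniteMeasure Ω F2 P := by infer_instance
  obtain ⟨n, hn⟩ := ENNReal.exists_inv_two_pow_lt hε
  have key : ∀ m : ℕ, ∃ H : Set Ω, MeasurableSet[B] H ∧ H ⊆ G ∧ 0 < P H ∧
      P H ≤ P G * 2⁻¹ ^ m := by
    intro m
    induction m with
    | zero => exact ⟨G, hG, subset_rfl, hGpos, by simp⟩
    | succ m ih =>
      obtain ⟨H, hHm, hHsub, hHpos, hHle⟩ := ih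
      obtain ⟨H', hH'm, hH'sub, hH'pos, hH'le⟩ := split_half hB hPf hsplit hHm hHpos
      refine ⟨H', hH'm, hH'sub.trans hHsub, hH'pos, ?_⟩
      have h1 : P H / 2 = P H * 2⁻¹ := by
        rw [ENNReal.div_eq_inv_mul, mul_comm]
      calc P H' ≤ P H / 2 := hH'le
        _ = P H * 2⁻¹ := h1
        _ ≤ (P G * 2⁻¹ ^ m) * 2⁻¹ := mul_le_mul_left hHle 2⁻¹
        _ = P G * 2⁻¹ ^ (m + 1) := by rw [mul_assoc, ← pow_succ]
  obtain ⟨H, hHm, hHsub, hHpos, hHle⟩ := key n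
  refine ⟨H, hHm, hHsub, hHpos, ?_⟩
  calc P H ≤ P G * 2⁻¹ ^ n := hHle
    _ ≤ 1 * 2⁻¹ ^ n := mul_le_mul_left prob_le_one _
    _ = 2⁻¹ ^ n := one_mul _
    _ ≤ ε := hn.le

/-- Greedy construction of a countable a.e.-partition into `B`-measurable pieces of
measure at most `ε`. -/
lemma exists_partition {B : MeasurableSpace Ω} (hB : B ≤ F2) (hP : @IsProbabilityMeasure Ω F2 P)
    (hsplit : SplitProp B F2 P) {ε : ℝ≥0∞} (hε : ε ≠ 0) :
    ∃ C : ℕ → Set Ω, (∀ k, MeasurableSet[B] (C k)) ∧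
      Pairwise (Function.onFun Disjoint C) ∧ (∀ k, P (C k) ≤ ε) ∧
      P (Set.univ \ ⋃ k, C k) = 0 := by
  haveI := hP
  haveI hPf : @IsFiniteMeasure Ω F2 P := by infer_instance
  set mset : Set Ω → Set ℝ≥0∞ := fun R =>
    {x | ∃ H, (MeasurableSet[B] H ∧ H ⊆ R ∧ P H ≤ ε) ∧ x = P H} with hmset_def
  have step : ∀ R : {R : Set Ω // MeasurableSet[B] R}, ∃ H : Set Ω,
      (MeasurableSet[B] H ∧ H ⊆ R.1 ∧ P H ≤ ε) ∧ sSup (mset R.1) ≤ 2 * P H := by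
    rintro ⟨R, hR⟩
    have hempty : (∅ : Set Ω) ∈ {H | MeasurableSet[B] H ∧ H ⊆ R ∧ P H ≤ ε} :=
      ⟨MeasurableSet.empty, Set.empty_subset _, by simp⟩
    by_cases hm : sSup (mset R) = 0
    · exact ⟨∅, hempty, by rw [hm]; exact zero_le⟩
    · have hbdd : sSup (mset R) ≤ 1 := by
        refine sSup_le ?_
        rintro x ⟨H, _, rfl⟩
        exact prob_le_one
      have hlt : sSup (mset R) / 2 < sSup (mset R) :=
        ENNReal.half_lt_self hm (ne_top_of_le_ne_top ENNReal.one_ne_top hbdd)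
      obtain ⟨x, ⟨H, hH, rfl⟩, hx⟩ := lt_sSup_iff.1 hlt
      refine ⟨H, hH, ?_⟩
      have h2 : sSup (mset R) / 2 * 2 ≤ P H * 2 := mul_le_mul_left hx.le 2
      rwa [ENNReal.div_mul_cancel (by norm_num) (by norm_num), mul_comm] at h2
  choose f hf1 hf2 using step
  set g : {R : Set Ω // MeasurableSet[B] R} → {R : Set Ω // MeasurableSet[B] R} :=
    fun R => ⟨R.1 \ f R, R.2.diff (hf1 R).1⟩ with hg_def
  set S : ℕ → {R : Set Ω // MeasurableSet[B] R} :=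
    fun n => g^[n] ⟨Set.univ, MeasurableSet.univ⟩ with hS_def
  have hS_succ : ∀ n, S (n + 1) = g (S n) := by
    intro n
    rw [hS_def]
    simp only
    rw [Function.iterate_succ_apply']
  set C : ℕ → Set Ω := fun k => f (S k) with hC_def
  have hCm : ∀ k, MeasurableSet[B] (C k) := fun k => (hf1 (S k)).1
  have hCsub : ∀ k, C k ⊆ (S k).1 := fun k => (hf1 (S k)).2.1
  have hCε : ∀ k, P (C k) ≤ ε := fun k => (hf1 (S k)).2.2
  have hanti : ∀ m n, m ≤ n → (S n).1 ⊆ (S m).1 := by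
    intro m n hmn
    induction n with
    | zero =>
      have : m = 0 := Nat.le_zero.1 hmn
      subst this
      exact subset_rfl
    | succ n ih =>
      rcases Nat.lt_or_ge m (n+1) with h | h
      · have h1 : (S (n+1)).1 ⊆ (S n).1 := by
          rw [hS_succ n]
          exact Set.diff_subset
        exact h1.trans (ih (Nat.lt_succ_iff.1 h))
      · have : m = n + 1 := le_antisymm hmn h
        subst this
        exact subset_rfl
  have hCdisj : Pairwise (Function.onFun Disjoint C) := by
    have hdis : ∀ m n, m < n → Disjoint (C m) (C n) := by
      intro m n hmn
      have h1 : (S n).1 ⊆ (S (m+1)).1 := hanti (m+1) n hmn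
      have h2 : (S (m+1)).1 = (S m).1 \ C m := by rw [hS_succ m]
      refine Set.disjoint_left.2 fun ω hm' hn' => ?_
      have := h1 (hCsub n hn')
      rw [h2] at this
      exact this.2 hm'
    intro m n hmn
    rcases lt_or_gt_of_ne hmn with h | h
    · exact hdis m n h
    · exact (hdis n m h).symm
  refine ⟨C, hCm, hCdisj, hCε, ?_⟩
  have hsubRn : ∀ n, Set.univ \ ⋃ k, C k ⊆ (S n).1 := by
    intro n
    induction n with
    | zero => exact fun ω _ => Set.mem_univ ω
    | succ n ih =>
      intro ω hω
      rw [hS_succ n]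
      refine ⟨ih hω, fun hc => ?_⟩
      exact hω.2 (Set.mem_iUnion.2 ⟨n, hc⟩)
  by_contra hpos
  have hRinf : 0 < P (Set.univ \ ⋃ k, C k) := pos_iff_ne_zero.2 hpos
  have hRm : MeasurableSet[B] (Set.univ \ ⋃ k, C k) :=
    MeasurableSet.univ.diff (MeasurableSet.iUnion hCm)
  obtain ⟨H, hHm, hHsub, hHpos, hHε⟩ := split_small hB hP hsplit hRm hRinf hε
  have hstage : ∀ n, P H ≤ 2 * P (C n) := by
    intro n
    refine le_trans (le_sSup ?_) (hf2 (S n))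
    exact ⟨H, ⟨hHm, hHsub.trans (hsubRn n), hHε⟩, rfl⟩
  have hsum : P (⋃ n, C n) = ∑' n, P (C n) :=
    measure_iUnion hCdisj (fun n => hB _ (hCm n))
  have htop : (⊤ : ℝ≥0∞) ≤ ∑' n : ℕ, P (C n) := by
    have hPHd : P H / 2 ≠ 0 := by
      simp only [ne_eq, ENNReal.div_eq_zero_iff]
      push_neg
      exact ⟨ne_of_gt hHpos, by norm_num⟩
    calc (⊤ : ℝ≥0∞) = ∑' _ : ℕ, P H / 2 := (ENNReal.tsum_const_eq_top_of_ne_zero hPHd).symm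
      _ ≤ ∑' n : ℕ, P (C n) := by
          refine ENNReal.tsum_le_tsum fun n => ?_
          rw [ENNReal.div_le_iff_le_mul (Or.inl (by norm_num)) (Or.inl (by norm_num))]
          rw [mul_comm]
          exact hstage n
  rw [← hsum] at htop
  exact absurd (le_trans htop (prob_le_one)) (by simp)

end Reverse

section Helper

variable {Ω : Type*} {F1 F2 : MeasurableSpace Ω} {P : @Measure Ω F2}

lemma measure_inter_zero_of_ce_zero (hle : F1 ≤ F2) (hPf : @IsFiniteMeasure Ω F2 P)
    {A F : Set Ω} (hA : MeasurableSet[F2] A) (hF : MeasurableSet[F1] F)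
    (h : ∀ᵐ ω ∂P, ω ∈ F → cexpInd F1 F2 P A ω = 0) : P (A ∩ F) = 0 := by
  haveI := hPf
  have hint : ∫ ω in F, cexpInd F1 F2 P A ω ∂P = 0 := by
    rw [setIntegral_congr_ae (g := fun _ => (0 : ℝ)) (hle _ hF)
      (by filter_upwards [h] with ω hω; exact hω)]
    simp
  rw [setIntegral_ce hle hPf hA hF] at hint
  rcases (ENNReal.toReal_eq_zero_iff _).1 hint with h' | h'
  · exact h'
  · exact absurd h' (measure_ne_top _ _)

end Helper

section ReverseMain

variable {Ω : Type*} {F1 F2 : MeasurableSpace Ω} {P : @Measure Ω F2}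

theorem reverse_direction (hle : F1 ≤ F2) (hP : @IsProbabilityMeasure Ω F2 P)
    {B : MeasurableSpace Ω} (hB : B ≤ F2) (hind : ProbabilityTheory.Indep B F1 P)
    (hsplit : SplitProp B F2 P) : CondAtomless F1 F2 P := by
  haveI := hP
  haveI hPf : @IsFiniteMeasure Ω F2 P := by infer_instance
  intro A hA
  have hmul := (ProbabilityTheory.Indep_iff B F1 P).1 hind
  -- partitions with small cells
  have hpart : ∀ N : ℕ, ∃ C : ℕ → Set Ω, (∀ k, MeasurableSet[B] (C k)) ∧
      Pairwise (Function.onFun Disjoint C) ∧ (∀ k, P (C k) ≤ 2⁻¹ ^ N) ∧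
      P (Set.univ \ ⋃ k, C k) = 0 := by
    intro N
    refine exists_partition hB hP hsplit ?_
    exact pow_ne_zero _ (by simp)
  choose Cp hCpm hCpdisj hCpε hCpnull using hpart
  -- good sets
  set S : ℕ × ℕ → Set Ω := fun p =>
    {ω | 0 < cexpInd F1 F2 P (A ∩ Cp p.1 p.2) ω} ∩
    {ω | cexpInd F1 F2 P (A ∩ Cp p.1 p.2) ω < cexpInd F1 F2 P A ω} with hS_def
  have hSm : ∀ p, MeasurableSet[F1] (S p) := by
    intro p
    exact (measurableSet_lt measurable_const ce_meas).inter (measurableSet_lt ce_meas ce_meas)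
  -- reindexing
  set q : ℕ ≃ ℕ × ℕ := (Denumerable.eqv (ℕ × ℕ)).symm with hq_def
  set E : ℕ → Set Ω := disjointed (fun n => S (q n)) with hE_def
  have hEm : ∀ n, MeasurableSet[F1] (E n) :=
    MeasurableSet.disjointed (fun n => hSm (q n))
  have hEdisj : Pairwise (Function.onFun Disjoint E) := disjoint_disjointed _
  have hEsub : ∀ n, E n ⊆ S (q n) := disjointed_subset _
  have hEuniv : ⋃ n, E n = ⋃ p, S p := by
    rw [hE_def, iUnion_disjointed]
    exact q.surjective.iUnion_comp S
  -- the candidate set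
  set B' : Set Ω := ⋃ n, (A ∩ Cp (q n).1 (q n).2) ∩ E n with hB'_def
  have hB'm : MeasurableSet[F2] B' := by
    refine MeasurableSet.iUnion fun n => ?_
    exact (hA.inter (hB _ (hCpm (q n).1 (q n).2))).inter (hle _ (hEm n))
  have hB'A : B' ⊆ A := by
    refine Set.iUnion_subset fun n => ?_
    exact fun ω hω => hω.1.1
  -- key : on E n, cexpInd of B' agrees with that of A ∩ C (q n)
  have hkey : ∀ n : ℕ, ∀ᵐ ω ∂P, ω ∈ E n →
      cexpInd F1 F2 P B' ω = cexpInd F1 F2 P (A ∩ Cp (q n).1 (q n).2) ω := by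
    intro n
    set Dn : Set Ω := A ∩ Cp (q n).1 (q n).2 with hDn_def
    have hDnm : MeasurableSet[F2] Dn := hA.inter (hB _ (hCpm (q n).1 (q n).2))
    have h1 : B' ∩ E n = Dn ∩ E n := by
      apply Set.Subset.antisymm
      · rintro ω ⟨hωB, hωE⟩
        obtain ⟨m, hm⟩ := Set.mem_iUnion.1 hωB
        by_cases hmn : m = n
        · subst hmn
          exact ⟨hm.1, hωE⟩
        · exact absurd hωE (Set.disjoint_left.1 (hEdisj hmn) hm.2)
      · intro ω hω
        exact ⟨Set.mem_iUnion.2 ⟨n, ⟨hω.1, hω.2⟩⟩, hω.2⟩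
    have h2 : B' \ E n = (B' \ E n) ∩ (E n)ᶜ := by
      rw [Set.inter_eq_self_of_subset_left]
      exact fun ω hω => hω.2
    have hd : Disjoint (B' ∩ E n) (B' \ E n) :=
      Set.disjoint_left.2 fun ω hω1 hω2 => hω2.2 hω1.2
    have hmi : MeasurableSet[F2] (B' ∩ E n) := hB'm.inter (hle _ (hEm n))
    have hmd : MeasurableSet[F2] (B' \ E n) := hB'm.diff (hle _ (hEm n))
    have e1 : cexpInd F1 F2 P B' =ᵐ[P]
        cexpInd F1 F2 P (B' ∩ E n) + cexpInd F1 F2 P (B' \ E n) := by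
      have := ce_union (F1 := F1) hPf hmi hmd hd
      rwa [Set.inter_union_diff] at this
    have e2 : cexpInd F1 F2 P (B' ∩ E n) =ᵐ[P] (E n).indicator (cexpInd F1 F2 P Dn) := by
      rw [h1]
      exact ce_inter_F1 hle hPf hDnm (hEm n)
    have e3 : cexpInd F1 F2 P (B' \ E n) =ᵐ[P]
        (E n)ᶜ.indicator (cexpInd F1 F2 P (B' \ E n)) := by
      nth_rewrite 1 [h2]
      exact ce_inter_F1 hle hPf hmd (hEm n).compl
    filter_upwards [e1, e2, e3] with ω f1 f2 f3 hωE
    rw [f1]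
    simp only [Pi.add_apply]
    rw [f2, f3, Set.indicator_of_mem hωE, Set.indicator_of_notMem (by simpa using hωE)]
    ring
  have hkeyall : ∀ᵐ ω ∂P, ∀ n : ℕ, ω ∈ E n →
      cexpInd F1 F2 P B' ω = cexpInd F1 F2 P (A ∩ Cp (q n).1 (q n).2) ω :=
    (ae_all_iff).2 hkey
  -- the exceptional set
  set W : Set Ω := {ω | 0 < cexpInd F1 F2 P A ω} \ ⋃ p : ℕ × ℕ, S p with hW_def
  have hWm : MeasurableSet[F1] W :=
    (measurableSet_lt measurable_const ce_meas).diff (MeasurableSet.iUnion fun p => hSm p)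
  -- bound on P (A ∩ W)
  have hbound : ∀ N : ℕ, P (A ∩ W) ≤ 2⁻¹ ^ N := by
    intro N
    classical
    set gN : ℕ → Ω → ℝ := fun j => cexpInd F1 F2 P (A ∩ Cp N j) with hgN_def
    set V : ℕ → Set Ω := fun j =>
      (W ∩ {ω | cexpInd F1 F2 P A ω ≤ gN j ω}) ∩
        (⋂ i, ⋂ (_ : i < j), {ω | gN i ω < cexpInd F1 F2 P A ω}) with hV_def
    set V0 : Set Ω := W ∩ ⋂ j, {ω | gN j ω < cexpInd F1 F2 P A ω} with hV0_def
    have hVm : ∀ j, MeasurableSet[F1] (V j) := by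
      intro j
      refine (hWm.inter (measurableSet_le ce_meas ce_meas)).inter ?_
      exact MeasurableSet.iInter fun i => MeasurableSet.iInter fun _ =>
        measurableSet_lt ce_meas ce_meas
    have hV0m : MeasurableSet[F1] V0 :=
      hWm.inter (MeasurableSet.iInter fun j => measurableSet_lt ce_meas ce_meas)
    -- covering
    have hcover : A ∩ W ⊆ (A ∩ V0) ∪ ⋃ j, A ∩ V j := by
      rintro ω ⟨hωA, hωW⟩
      by_cases hex : ∃ j, cexpInd F1 F2 P A ω ≤ gN j ω
      · right
        refine Set.mem_iUnion.2 ⟨Nat.find hex, hωA, ⟨⟨hωW, Nat.find_spec hex⟩, ?_⟩⟩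
        refine Set.mem_iInter.2 fun i => Set.mem_iInter.2 fun hi => ?_
        exact not_le.1 (Nat.find_min hex hi)
      · left
        push_neg at hex
        exact ⟨hωA, hωW, Set.mem_iInter.2 fun j => hex j⟩
    -- each V0-piece is null
    have hpiece : ∀ j, P ((A ∩ Cp N j) ∩ V0) = 0 := by
      intro j
      have hzero_ae : ∀ᵐ ω ∂P, ω ∈ V0 → cexpInd F1 F2 P (A ∩ Cp N j) ω = 0 := by
        filter_upwards [ce_nonneg (F1 := F1) (A := A ∩ Cp N j) hPf] with ω h0 hωV0
        have hωW : ω ∈ W := hωV0.1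
        have hlt : gN j ω < cexpInd F1 F2 P A ω := Set.mem_iInter.1 hωV0.2 j
        have hnS : ω ∉ S (N, j) := fun hc => hωW.2 (Set.mem_iUnion.2 ⟨(N, j), hc⟩)
        by_contra hne
        exact hnS ⟨lt_of_le_of_ne h0 (Ne.symm hne), hlt⟩
      exact measure_inter_zero_of_ce_zero hle hPf (hA.inter (hB _ (hCpm N j))) hV0m hzero_ae
    have hnullV0 : P (A ∩ V0) = 0 := by
      have hsub : A ∩ V0 ⊆ (⋃ j, (A ∩ Cp N j) ∩ V0) ∪ (Set.univ \ ⋃ j, Cp N j) := by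
        rintro ω ⟨hωA, hωV0⟩
        by_cases hc : ω ∈ ⋃ j, Cp N j
        · obtain ⟨j, hj⟩ := Set.mem_iUnion.1 hc
          exact Or.inl (Set.mem_iUnion.2 ⟨j, ⟨hωA, hj⟩, hωV0⟩)
        · exact Or.inr ⟨Set.mem_univ ω, hc⟩
      refine measure_mono_null hsub ?_
      refine measure_union_null (measure_iUnion_null hpiece) (hCpnull N)
    -- each V j contribution
    have hVj : ∀ j, P (A ∩ V j) ≤ 2⁻¹ ^ N * P (V j) := by
      intro j
      have hACm : MeasurableSet[F2] (A ∩ Cp N j) := hA.inter (hB _ (hCpm N j))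
      have hACsubA : A ∩ Cp N j ⊆ A := Set.inter_subset_left
      have heq : A \ Cp N j = A \ (A ∩ Cp N j) := (Set.diff_self_inter).symm
      have hdiff_ae : ∀ᵐ ω ∂P, ω ∈ V j → cexpInd F1 F2 P (A \ Cp N j) ω = 0 := by
        filter_upwards [ce_diff (F1 := F1) hPf hA hACm hACsubA,
          ce_mono (F1 := F1) hPf hACm hA hACsubA] with ω h1 h2 hωV
        have hge : cexpInd F1 F2 P A ω ≤ gN j ω := hωV.1.2
        rw [heq, h1]
        simp only [Pi.sub_apply]
        have hgn : gN j ω = cexpInd F1 F2 P (A ∩ Cp N j) ω := rfl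
        rw [hgn] at hge
        linarith
      have hdiffnull : P ((A \ Cp N j) ∩ V j) = 0 :=
        measure_inter_zero_of_ce_zero hle hPf (hA.diff (hB _ (hCpm N j))) (hVm j) hdiff_ae
      have hsubsplit : A ∩ V j ⊆ (Cp N j ∩ V j) ∪ ((A \ Cp N j) ∩ V j) := by
        rintro ω ⟨hωA, hωV⟩
        by_cases hc : ω ∈ Cp N j
        · exact Or.inl ⟨hc, hωV⟩
        · exact Or.inr ⟨⟨hωA, hc⟩, hωV⟩
      calc P (A ∩ V j) ≤ P ((Cp N j ∩ V j) ∪ ((A \ Cp N j) ∩ V j)) := measure_mono hsubsplit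
        _ ≤ P (Cp N j ∩ V j) + P ((A \ Cp N j) ∩ V j) := measure_union_le _ _
        _ = P (Cp N j ∩ V j) := by rw [hdiffnull, add_zero]
        _ = P (Cp N j) * P (V j) := hmul _ _ (hCpm N j) (hVm j)
        _ ≤ 2⁻¹ ^ N * P (V j) := mul_le_mul_left (hCpε N j) _
    -- the V j are pairwise disjoint
    have hVdisj : Pairwise (Function.onFun Disjoint V) := by
      have hdis : ∀ i j, i < j → Disjoint (V i) (V j) := by
        intro i j hij
        refine Set.disjoint_left.2 fun ω h1 h2 => ?_
        have hlt : gN i ω < cexpInd F1 F2 P A ω :=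
          Set.mem_iInter.1 (Set.mem_iInter.1 h2.2 i) hij
        exact absurd h1.1.2 (not_le.2 hlt)
      intro i j hij
      rcases lt_or_gt_of_ne hij with h | h
      · exact hdis i j h
      · exact (hdis j i h).symm
    calc P (A ∩ W) ≤ P ((A ∩ V0) ∪ ⋃ j, A ∩ V j) := measure_mono hcover
      _ ≤ P (A ∩ V0) + P (⋃ j, A ∩ V j) := measure_union_le _ _
      _ = P (⋃ j, A ∩ V j) := by rw [hnullV0, zero_add]
      _ ≤ ∑' j, P (A ∩ V j) := measure_iUnion_le _
      _ ≤ ∑' j, 2⁻¹ ^ N * P (V j) := ENNReal.tsum_le_tsum hVj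
      _ = 2⁻¹ ^ N * ∑' j, P (V j) := ENNReal.tsum_mul_left
      _ = 2⁻¹ ^ N * P (⋃ j, V j) := by
          rw [measure_iUnion hVdisj (fun j => hle _ (hVm j))]
      _ ≤ 2⁻¹ ^ N * 1 := mul_le_mul_right prob_le_one _
      _ = 2⁻¹ ^ N := mul_one _
  -- P (A ∩ W) = 0
  have hAW : P (A ∩ W) = 0 := by
    by_contra h
    obtain ⟨N, hN⟩ := ENNReal.exists_inv_two_pow_lt h
    exact absurd (hbound N) (not_le.2 hN)
  -- P W = 0
  have hWnull : P W = 0 := by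
    by_contra h
    have hpos : 0 < ∫ ω in W, cexpInd F1 F2 P A ω ∂P :=
      setIntegral_pos' hPf (hle _ hWm) ce_int (ce_nonneg hPf)
        (Filter.Eventually.of_forall fun ω hω => hω.1) (pos_iff_ne_zero.2 h)
    rw [setIntegral_ce hle hPf hA hWm, hAW] at hpos
    simp at hpos
  refine ⟨B', hB'm, hB'A, ?_⟩
  filter_upwards [hkeyall, measure_eq_zero_iff_ae_notMem.1 hWnull] with ω hk hnW hpos
  have hωin : ω ∈ ⋃ p : ℕ × ℕ, S p := by
    by_contra hc
    exact hnW ⟨hpos, hc⟩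
  rw [← hEuniv] at hωin
  obtain ⟨n, hn⟩ := Set.mem_iUnion.1 hωin
  have hSω := hEsub n hn
  rw [hk n hn]
  exact ⟨hSω.1, hSω.2⟩

end ReverseMain


theorem stmt5 {Ω : Type*} (F1 F2 : MeasurableSpace Ω) (hle : F1 ≤ F2)
    (P : @Measure Ω F2) (hP : @IsProbabilityMeasure Ω F2 P) :
    CondAtomless F1 F2 P ↔
      ∃ B : MeasurableSpace Ω, B ≤ F2 ∧ ProbabilityTheory.Indep B F1 P ∧
        ∀ G : Set Ω, MeasurableSet[B] G → 0 < P G →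
          ∃ H : Set Ω, MeasurableSet[B] H ∧ H ⊆ G ∧ 0 < P H ∧ P H < P G := by
  constructor
  · intro hCA
    exact forward_direction hle hP hCA
  · rintro ⟨B, hB, hind, hatom⟩
    exact reverse_direction hle hP hB hind (fun G hG hGpos => hatom G hG hGpos)
end

section
/- Let B ⊆ F2 be a sub-σ-algebra independent of F1 and let U be a B-measurable random variable uniformly distributed on [0,1]. Set B_t = {U ≤ t} for t ∈ [0,1]. Then for every A ∈ F2 with P[{E[1_A | F1] > 0}] > 0 there exists t ∈ (0,1) such that P[{ω : 0 < E[1_{A ∩ B_t} | F1](ω) < E[1_A | F1](ω)}] > 0. -/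
open MeasureTheory ProbabilityTheory Set
open scoped ENNReal

theorem stmt7 {Ω : Type*} (F1 B F2 : MeasurableSpace Ω) (hle : F1 ≤ F2) (hBle : B ≤ F2)
    (P : @Measure Ω F2) (hP : @IsProbabilityMeasure Ω F2 P)
    (hindep : ProbabilityTheory.Indep B F1 P)
    (U : Ω → ℝ) (hU : Measurable[B] U)
    (hunif : Measure.map U P = volume.restrict (Set.Icc (0 : ℝ) 1)) :
    ∀ A : Set Ω, MeasurableSet[F2] A → 0 < P {ω | 0 < cexpInd F1 F2 P A ω} →
      ∃ t ∈ Set.Ioo (0 : ℝ) 1,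
        0 < P {ω | 0 < cexpInd F1 F2 P (A ∩ {ω' | U ω' ≤ t}) ω ∧
          cexpInd F1 F2 P (A ∩ {ω' | U ω' ≤ t}) ω < cexpInd F1 F2 P A ω} := by
  haveI := hP
  intro A hA hApos
  classical
  have hU2 : Measurable[F2] U := hU.mono hBle le_rfl
  -- measure of preimages under U
  have hmap : ∀ s : Set ℝ, MeasurableSet s →
      P (U ⁻¹' s) = volume.restrict (Set.Icc (0:ℝ) 1) s := by
    intro s hs
    rw [← hunif, Measure.map_apply hU2 hs]
  have hInt : ∀ S : Set Ω, MeasurableSet[F2] S →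
      Integrable (S.indicator fun _ => (1:ℝ)) P :=
    fun S hS => (integrable_const (1:ℝ)).indicator hS
  have hUt : ∀ t : ℝ, MeasurableSet[F2] {ω' | U ω' ≤ t} :=
    fun t => hU2 measurableSet_Iic
  -- conditional expectation of an indicator of a B-measurable set is constant
  have hCconst : ∀ C : Set Ω, MeasurableSet[B] C →
      (P[C.indicator (fun _ => (1:ℝ)) | F1]) =ᵐ[P] fun _ => (P C).toReal := by
    intro C hC
    have hsm : StronglyMeasurable[B] (C.indicator fun _ => (1:ℝ)) :=
      stronglyMeasurable_const.indicator hC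
    have h := condExp_indep_eq (μ := P) hBle hle hsm hindep
    have hint : ∫ ω, C.indicator (fun _ => (1:ℝ)) ω ∂P = (P C).toReal := by
      rw [integral_indicator_const (1:ℝ) (hBle _ hC)]; simp [Measure.real]
    refine h.trans ?_
    rw [hint]
  -- the Lipschitz-type bound
  have key2 : ∀ a b : ℝ, 0 ≤ a → a ≤ b → b ≤ 1 → ∀ᵐ ω ∂P,
      cexpInd F1 F2 P (A ∩ {ω' | U ω' ≤ b}) ω ≤
        cexpInd F1 F2 P (A ∩ {ω' | U ω' ≤ a}) ω + (b - a) := by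
    intro a b ha hab hb1
    have hC : MeasurableSet[B] (U ⁻¹' Set.Ioc a b) := hU measurableSet_Ioc
    have hPC : P (U ⁻¹' Set.Ioc a b) = ENNReal.ofReal (b - a) := by
      rw [hmap _ measurableSet_Ioc, Measure.restrict_apply measurableSet_Ioc,
        Set.inter_eq_self_of_subset_left
          (Set.Ioc_subset_Icc_self.trans (Set.Icc_subset_Icc ha hb1)),
        Real.volume_Ioc]
    have hpt : ∀ ω, (A ∩ {ω' | U ω' ≤ b}).indicator (fun _ => (1:ℝ)) ω ≤
        ((A ∩ {ω' | U ω' ≤ a}).indicator (fun _ => (1:ℝ)) +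
          (U ⁻¹' Set.Ioc a b).indicator (fun _ => (1:ℝ))) ω := by
      intro ω
      have h1 : (0:ℝ) ≤ (A ∩ {ω' | U ω' ≤ a}).indicator (fun _ => (1:ℝ)) ω :=
        Set.indicator_nonneg (fun _ _ => zero_le_one) ω
      have h2 : (0:ℝ) ≤ (U ⁻¹' Set.Ioc a b).indicator (fun _ => (1:ℝ)) ω :=
        Set.indicator_nonneg (fun _ _ => zero_le_one) ω
      by_cases hω : ω ∈ A ∩ {ω' | U ω' ≤ b}
      · rw [Set.indicator_of_mem hω]
        by_cases hωa : U ω ≤ a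
        · have hmem : ω ∈ A ∩ {ω' | U ω' ≤ a} := ⟨hω.1, hωa⟩
          have := Set.indicator_of_mem hmem (fun _ => (1:ℝ))
          simp only [Pi.add_apply]
          rw [this]; linarith
        · have hmem : ω ∈ U ⁻¹' Set.Ioc a b := ⟨lt_of_not_ge hωa, hω.2⟩
          have := Set.indicator_of_mem hmem (fun _ => (1:ℝ))
          simp only [Pi.add_apply]
          rw [this]; linarith
      · rw [Set.indicator_of_notMem hω]
        simp only [Pi.add_apply]; linarith
    have hIb := hInt _ (hA.inter (hUt b))
    have hIa := hInt _ (hA.inter (hUt a))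
    have hIC := hInt _ (hBle _ hC)
    have hm1 := condExp_mono (m := F1) (μ := P) hIb (hIa.add hIC) (ae_of_all _ hpt)
    have hadd := condExp_add (m := F1) (μ := P) hIa hIC
    have hCc := hCconst _ hC
    filter_upwards [hm1, hadd, hCc] with ω h1 h2 h3
    simp only [cexpInd]
    rw [h2] at h1
    simp only [Pi.add_apply] at h1
    rw [h3] at h1
    rw [hPC, ENNReal.toReal_ofReal (by linarith)] at h1
    exact h1
  -- the bound cexpInd (A ∩ {U ≤ a}) ≤ a
  have key4 : ∀ a : ℝ, 0 ≤ a → a ≤ 1 → ∀ᵐ ω ∂P,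
      cexpInd F1 F2 P (A ∩ {ω' | U ω' ≤ a}) ω ≤ a := by
    intro a h0 h1
    have hC : MeasurableSet[B] (U ⁻¹' Set.Iic a) := hU measurableSet_Iic
    have hPC : P (U ⁻¹' Set.Iic a) = ENNReal.ofReal a := by
      rw [hmap _ measurableSet_Iic, Measure.restrict_apply measurableSet_Iic]
      have heq : Set.Iic a ∩ Set.Icc (0:ℝ) 1 = Set.Icc 0 a := by
        ext x
        simp only [Set.mem_inter_iff, Set.mem_Iic, Set.mem_Icc]
        constructor
        · intro hx
          exact ⟨hx.2.1, hx.1⟩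
        · intro hx
          exact ⟨hx.2, hx.1, le_trans hx.2 h1⟩
      rw [heq, Real.volume_Icc, sub_zero]
    have hpt : ∀ ω, (A ∩ {ω' | U ω' ≤ a}).indicator (fun _ => (1:ℝ)) ω ≤
        (U ⁻¹' Set.Iic a).indicator (fun _ => (1:ℝ)) ω :=
      fun ω => Set.indicator_le_indicator_of_subset (fun x hx => hx.2)
        (fun _ => zero_le_one) ω
    have hm1 := condExp_mono (m := F1) (μ := P) (hInt _ (hA.inter (hUt a)))
      (hInt _ (hBle _ hC)) (ae_of_all _ hpt)
    filter_upwards [hm1, hCconst _ hC] with ω h1' h2'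
    simp only [cexpInd]
    rw [h2'] at h1'
    rw [hPC, ENNReal.toReal_ofReal h0] at h1'
    exact h1'
  -- a.e. U ≤ 1, so cexpInd A = cexpInd (A ∩ {U ≤ 1})
  have hgf1 : cexpInd F1 F2 P A =ᵐ[P] cexpInd F1 F2 P (A ∩ {ω' | U ω' ≤ (1:ℝ)}) := by
    have hnull : P (U ⁻¹' Set.Ioi (1:ℝ)) = 0 := by
      rw [hmap _ measurableSet_Ioi, Measure.restrict_apply measurableSet_Ioi]
      have : Set.Ioi (1:ℝ) ∩ Set.Icc 0 1 = ∅ := by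
        apply Set.eq_empty_iff_forall_notMem.mpr
        rintro x ⟨hx1, hx2⟩
        rw [Set.mem_Ioi] at hx1
        rw [Set.mem_Icc] at hx2
        linarith [hx2.2]
      rw [this, measure_empty]
    have hae1 : ∀ᵐ ω ∂P, U ω ≤ 1 := by
      have := measure_eq_zero_iff_ae_notMem.mp hnull
      filter_upwards [this] with ω hω
      simpa using hω
    apply condExp_congr_ae
    filter_upwards [hae1] with ω h1
    by_cases hω : ω ∈ A
    · rw [Set.indicator_of_mem hω, Set.indicator_of_mem (Set.mem_inter hω h1)]
    · rw [Set.indicator_of_notMem hω,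
        Set.indicator_of_notMem (fun h => hω (Set.mem_of_mem_inter_left h))]
  have key3 : ∀ a : ℝ, 0 ≤ a → a ≤ 1 → ∀ᵐ ω ∂P,
      cexpInd F1 F2 P A ω ≤ cexpInd F1 F2 P (A ∩ {ω' | U ω' ≤ a}) ω + (1 - a) := by
    intro a h0 h1
    filter_upwards [key2 a 1 h0 h1 le_rfl, hgf1] with ω hω heq
    rw [heq]; exact hω
  have key0 : ∀ t : ℝ, ∀ᵐ ω ∂P, 0 ≤ cexpInd F1 F2 P (A ∩ {ω' | U ω' ≤ t}) ω := by
    intro t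
    exact condExp_nonneg (ae_of_all _ (Set.indicator_nonneg (fun _ _ => zero_le_one)))
  -- combine a.e. statements over all rationals
  have h1ae : ∀ᵐ ω ∂P, ∀ q s : ℚ, 0 ≤ (q:ℝ) → (q:ℝ) ≤ (s:ℝ) → (s:ℝ) ≤ 1 →
      cexpInd F1 F2 P (A ∩ {ω' | U ω' ≤ (s:ℝ)}) ω ≤
        cexpInd F1 F2 P (A ∩ {ω' | U ω' ≤ (q:ℝ)}) ω + ((s:ℝ) - (q:ℝ)) := by
    rw [ae_all_iff]
    intro q
    rw [ae_all_iff]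
    intro s
    by_cases h : 0 ≤ (q:ℝ) ∧ (q:ℝ) ≤ (s:ℝ) ∧ (s:ℝ) ≤ 1
    · filter_upwards [key2 q s h.1 h.2.1 h.2.2] with ω hω _ _ _
      exact hω
    · filter_upwards with ω hq hs h1
      exact absurd ⟨hq, hs, h1⟩ h
  have h2ae : ∀ᵐ ω ∂P, ∀ q : ℚ, 0 ≤ cexpInd F1 F2 P (A ∩ {ω' | U ω' ≤ (q:ℝ)}) ω := by
    rw [ae_all_iff]; intro q; exact key0 q
  have h3ae : ∀ᵐ ω ∂P, ∀ q : ℚ, 0 ≤ (q:ℝ) → (q:ℝ) ≤ 1 →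
      cexpInd F1 F2 P (A ∩ {ω' | U ω' ≤ (q:ℝ)}) ω ≤ (q:ℝ) := by
    rw [ae_all_iff]
    intro q
    by_cases h : 0 ≤ (q:ℝ) ∧ (q:ℝ) ≤ 1
    · filter_upwards [key4 q h.1 h.2] with ω hω _ _
      exact hω
    · filter_upwards with ω hq h1
      exact absurd ⟨hq, h1⟩ h
  have h4ae : ∀ᵐ ω ∂P, ∀ q : ℚ, 0 ≤ (q:ℝ) → (q:ℝ) ≤ 1 →
      cexpInd F1 F2 P A ω ≤ cexpInd F1 F2 P (A ∩ {ω' | U ω' ≤ (q:ℝ)}) ω + (1 - (q:ℝ)) := by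
    rw [ae_all_iff]
    intro q
    by_cases h : 0 ≤ (q:ℝ) ∧ (q:ℝ) ≤ 1
    · filter_upwards [key3 q h.1 h.2] with ω hω _ _
      exact hω
    · filter_upwards with ω hq h1
      exact absurd ⟨hq, h1⟩ h
  have hgood := (h1ae.and (h2ae.and (h3ae.and h4ae)))
  -- the deterministic combinatorial claim
  have claim : ∀ ω : Ω,
      (∀ q s : ℚ, 0 ≤ (q:ℝ) → (q:ℝ) ≤ (s:ℝ) → (s:ℝ) ≤ 1 →
        cexpInd F1 F2 P (A ∩ {ω' | U ω' ≤ (s:ℝ)}) ω ≤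
          cexpInd F1 F2 P (A ∩ {ω' | U ω' ≤ (q:ℝ)}) ω + ((s:ℝ) - (q:ℝ))) →
      (∀ q : ℚ, 0 ≤ cexpInd F1 F2 P (A ∩ {ω' | U ω' ≤ (q:ℝ)}) ω) →
      (∀ q : ℚ, 0 ≤ (q:ℝ) → (q:ℝ) ≤ 1 →
        cexpInd F1 F2 P (A ∩ {ω' | U ω' ≤ (q:ℝ)}) ω ≤ (q:ℝ)) →
      (∀ q : ℚ, 0 ≤ (q:ℝ) → (q:ℝ) ≤ 1 →
        cexpInd F1 F2 P A ω ≤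
          cexpInd F1 F2 P (A ∩ {ω' | U ω' ≤ (q:ℝ)}) ω + (1 - (q:ℝ))) →
      0 < cexpInd F1 F2 P A ω →
      ∃ q : ℚ, 0 < (q:ℝ) ∧ (q:ℝ) < 1 ∧
        0 < cexpInd F1 F2 P (A ∩ {ω' | U ω' ≤ (q:ℝ)}) ω ∧
        cexpInd F1 F2 P (A ∩ {ω' | U ω' ≤ (q:ℝ)}) ω < cexpInd F1 F2 P A ω := by
    intro ω h2 h0 h4 h3 hc
    obtain ⟨n, hn⟩ := exists_nat_one_div_lt hc
    set N : ℕ := n + 2 with hNdef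
    have hNpos : (0:ℝ) < (N:ℝ) := by positivity
    have hN1 : (1:ℝ)/(N:ℝ) < cexpInd F1 F2 P A ω := by
      refine lt_of_le_of_lt ?_ hn
      apply one_div_le_one_div_of_le (by positivity)
      rw [hNdef]; push_cast; linarith
    set qq : ℕ → ℚ := fun i => (i : ℚ)/(N : ℚ) with hqqdef
    have hqcast : ∀ i : ℕ, ((qq i : ℝ)) = (i:ℝ)/(N:ℝ) := by
      intro i; simp [hqqdef]
    have hpN : 0 < cexpInd F1 F2 P (A ∩ {ω' | U ω' ≤ ((qq (N-1) : ℝ))}) ω := by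
      have hc1 : ((qq (N-1) : ℝ)) = ((N:ℝ) - 1)/(N:ℝ) := by
        rw [hqcast]
        congr 1
        push_cast [Nat.cast_sub (by omega : 1 ≤ N)]
        ring
      have hN2 : (2:ℝ) ≤ (N:ℝ) := by
        rw [hNdef]; push_cast; linarith
      have h01 : 0 ≤ ((qq (N-1) : ℝ)) := by
        rw [hc1]
        apply div_nonneg (by linarith) hNpos.le
      have h11 : ((qq (N-1) : ℝ)) ≤ 1 := by
        rw [hc1, div_le_one hNpos]; linarith
      have := h3 (qq (N-1)) h01 h11
      have harith : 1 - ((qq (N-1) : ℝ)) = 1/(N:ℝ) := by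
        rw [hc1]; field_simp; ring
      rw [harith] at this
      linarith
    have hp : ∃ i : ℕ, 0 < cexpInd F1 F2 P (A ∩ {ω' | U ω' ≤ ((qq i : ℝ))}) ω := ⟨N-1, hpN⟩
    set i := Nat.find hp with hidef
    have hi : 0 < cexpInd F1 F2 P (A ∩ {ω' | U ω' ≤ ((qq i : ℝ))}) ω := Nat.find_spec hp
    have hile : i ≤ N - 1 := Nat.find_min' hp hpN
    have hi0 : i ≠ 0 := by
      intro h
      have h00 : ((qq 0 : ℝ)) = 0 := by rw [hqcast]; simp
      have := h4 (qq 0) (by rw [h00]) (by rw [h00]; norm_num)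
      rw [h00] at this
      rw [h, h00] at hi
      linarith
    have h1i : 1 ≤ i := Nat.one_le_iff_ne_zero.mpr hi0
    have hprev : ¬ 0 < cexpInd F1 F2 P (A ∩ {ω' | U ω' ≤ ((qq (i-1) : ℝ))}) ω :=
      Nat.find_min hp (by omega)
    have hiN : (i:ℝ) ≤ (N:ℝ) - 1 := by
      have h' : i + 1 ≤ N := by omega
      have h'' : ((i:ℝ)) + 1 ≤ (N:ℝ) := by exact_mod_cast h'
      linarith
    have hprevc : ((qq (i-1) : ℝ)) = ((i:ℝ) - 1)/(N:ℝ) := by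
      rw [hqcast]
      congr 1
      push_cast [Nat.cast_sub h1i]
      ring
    have hq0 : 0 ≤ ((qq (i-1) : ℝ)) := by
      rw [hprevc]
      apply div_nonneg _ hNpos.le
      have : (1:ℝ) ≤ (i:ℝ) := by exact_mod_cast h1i
      linarith
    have hqmono : ((qq (i-1) : ℝ)) ≤ ((qq i : ℝ)) := by
      rw [hprevc, hqcast]
      exact (div_le_div_iff_of_pos_right hNpos).mpr (by linarith)
    have hqi1' : ((qq i : ℝ)) ≤ 1 := by
      rw [hqcast, div_le_one hNpos]; linarith
    have hstep := h2 (qq (i-1)) (qq i) hq0 hqmono hqi1'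
    have hdiff : ((qq i : ℝ)) - ((qq (i-1) : ℝ)) = 1/(N:ℝ) := by
      rw [hqcast, hprevc]; field_simp; ring
    have hle0 := le_of_not_gt hprev
    refine ⟨qq i, ?_, ?_, hi, ?_⟩
    · rw [hqcast]
      apply div_pos _ hNpos
      exact_mod_cast h1i
    · rw [hqcast, div_lt_one hNpos]
      linarith
    · calc cexpInd F1 F2 P (A ∩ {ω' | U ω' ≤ ((qq i : ℝ))}) ω
          ≤ cexpInd F1 F2 P (A ∩ {ω' | U ω' ≤ ((qq (i-1) : ℝ))}) ω +
            (((qq i : ℝ)) - ((qq (i-1) : ℝ))) := hstep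
        _ ≤ 0 + 1/(N:ℝ) := by rw [hdiff]; linarith
        _ < cexpInd F1 F2 P A ω := by rw [zero_add]; exact hN1
  -- conclude
  by_contra hcon
  push_neg at hcon
  have hzero : ∀ q : ℚ, ∀ᵐ ω ∂P, ¬(0 < (q:ℝ) ∧ (q:ℝ) < 1 ∧
      0 < cexpInd F1 F2 P (A ∩ {ω' | U ω' ≤ (q:ℝ)}) ω ∧
      cexpInd F1 F2 P (A ∩ {ω' | U ω' ≤ (q:ℝ)}) ω < cexpInd F1 F2 P A ω) := by
    intro q
    by_cases hq : 0 < (q:ℝ) ∧ (q:ℝ) < 1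
    · have h0 := hcon (q:ℝ) ⟨hq.1, hq.2⟩
      have hz : P {ω | 0 < cexpInd F1 F2 P (A ∩ {ω' | U ω' ≤ (q:ℝ)}) ω ∧
          cexpInd F1 F2 P (A ∩ {ω' | U ω' ≤ (q:ℝ)}) ω < cexpInd F1 F2 P A ω} = 0 :=
        le_antisymm h0 zero_le
      have := measure_eq_zero_iff_ae_notMem.mp hz
      filter_upwards [this] with ω hω hbig
      exact hω ⟨hbig.2.2.1, hbig.2.2.2⟩
    · filter_upwards with ω hbig
      exact hq ⟨hbig.1, hbig.2.1⟩
  have hzero' : ∀ᵐ ω ∂P, ∀ q : ℚ, ¬(0 < (q:ℝ) ∧ (q:ℝ) < 1 ∧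
      0 < cexpInd F1 F2 P (A ∩ {ω' | U ω' ≤ (q:ℝ)}) ω ∧
      cexpInd F1 F2 P (A ∩ {ω' | U ω' ≤ (q:ℝ)}) ω < cexpInd F1 F2 P A ω) :=
    ae_all_iff.mpr hzero
  have hfinal : ∀ᵐ ω ∂P, ω ∉ {ω | 0 < cexpInd F1 F2 P A ω} := by
    filter_upwards [hgood, hzero'] with ω hg hz hc
    obtain ⟨q, ha1, ha2, ha3, ha4⟩ := claim ω hg.1 hg.2.1 hg.2.2.1 hg.2.2.2 hc
    exact hz q ⟨ha1, ha2, ha3, ha4⟩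
  have : P {ω | 0 < cexpInd F1 F2 P A ω} = 0 := measure_eq_zero_iff_ae_notMem.mpr hfinal
  exact absurd this (ne_of_gt hApos)
end

section
/- Let Q_1, …, Q_n be probability measures on a measurable space (Ω, A). Let Q_0 = Σ_k λ_k Q_k be a convex combination with every λ_k > 0, and let f_k be an A-measurable version of the Radon–Nikodym derivative dQ_k/dQ_0. Let Q be another measure dominating each Q_k, with g_k an A-measurable version of dQ_k/dQ. Let N = {N ∈ A : Q_0[N] = 0}, let F be the σ-algebra generated by f_1, …, f_n and let G be the σ-algebra generated by g_1, …, g_n. Then F ⊆ σ(G, N), the σ-algebra generated by G together with the Q_0-null sets N. -/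
open MeasureTheory Set
open scoped ENNReal

theorem stmt8 {Ω : Type*} [mA : MeasurableSpace Ω] {n : ℕ}
    (Q : Fin n → Measure Ω) (hQprob : ∀ k, IsProbabilityMeasure (Q k))
    (lam : Fin n → ℝ≥0∞) (hlam : ∀ k, 0 < lam k) (hlamsum : ∑ k, lam k = 1)
    (Q0 : Measure Ω) (hQ0 : Q0 = ∑ k, lam k • Q k)
    (f : Fin n → Ω → ℝ≥0∞) (hf : ∀ k, Measurable (f k))
    (hfver : ∀ k, ∀ s : Set Ω, MeasurableSet s → Q k s = ∫⁻ x in s, f k x ∂Q0)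
    (Q' : Measure Ω) (hdom : ∀ k, Q k ≪ Q')
    (g : Fin n → Ω → ℝ≥0∞) (hg : ∀ k, Measurable (g k))
    (hgver : ∀ k, ∀ s : Set Ω, MeasurableSet s → Q k s = ∫⁻ x in s, g k x ∂Q') :
    (⨆ k, MeasurableSpace.comap (f k) inferInstance) ≤
      (⨆ k, MeasurableSpace.comap (g k) inferInstance) ⊔
        MeasurableSpace.generateFrom {N : Set Ω | MeasurableSet N ∧ Q0 N = 0} := by
  classical
  set G : Ω → ℝ≥0∞ := fun x => ∑ k, lam k * g k x with hGdef
  have hGmeas : Measurable G := Finset.measurable_sum _ fun k _ => (hg k).const_mul _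
  have hQ0wd : Q0 = Q'.withDensity G := by
    ext s hs
    rw [withDensity_apply _ hs, hQ0]
    simp only [Measure.coe_finset_sum, Measure.smul_apply, Finset.sum_apply, smul_eq_mul]
    rw [hGdef, lintegral_finset_sum _ (fun k _ => (hg k).const_mul _)]
    exact Finset.sum_congr rfl fun k _ => by
      rw [hgver k s hs, lintegral_const_mul _ (hg k)]
  have hQ0ac : Q0 ≪ Q' := hQ0wd ▸ withDensity_absolutelyContinuous Q' G
  have hQ0univ : Q0 univ = 1 := by
    rw [hQ0]
    simp only [Measure.coe_finset_sum, Measure.smul_apply, Finset.sum_apply, smul_eq_mul]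
    calc ∑ k, lam k * Q k univ = ∑ k, lam k := by
          refine Finset.sum_congr rfl fun k _ => ?_
          rw [(hQprob k).measure_univ, mul_one]
      _ = 1 := hlamsum
  have hGint : ∫⁻ x, G x ∂Q' = 1 := by
    rw [← setLIntegral_univ, ← withDensity_apply _ MeasurableSet.univ, ← hQ0wd, hQ0univ]
  have hGfin : ∀ᵐ x ∂Q', G x ≠ ∞ :=
    (ae_lt_top hGmeas (by rw [hGint]; exact ENNReal.one_ne_top)).mono fun x h => h.ne
  have hG0 : Q0 {x | G x = 0} = 0 := by
    have hms : MeasurableSet {x | G x = 0} := hGmeas (measurableSet_singleton 0)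
    rw [hQ0wd, withDensity_apply _ hms,
      setLIntegral_congr_fun hms (show EqOn G (fun _ => 0) {x | G x = 0} from fun x hx => hx)]
    simp
  have hae_le : ae Q0 ≤ ae Q' := Measure.ae_le_iff_absolutelyContinuous.mpr hQ0ac
  -- the key set-integral identity
  have hset : ∀ k, ∀ s : Set Ω, MeasurableSet s → ∫⁻ x in s, G x * f k x ∂Q' = Q k s := by
    intro k s hs
    have := setLIntegral_withDensity_eq_setLIntegral_mul Q' hGmeas (hf k) hs
    simp only [Pi.mul_apply] at this
    rw [← this, ← hQ0wd, ← hfver k s hs]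
  have key : ∀ k, (fun x => G x * f k x) =ᵐ[Q'] g k := by
    intro k
    refine AEMeasurable.ae_eq_of_forall_setLIntegral_eq (hGmeas.mul (hf k)).aemeasurable
      (hg k).aemeasurable ?_ ?_ fun s hs _ => ?_
    · rw [← setLIntegral_univ, hset k univ MeasurableSet.univ]
      exact measure_ne_top _ _
    · rw [← setLIntegral_univ, ← hgver k univ MeasurableSet.univ]
      exact measure_ne_top _ _
    · rw [hset k s hs, hgver k s hs]
  have hae : ∀ k, f k =ᵐ[Q0] fun x => g k x / G x := by
    intro k
    have h2 : ∀ᵐ x ∂Q0, G x ≠ 0 := by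
      rw [ae_iff]
      simpa using hG0
    filter_upwards [hae_le (key k), h2, hae_le hGfin] with x hx hx0 hxt
    rw [ENNReal.eq_div_iff hx0 hxt]
    exact hx
  have hgMG : ∀ k, Measurable[⨆ j, MeasurableSpace.comap (g j) inferInstance] (g k) := fun k =>
    measurable_iff_comap_le.mpr
      (le_iSup (fun j => MeasurableSpace.comap (g j) (inferInstance : MeasurableSpace ℝ≥0∞)) k)
  have hGMG : Measurable[⨆ j, MeasurableSpace.comap (g j) inferInstance] G := by
    rw [hGdef]
    exact Finset.measurable_sum _ fun k _ => (hgMG k).const_mul _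
  have hle2 : MeasurableSpace.generateFrom {N : Set Ω | MeasurableSet N ∧ Q0 N = 0} ≤
      (⨆ j, MeasurableSpace.comap (g j) inferInstance) ⊔
        MeasurableSpace.generateFrom {N : Set Ω | MeasurableSet N ∧ Q0 N = 0} := le_sup_right
  have hle1 : (⨆ j, MeasurableSpace.comap (g j) (inferInstance : MeasurableSpace ℝ≥0∞)) ≤
      (⨆ j, MeasurableSpace.comap (g j) inferInstance) ⊔
        MeasurableSpace.generateFrom {N : Set Ω | MeasurableSet N ∧ Q0 N = 0} := le_sup_left
  refine iSup_le fun k => measurable_iff_comap_le.mp ?_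
  intro A hA
  have hhmA : Measurable (fun x => g k x / G x) := (hg k).div hGmeas
  have hDnull : Q0 {x | f k x ≠ g k x / G x} = 0 := ae_iff.mp (hae k)
  have hfA : MeasurableSet (f k ⁻¹' A) := hf k hA
  have hhA : MeasurableSet ((fun x => g k x / G x) ⁻¹' A) := hhmA hA
  have hS1 : MeasurableSet[(⨆ j, MeasurableSpace.comap (g j) inferInstance) ⊔
      MeasurableSpace.generateFrom {N : Set Ω | MeasurableSet N ∧ Q0 N = 0}]
      (f k ⁻¹' A \ (fun x => g k x / G x) ⁻¹' A) := by
    refine hle2 _ (MeasurableSpace.measurableSet_generateFrom ⟨hfA.diff hhA, ?_⟩)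
    refine measure_mono_null (fun x hx => ?_) hDnull
    intro hxEq
    exact hx.2 (show x ∈ (fun x => g k x / G x) ⁻¹' A by
      rw [Set.mem_preimage, ← hxEq]; exact hx.1)
  have hS2 : MeasurableSet[(⨆ j, MeasurableSpace.comap (g j) inferInstance) ⊔
      MeasurableSpace.generateFrom {N : Set Ω | MeasurableSet N ∧ Q0 N = 0}]
      ((fun x => g k x / G x) ⁻¹' A \ f k ⁻¹' A) := by
    refine hle2 _ (MeasurableSpace.measurableSet_generateFrom ⟨hhA.diff hfA, ?_⟩)
    refine measure_mono_null (fun x hx => ?_) hDnull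
    intro hxEq
    exact hx.2 (show x ∈ f k ⁻¹' A by
      rw [Set.mem_preimage, hxEq]; exact hx.1)
  have hS : MeasurableSet[(⨆ j, MeasurableSpace.comap (g j) inferInstance) ⊔
      MeasurableSpace.generateFrom {N : Set Ω | MeasurableSet N ∧ Q0 N = 0}]
      ((fun x => g k x / G x) ⁻¹' A) :=
    hle1 _ (((hgMG k).div hGMG) hA)
  have hdecomp : f k ⁻¹' A = (((fun x => g k x / G x) ⁻¹' A ∪
      (f k ⁻¹' A \ (fun x => g k x / G x) ⁻¹' A)) \ ((fun x => g k x / G x) ⁻¹' A \ f k ⁻¹' A)) := by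
    ext x
    simp only [Set.mem_diff, Set.mem_union, Set.mem_preimage]
    tauto
  rw [hdecomp]
  exact ((hS.union hS1).diff hS2)
end

section
/- Suppose the conditional expectation with respect to F1 is given by a kernel K, i.e., K : Ω × F2 → [0,1] satisfies: (1) for every ω ∈ Ω, K(ω, ·) is a probability measure on F2; (2) for each A ∈ F2, the map ω ↦ K(ω, A) is F1-measurable; (3) for each ξ ∈ L¹(Ω, F2, P), E[ξ | F1](ω) = ∫ ξ(τ) K(ω, dτ) for P-almost every ω. If F2 is atomless conditionally to F1, then for P-almost every ω ∈ Ω the probability measure K(ω, ·) is atomless on F2, i.e., for every A ∈ F2 with K(ω, A) > 0 there is B ∈ F2, B ⊆ A, with 0 < K(ω, B) < K(ω, A). -/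
open MeasureTheory ProbabilityTheory Set
open scoped ENNReal

/-- `K` is a probability kernel realizing the conditional expectation with respect to `F1`. -/
def IsCondKernel {Ω : Type*} (F1 F2 : MeasurableSpace Ω) (P : @Measure Ω F2)
    (K : Ω → @Measure Ω F2) : Prop :=
  (∀ ω, @IsProbabilityMeasure Ω F2 (K ω)) ∧
  (∀ A : Set Ω, MeasurableSet[F2] A → Measurable[F1] fun ω => K ω A) ∧
  (∀ ξ : Ω → ℝ, Integrable ξ P → P[ξ|F1] =ᵐ[P] fun ω => ∫ τ, ξ τ ∂(K ω))

section Aux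

variable {Ω : Type*} {F1 F2 : MeasurableSpace Ω} {P : @Measure Ω F2}
  {K : Ω → @Measure Ω F2}

/-- The kernel realizes the conditional expectation of indicators. -/
lemma kernel_ae_eq (hP : @IsProbabilityMeasure Ω F2 P) (hK : IsCondKernel F1 F2 P K)
    {A : Set Ω} (hA : MeasurableSet[F2] A) :
    cexpInd F1 F2 P A =ᵐ[P] fun ω => (K ω A).toReal := by
  haveI := hP
  have hint : Integrable (A.indicator fun _ => (1 : ℝ)) P :=
    (integrable_const (1 : ℝ)).indicator hA
  refine (hK.2.2 _ hint).trans (Filter.Eventually.of_forall fun ω => ?_)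
  show ∫ τ, A.indicator (fun _ => (1 : ℝ)) τ ∂(K ω) = (K ω A).toReal
  rw [integral_indicator_const (1 : ℝ) hA]
  simp
  rfl

lemma kernel_ne_top (hK : IsCondKernel F1 F2 P K) (ω : Ω) (B : Set Ω) : K ω B ≠ ⊤ := by
  haveI := hK.1 ω
  exact measure_ne_top _ _

lemma kernel_le_one (hK : IsCondKernel F1 F2 P K) (ω : Ω) (B : Set Ω) : K ω B ≤ 1 := by
  haveI := hK.1 ω
  exact prob_le_one

/-- `P B = ∫⁻ K ω B ∂P`. -/
lemma P_eq_lintegral (hle : F1 ≤ F2) (hP : @IsProbabilityMeasure Ω F2 P)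
    (hK : IsCondKernel F1 F2 P K) {B : Set Ω} (hB : MeasurableSet[F2] B) :
    P B = ∫⁻ ω, K ω B ∂P := by
  haveI := hP
  haveI : SigmaFinite (P.trim hle) := inferInstance
  have hint : Integrable (B.indicator fun _ => (1 : ℝ)) P :=
    (integrable_const (1 : ℝ)).indicator hB
  have h1 : ∫ ω, cexpInd F1 F2 P B ω ∂P = (P B).toReal := by
    rw [cexpInd, integral_condExp hle, integral_indicator_const (1 : ℝ) hB]
    simp
    rfl
  have h2 : ∫ ω, (K ω B).toReal ∂P = (P B).toReal := by
    rw [← integral_congr_ae (kernel_ae_eq hP hK hB)]; exact h1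
  have hmeas : Measurable[F2] fun ω => K ω B := (hK.2.1 B hB).mono hle le_rfl
  have h3 : ∫ ω, (K ω B).toReal ∂P = (∫⁻ ω, K ω B ∂P).toReal :=
    integral_toReal hmeas.aemeasurable
      (Filter.Eventually.of_forall fun ω => lt_of_le_of_lt (kernel_le_one hK ω B) (by norm_num))
  have hfin : ∫⁻ ω, K ω B ∂P ≠ ⊤ := by
    refine ne_top_of_le_ne_top (by simp : (1 : ℝ≥0∞) ≠ ⊤) ?_
    calc ∫⁻ ω, K ω B ∂P ≤ ∫⁻ _, 1 ∂P := lintegral_mono fun ω => kernel_le_one hK ω B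
    _ = 1 := by simp
  have := h2.symm.trans h3
  exact (ENNReal.toReal_eq_toReal_iff' (measure_ne_top P B) hfin).mp this

/-- The kernel is a.e. proper on `F1`-sets. -/
lemma kernel_proper (hle : F1 ≤ F2) (hP : @IsProbabilityMeasure Ω F2 P)
    (hK : IsCondKernel F1 F2 P K) {A E : Set Ω} (hA : MeasurableSet[F2] A)
    (hE : MeasurableSet[F1] E) :
    ∀ᵐ ω ∂P, (ω ∈ E → K ω (A ∩ E) = K ω A) ∧ (ω ∉ E → K ω (A ∩ E) = 0) := by
  haveI := hP
  haveI : SigmaFinite (P.trim hle) := inferInstance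
  have hEsm : StronglyMeasurable[F1] (E.indicator fun _ => (1 : ℝ)) :=
    stronglyMeasurable_const.indicator hE
  have hEint : Integrable (E.indicator fun _ => (1 : ℝ)) P :=
    (integrable_const (1 : ℝ)).indicator (hle _ hE)
  have hceq : cexpInd F1 F2 P E = E.indicator fun _ => (1 : ℝ) := by
    rw [cexpInd]; exact condExp_of_stronglyMeasurable hle hEsm hEint
  have h1 := kernel_ae_eq hP hK (hle _ hE)
  filter_upwards [h1] with ω hω
  rw [hceq] at hω
  constructor
  · intro hωE
    have hKE : K ω E = 1 := by
      have : (K ω E).toReal = 1 := by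
        rw [← hω]; simp [Set.indicator_of_mem hωE]
      exact (ENNReal.toReal_eq_one_iff _).mp this
    haveI := hK.1 ω
    have hcompl : K ω Eᶜ = 0 := by
      have := prob_compl_eq_one_sub (μ := K ω) (hle _ hE)
      rw [hKE] at this; simpa using this
    have hdiff : K ω (A \ E) = 0 := by
      refine le_antisymm (le_trans (measure_mono ?_) (le_of_eq hcompl)) zero_le
      rw [Set.diff_eq]; exact inter_subset_right
    have := measure_inter_add_diff (μ := K ω) A (hle _ hE)
    rw [hdiff, add_zero] at this
    exact this
  · intro hωE
    have hKE : K ω E = 0 := by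
      have : (K ω E).toReal = 0 := by
        rw [← hω]; simp [Set.indicator_of_notMem hωE]
      have hne := kernel_ne_top hK ω E
      exact (ENNReal.toReal_eq_zero_iff _).mp this |>.resolve_right hne
    exact le_antisymm (le_trans (measure_mono inter_subset_right) (le_of_eq hKE)) zero_le

/-- From conditional atomlessness: a piece of at most half mass, positive wherever `A` has
positive mass. -/
lemma half_piece (hle : F1 ≤ F2) (hP : @IsProbabilityMeasure Ω F2 P)
    (hK : IsCondKernel F1 F2 P K) (hatomless : CondAtomless F1 F2 P)
    {A : Set Ω} (hA : MeasurableSet[F2] A) :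
    ∃ B : Set Ω, MeasurableSet[F2] B ∧ B ⊆ A ∧
      ∀ᵐ ω ∂P, 2 * K ω B ≤ K ω A ∧ (0 < K ω A → 0 < K ω B) := by
  obtain ⟨B0, hB0m, hB0sub, hB0⟩ := hatomless A hA
  set E : Set Ω := {ω | 2 * K ω B0 ≤ K ω A} with hEdef
  have hE : MeasurableSet[F1] E :=
    measurableSet_le ((hK.2.1 B0 hB0m).const_mul 2) (hK.2.1 A hA)
  refine ⟨(B0 ∩ E) ∪ ((A \ B0) ∩ Eᶜ), ?_, ?_, ?_⟩
  · exact (hB0m.inter (hle _ hE)).union ((hA.diff hB0m).inter (hle _ hE.compl))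
  · exact union_subset (inter_subset_left.trans hB0sub)
      (inter_subset_left.trans diff_subset)
  have hKA := kernel_ae_eq hP hK hA
  have hKB0 := kernel_ae_eq hP hK hB0m
  have hp1 := kernel_proper hle hP hK hB0m hE
  have hp2 := kernel_proper hle hP hK (hA.diff hB0m) hE.compl
  filter_upwards [hB0, hKA, hKB0, hp1, hp2] with ω h0 hA' hB' hp1' hp2'
  -- translate the conditional-atomless inequality to kernel values
  have hstrict : 0 < K ω A → 0 < K ω B0 ∧ K ω B0 < K ω A := by
    intro hpos
    have hposR : 0 < cexpInd F1 F2 P A ω := by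
      rw [hA']
      exact ENNReal.toReal_pos hpos.ne' (kernel_ne_top hK ω A)
    obtain ⟨h1, h2⟩ := h0 hposR
    rw [hA', hB'] at *
    constructor
    · by_contra h
      push_neg at h
      have : K ω B0 = 0 := le_antisymm h zero_le
      rw [hB', this] at h1; simp at h1
    · rw [hA', hB'] at h2
      exact (ENNReal.toReal_lt_toReal (kernel_ne_top hK ω B0) (kernel_ne_top hK ω A)).mp h2
  have hdisj : Disjoint (B0 ∩ E) ((A \ B0) ∩ Eᶜ) :=
    Disjoint.mono inter_subset_right inter_subset_right disjoint_compl_right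
  have hsum : K ω ((B0 ∩ E) ∪ ((A \ B0) ∩ Eᶜ)) = K ω (B0 ∩ E) + K ω ((A \ B0) ∩ Eᶜ) :=
    measure_union hdisj ((hA.diff hB0m).inter (hle _ hE.compl))
  by_cases hωE : ω ∈ E
  · have h1 : K ω (B0 ∩ E) = K ω B0 := hp1'.1 hωE
    have h2 : K ω ((A \ B0) ∩ Eᶜ) = 0 := hp2'.2 (by simpa using hωE)
    rw [hsum, h1, h2, add_zero]
    refine ⟨hωE, fun hpos => (hstrict hpos).1⟩
  · have h1 : K ω (B0 ∩ E) = 0 := hp1'.2 hωE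
    have h2 : K ω ((A \ B0) ∩ Eᶜ) = K ω (A \ B0) := hp2'.1 (by simpa using hωE)
    rw [hsum, h1, h2, zero_add]
    have hnotle : ¬ (2 * K ω B0 ≤ K ω A) := hωE
    push_neg at hnotle
    have hApos : 0 < K ω A := by
      rcases Nat.eq_zero_or_pos 0 with _ | _
      all_goals {
        by_contra h
        push_neg at h
        have hzA : K ω A = 0 := le_antisymm h zero_le
        have : K ω B0 ≤ K ω A := measure_mono hB0sub
        rw [hzA] at this hnotle
        have : (2 : ℝ≥0∞) * K ω B0 = 0 := by
          simp [le_antisymm this zero_le]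
        exact absurd (this ▸ hnotle) (lt_irrefl 0) }
    obtain ⟨hB0pos, hB0lt⟩ := hstrict hApos
    have hble : K ω B0 ≤ K ω A := hB0lt.le
    have hdiffeq : K ω (A \ B0) = K ω A - K ω B0 :=
      measure_diff hB0sub hB0m.nullMeasurableSet (kernel_ne_top hK ω B0)
    constructor
    · -- 2 * (K A - K B0) ≤ K A, given K A < 2 * K B0
      rw [hdiffeq, two_mul]
      have hstep : K ω A - K ω B0 ≤ K ω B0 := by
        rw [tsub_le_iff_right]
        calc K ω A ≤ 2 * K ω B0 := hnotle.le
        _ = K ω B0 + K ω B0 := two_mul _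
      calc (K ω A - K ω B0) + (K ω A - K ω B0) ≤ (K ω A - K ω B0) + K ω B0 :=
            add_le_add_right hstep _
      _ = K ω A := tsub_add_cancel_of_le hble
    · intro _
      rw [hdiffeq]
      exact tsub_pos_of_lt hB0lt

/-- Iterated: a piece of relative mass at most `2⁻ⁿ`, positive wherever `A` is. -/
lemma pow_piece (hle : F1 ≤ F2) (hP : @IsProbabilityMeasure Ω F2 P)
    (hK : IsCondKernel F1 F2 P K) (hatomless : CondAtomless F1 F2 P)
    (n : ℕ) {A : Set Ω} (hA : MeasurableSet[F2] A) :
    ∃ B : Set Ω, MeasurableSet[F2] B ∧ B ⊆ A ∧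
      ∀ᵐ ω ∂P, 2 ^ n * K ω B ≤ K ω A ∧ (0 < K ω A → 0 < K ω B) := by
  induction n with
  | zero =>
    exact ⟨A, hA, subset_rfl, Filter.Eventually.of_forall fun ω => ⟨by simp, fun h => h⟩⟩
  | succ n ih =>
    obtain ⟨C, hCm, hCsub, hC⟩ := ih
    obtain ⟨B, hBm, hBsub, hB⟩ := half_piece hle hP hK hatomless hCm
    refine ⟨B, hBm, hBsub.trans hCsub, ?_⟩
    filter_upwards [hC, hB] with ω h1 h2
    constructor
    · calc 2 ^ (n + 1) * K ω B = 2 ^ n * (2 * K ω B) := by ring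
      _ ≤ 2 ^ n * K ω C := mul_le_mul_right h2.1 _
      _ ≤ K ω A := h1.1
    · exact fun h => h2.2 (h1.2 h)

/-- For each `k` there is a countable family of measurable sets whose kernel masses are a.e.
at most `(2^k)⁻¹` and which a.e. exhausts the kernel mass of `Ω`. -/
lemma exists_small_partition (hle : F1 ≤ F2) (hP : @IsProbabilityMeasure Ω F2 P)
    (hK : IsCondKernel F1 F2 P K) (hatomless : CondAtomless F1 F2 P) (k : ℕ) :
    ∃ B : ℕ → Set Ω, (∀ n, MeasurableSet[F2] (B n)) ∧
      (∀ n, ∀ᵐ ω ∂P, K ω (B n) ≤ ((2 : ℝ≥0∞) ^ k)⁻¹) ∧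
      (∀ᵐ ω ∂P, K ω (⋃ n, B n)ᶜ = 0) := by
  haveI := hP
  classical
  set ε : ℝ≥0∞ := ((2 : ℝ≥0∞) ^ k)⁻¹ with hεdef
  -- candidate pieces inside a remainder R
  let Q : Set Ω → Set Ω → Prop := fun R B =>
    MeasurableSet[F2] B ∧ B ⊆ R ∧ ∀ᵐ ω ∂P, K ω B ≤ ε
  let s : Set Ω → ℝ≥0∞ := fun R => ⨆ B, ⨆ _ : Q R B, P B
  have hs_le_one : ∀ R, s R ≤ 1 := by
    intro R
    refine iSup_le fun B => iSup_le fun _ => prob_le_one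
  -- greedy step
  have step : ∀ R : Set Ω, ∃ B, Q R B ∧ s R ≤ 2 * P B := by
    intro R
    by_cases hs : s R = 0
    · refine ⟨∅, ⟨MeasurableSet.empty, empty_subset _, Filter.Eventually.of_forall fun ω => by
        simp⟩, by simp [hs]⟩
    · have hlt : s R / 2 < s R :=
        ENNReal.half_lt_self hs (lt_of_le_of_lt (hs_le_one R) (by norm_num)).ne
      rw [lt_iSup_iff] at hlt
      obtain ⟨B, hB⟩ := hlt
      rw [lt_iSup_iff] at hB
      obtain ⟨hQ, hB⟩ := hB
      refine ⟨B, hQ, ?_⟩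
      have : s R = 2 * (s R / 2) := by
        rw [ENNReal.mul_div_cancel' (by norm_num) (by norm_num)]
      rw [this]
      exact mul_le_mul_right hB.le _
  choose f hfQ hfs using step
  -- the increasing sequence of unions
  let U : ℕ → Set Ω := fun n => Nat.rec (∅ : Set Ω) (fun _ Un => Un ∪ f Unᶜ) n
  have hU0 : U 0 = ∅ := rfl
  have hUs : ∀ n, U (n + 1) = U n ∪ f (U n)ᶜ := fun n => rfl
  set B : ℕ → Set Ω := fun n => f (U n)ᶜ with hBdef
  have hBm : ∀ n, MeasurableSet[F2] (B n) := fun n => (hfQ _).1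
  have hBsub : ∀ n, B n ⊆ (U n)ᶜ := fun n => (hfQ _).2.1
  have hBsmall : ∀ n, ∀ᵐ ω ∂P, K ω (B n) ≤ ε := fun n => (hfQ _).2.2
  have hUmono : ∀ n m, n ≤ m → U n ⊆ U m := by
    intro n m hnm
    induction m with
    | zero => rw [Nat.le_zero] at hnm; subst hnm; exact subset_rfl
    | succ m ih =>
      rcases Nat.lt_or_ge n (m + 1) with h | h
      · exact (ih (Nat.lt_succ_iff.mp h)).trans (by rw [hUs]; exact subset_union_left)
      · have : n = m + 1 := le_antisymm hnm h
        subst this; exact subset_rfl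
  have hBU : ∀ n, B n ⊆ U (n + 1) := fun n => by rw [hUs]; exact subset_union_right
  have hdisj : Pairwise (Function.onFun Disjoint B) := by
    intro i j hij
    rcases Nat.lt_or_ge i j with h | h
    · exact Disjoint.mono ((hBU i).trans (hUmono _ _ h)) (hBsub j) disjoint_compl_right
    · have h' : j < i := lt_of_le_of_ne h (Ne.symm hij)
      exact (Disjoint.mono ((hBU j).trans (hUmono _ _ h')) (hBsub i)
        disjoint_compl_right).symm
  have hsum : ∑' n, P (B n) ≤ 1 := by
    rw [← measure_iUnion hdisj hBm]
    exact prob_le_one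
  have hUsubU : ∀ n, U n ⊆ ⋃ m, B m := by
    intro n
    induction n with
    | zero => rw [hU0]; exact empty_subset _
    | succ n ih =>
      rw [hUs]
      exact union_subset ih (subset_iUnion B n)
  -- the remainder has kernel mass zero a.e.
  have hrem : ∀ᵐ ω ∂P, K ω (⋃ n, B n)ᶜ = 0 := by
    set R : Set Ω := (⋃ n, B n)ᶜ with hRdef
    have hRm : MeasurableSet[F2] R := (MeasurableSet.iUnion hBm).compl
    have hmR : Measurable[F2] fun ω => K ω R := (hK.2.1 R hRm).mono hle le_rfl
    have key : P R = 0 := by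
      by_contra hPR
      obtain ⟨Bs, hBsm, hBssub, hBs⟩ := pow_piece hle hP hK hatomless k hRm
      have hBsmR : Measurable[F2] fun ω => K ω Bs := (hK.2.1 Bs hBsm).mono hle le_rfl
      -- Bs has positive P-measure
      have hPBs : P Bs ≠ 0 := by
        intro hPBs0
        have h1 : (fun ω => K ω Bs) =ᵐ[P] 0 := by
          rw [← lintegral_eq_zero_iff hBsmR, ← P_eq_lintegral hle hP hK hBsm]
          exact hPBs0
        have h2 : (fun ω => K ω R) =ᵐ[P] 0 := by
          filter_upwards [h1, hBs] with ω h1' h2'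
          by_contra h
          have hRpos : 0 < K ω R := pos_iff_ne_zero.mpr h
          have := h2'.2 hRpos
          rw [show K ω Bs = 0 from h1'] at this
          exact lt_irrefl 0 this
        have : P R = 0 := by
          rw [P_eq_lintegral hle hP hK hRm, lintegral_eq_zero_iff hmR]
          exact h2
        exact hPR this
      -- Bs is a candidate for every step
      have hQBs : ∀ n, Q (U n)ᶜ Bs := by
        intro n
        refine ⟨hBsm, hBssub.trans ?_, ?_⟩
        · rw [hRdef]
          exact compl_subset_compl.mpr (hUsubU n)
        · filter_upwards [hBs] with ω hω
          have h1 : 2 ^ k * K ω Bs ≤ 1 := hω.1.trans (kernel_le_one hK ω R)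
          rw [hεdef, ENNReal.le_inv_iff_mul_le, mul_comm]
          exact h1
      have hlow : ∀ n, P Bs ≤ 2 * P (B n) := by
        intro n
        refine le_trans ?_ (hfs (U n)ᶜ)
        exact le_iSup_of_le Bs (le_iSup_of_le (hQBs n) le_rfl)
      -- contradiction with summability
      have h2 : ∑' _ : ℕ, P Bs ≤ ∑' n, 2 * P (B n) :=
        ENNReal.tsum_le_tsum hlow
      rw [ENNReal.tsum_mul_left, ENNReal.tsum_const_eq_top_of_ne_zero hPBs] at h2
      have : (2 : ℝ≥0∞) * ∑' n, P (B n) ≤ 2 * 1 := mul_le_mul_right hsum _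
      rw [mul_one] at this
      have := le_trans h2 this
      simp at this
    rw [P_eq_lintegral hle hP hK (MeasurableSet.iUnion hBm).compl, lintegral_eq_zero_iff hmR] at key
    exact key
  exact ⟨B, hBm, hBsmall, hrem⟩

end Aux

theorem stmt9 {Ω : Type*} (F1 F2 : MeasurableSpace Ω) (hle : F1 ≤ F2)
    (P : @Measure Ω F2) (hP : @IsProbabilityMeasure Ω F2 P)
    (K : Ω → @Measure Ω F2) (hK : IsCondKernel F1 F2 P K)
    (hatomless : CondAtomless F1 F2 P) :
    ∀ᵐ ω ∂P, ∀ A : Set Ω, MeasurableSet[F2] A → 0 < K ω A →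
      ∃ B : Set Ω, MeasurableSet[F2] B ∧ B ⊆ A ∧ 0 < K ω B ∧ K ω B < K ω A := by
  classical
  choose 𝓑 h𝓑m h𝓑small h𝓑rem using exists_small_partition hle hP hK hatomless
  have hsmall : ∀ᵐ ω ∂P, ∀ k n, K ω (𝓑 k n) ≤ ((2 : ℝ≥0∞) ^ k)⁻¹ := by
    rw [MeasureTheory.ae_all_iff]
    intro k
    rw [MeasureTheory.ae_all_iff]
    exact h𝓑small k
  have hrem : ∀ᵐ ω ∂P, ∀ k, K ω (⋃ n, 𝓑 k n)ᶜ = 0 := by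
    rw [MeasureTheory.ae_all_iff]
    exact h𝓑rem
  filter_upwards [hsmall, hrem] with ω hω1 hω2
  intro A hA hApos
  by_contra hcon
  push_neg at hcon
  -- A is an atom of K ω: every measurable subset has mass 0 or at least K ω A
  have hdich : ∀ C : Set Ω, MeasurableSet[F2] C → C ⊆ A → K ω C = 0 := by
    intro C hC hCsub
    by_contra h
    have hCpos : 0 < K ω C := pos_iff_ne_zero.mpr h
    have hge : K ω A ≤ K ω C := hcon C hC hCsub hCpos
    have hle' : K ω C ≤ K ω A := measure_mono hCsub
    have hCA : K ω C = K ω A := le_antisymm hle' hge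
    -- choose k with (2^k)⁻¹ < K ω A
    obtain ⟨k, hk⟩ := ENNReal.exists_inv_two_pow_lt hApos.ne'
    rw [← ENNReal.inv_pow] at hk
    -- each piece of the k-th partition meets C in a null set
    have hpieces : ∀ n, K ω (C ∩ 𝓑 k n) = 0 := by
      intro n
      by_contra hn
      have hpos : 0 < K ω (C ∩ 𝓑 k n) := pos_iff_ne_zero.mpr hn
      have h1 : K ω A ≤ K ω (C ∩ 𝓑 k n) :=
        hcon _ (hC.inter (h𝓑m k n)) (inter_subset_left.trans hCsub) hpos
      have h2 : K ω (C ∩ 𝓑 k n) ≤ ((2 : ℝ≥0∞) ^ k)⁻¹ :=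
        le_trans (measure_mono inter_subset_right) (hω1 k n)
      exact absurd (h1.trans h2) (not_le.mpr hk)
    have hcover : C ⊆ (⋃ n, C ∩ 𝓑 k n) ∪ (⋃ n, 𝓑 k n)ᶜ := by
      intro x hx
      by_cases hx' : x ∈ ⋃ n, 𝓑 k n
      · obtain ⟨n, hn⟩ := mem_iUnion.mp hx'
        exact Or.inl (mem_iUnion.mpr ⟨n, ⟨hx, hn⟩⟩)
      · exact Or.inr hx'
    have : K ω C ≤ (∑' n, K ω (C ∩ 𝓑 k n)) + K ω (⋃ n, 𝓑 k n)ᶜ := by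
      calc K ω C ≤ K ω ((⋃ n, C ∩ 𝓑 k n) ∪ (⋃ n, 𝓑 k n)ᶜ) := measure_mono hcover
      _ ≤ K ω (⋃ n, C ∩ 𝓑 k n) + K ω (⋃ n, 𝓑 k n)ᶜ := measure_union_le _ _
      _ ≤ (∑' n, K ω (C ∩ 𝓑 k n)) + K ω (⋃ n, 𝓑 k n)ᶜ :=
          add_le_add_left (measure_iUnion_le _) _
    rw [hω2 k] at this
    simp only [hpieces, tsum_zero, add_zero] at this
    rw [hCA] at this
    exact absurd (le_antisymm this zero_le) hApos.ne'
  have := hdich A hA subset_rfl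
  exact hApos.ne' this
end

section
/- Suppose the conditional expectation with respect to F1 is given by a kernel K, i.e., K : Ω × F2 → [0,1] satisfies: (1) for every ω ∈ Ω, K(ω, ·) is a probability measure on F2; (2) for each A ∈ F2, the map ω ↦ K(ω, A) is F1-measurable; (3) for each ξ ∈ L¹(Ω, F2, P), E[ξ | F1](ω) = ∫ ξ(τ) K(ω, dτ) for P-almost every ω. If F2 is generated by a countable family of sets and for P-almost every ω ∈ Ω the probability measure K(ω, ·) is atomless on F2, then F2 is atomless conditionally to F1. -/
open MeasureTheory ProbabilityTheory Set
open scoped ENNReal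

lemma exists_gen_real {Ω : Type*} [m : MeasurableSpace Ω]
    (hgen : ∃ S : Set (Set Ω), S.Countable ∧ m = MeasurableSpace.generateFrom S) :
    ∃ f : Ω → ℝ, (∀ τ, f τ ∈ Set.Ioo (0:ℝ) 1) ∧ Measurable[m] f ∧
      ∀ s : Set Ω, MeasurableSet[m] s → ∃ t : Set ℝ, MeasurableSet t ∧ f ⁻¹' t = s := by

  haveI : MeasurableSpace.CountablyGenerated Ω := ⟨hgen⟩
  -- step 1 : map to Cantor space
  set f₀ := MeasurableSpace.mapNatBool Ω with hf₀
  have hf₀meas : Measurable f₀ := MeasurableSpace.measurable_mapNatBool Ω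
  have hcomap₀ : m = MeasurableSpace.comap f₀ inferInstance := by
    refine le_antisymm ?_ (measurable_iff_comap_le.mp hf₀meas)
    conv_lhs => rw [← MeasurableSpace.generateFrom_natGeneratingSequence Ω]
    refine MeasurableSpace.generateFrom_le ?_
    rintro _ ⟨n, rfl⟩
    refine ⟨{y | y n = true}, ?_, ?_⟩
    · show MeasurableSet ((fun y : ℕ → Bool => y n) ⁻¹' {true})
      exact (measurable_pi_apply n) (measurableSet_singleton true)
    · ext x
      simp [MeasurableSpace.mapNatBool, hf₀]
  -- step 2 : embed Cantor space into ℝ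
  obtain ⟨e, he⟩ := MeasureTheory.exists_measurableEmbedding_real (α := ℕ → Bool)
  -- step 3 : embed ℝ into (0,1)
  set h : ℝ → ℝ := fun x => 2⁻¹ + Real.arctan x / Real.pi with hh
  have hπ := Real.pi_pos
  have hcont : Continuous h := by
    exact continuous_const.add (Real.continuous_arctan.div_const _)
  have hinj : Function.Injective h := by
    intro x y hxy
    have : Real.arctan x = Real.arctan y := by
      simp only [hh, add_right_inj] at hxy
      exact (div_left_inj' Real.pi_ne_zero).mp hxy
    exact Real.arctan_injective this
  have hmemb : MeasurableEmbedding h := hcont.measurableEmbedding hinj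
  have hrange : ∀ x, h x ∈ Set.Ioo (0:ℝ) 1 := by
    intro x
    have h1 : Real.arctan x / Real.pi < 2⁻¹ := by
      rw [div_lt_iff₀ hπ]
      nlinarith [Real.arctan_lt_pi_div_two x]
    have h2 : -(2⁻¹ : ℝ) < Real.arctan x / Real.pi := by
      rw [lt_div_iff₀ hπ]
      nlinarith [Real.neg_pi_div_two_lt_arctan x]
    constructor
    · simp only [hh]; linarith
    · simp only [hh]; linarith
  refine ⟨h ∘ e ∘ f₀, fun τ => hrange _, ?_, ?_⟩
  · have : Measurable (h ∘ e) := hcont.measurable.comp he.measurable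
    exact this.comp (by rw [hcomap₀] at hf₀meas ⊢; exact hf₀meas)
  · intro s hs
    have : m = MeasurableSpace.comap (h ∘ e ∘ f₀) inferInstance := by
      rw [hcomap₀]
      have h1 : (inferInstance : MeasurableSpace (ℕ → Bool)) = MeasurableSpace.comap e inferInstance := he.comap_eq.symm
      have h2 : (inferInstance : MeasurableSpace ℝ) = MeasurableSpace.comap h inferInstance := hmemb.comap_eq.symm
      conv_lhs => rw [h1, h2]
      rw [← MeasurableSpace.comap_comp, ← MeasurableSpace.comap_comp]
    rw [this] at hs
    exact hs

theorem stmt10 {Ω : Type*} (F1 F2 : MeasurableSpace Ω) (hle : F1 ≤ F2)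
    (P : @Measure Ω F2) (hP : @IsProbabilityMeasure Ω F2 P)
    (K : Ω → @Measure Ω F2) (hK : IsCondKernel F1 F2 P K)
    (hgen : ∃ S : Set (Set Ω), S.Countable ∧ F2 = MeasurableSpace.generateFrom S)
    (hatomless : ∀ᵐ ω ∂P, ∀ A : Set Ω, MeasurableSet[F2] A → 0 < K ω A →
      ∃ B : Set Ω, MeasurableSet[F2] B ∧ B ⊆ A ∧ 0 < K ω B ∧ K ω B < K ω A) :
    CondAtomless F1 F2 P := by
  classical
  haveI := hP
  obtain ⟨hKprob, hKmeas, hKcond⟩ := hK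
  obtain ⟨f, hf01, hfmeas, hfpre⟩ := exists_gen_real (m := F2) hgen
  intro A hA
  -- the sets A ∩ {f ≤ q}
  have hAq_meas : ∀ q : ℚ, MeasurableSet[F2] (A ∩ f ⁻¹' (Iic (q:ℝ))) :=
    fun q => hA.inter (hfmeas measurableSet_Iic)
  set T : Ω → Set ℝ := fun ω => insert 1 {x | ∃ q : ℚ, x = (q:ℝ) ∧ 0 < (q:ℝ) ∧ (q:ℝ) < 1 ∧
      K ω A ≤ 2 * K ω (A ∩ f ⁻¹' (Iic (q:ℝ)))} with hT
  set c : Ω → ℝ := fun ω => sInf (T ω) with hc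
  have hTne : ∀ ω, (T ω).Nonempty := fun ω => ⟨1, mem_insert _ _⟩
  have hTsub : ∀ ω, T ω ⊆ Icc (0:ℝ) 1 := by
    rintro ω x (rfl | ⟨q, rfl, hq0, hq1, _⟩)
    · exact ⟨zero_le_one, le_refl _⟩
    · exact ⟨hq0.le, hq1.le⟩
  have hTbdd : ∀ ω, BddBelow (T ω) := fun ω => ⟨0, fun x hx => (hTsub ω hx).1⟩
  have hc_mem : ∀ ω, c ω ∈ Icc (0:ℝ) 1 := fun ω =>
    ⟨le_csInf (hTne ω) (fun x hx => (hTsub ω hx).1), csInf_le (hTbdd ω) (mem_insert _ _)⟩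
  have hcond_meas : ∀ q : ℚ, MeasurableSet[F1]
      {ω | K ω A ≤ 2 * K ω (A ∩ f ⁻¹' (Iic (q:ℝ)))} := fun q =>
    measurableSet_le (hKmeas A hA) ((hKmeas _ (hAq_meas q)).const_mul 2)
  have hc_meas : Measurable[F1] c := by
    apply measurable_of_Iio
    intro t
    have h1 : c ⁻¹' Iio t = {ω | ∃ x ∈ T ω, x < t} := by
      ext ω
      simp only [mem_preimage, mem_Iio, mem_setOf_eq, hc]
      exact csInf_lt_iff (hTbdd ω) (hTne ω)
    have h2 : {ω | ∃ x ∈ T ω, x < t} = (if (1:ℝ) < t then (univ : Set Ω) else ∅) ∪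
        ⋃ q : ℚ, if 0 < (q:ℝ) ∧ (q:ℝ) < 1 ∧ (q:ℝ) < t then
          {ω | K ω A ≤ 2 * K ω (A ∩ f ⁻¹' (Iic (q:ℝ)))} else ∅ := by
      ext ω
      constructor
      · rintro ⟨x, hxT, hxt⟩
        rcases hxT with rfl | ⟨q, rfl, hq0, hq1, hqc⟩
        · exact Or.inl (by rw [if_pos hxt]; trivial)
        · refine Or.inr (mem_iUnion.mpr ⟨q, ?_⟩)
          rw [if_pos ⟨hq0, hq1, hxt⟩]; exact hqc
      · rintro (hω | hω)
        · split_ifs at hω with h1t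
          · exact ⟨1, mem_insert _ _, h1t⟩
          · exact absurd hω (notMem_empty ω)
        · obtain ⟨q, hq⟩ := mem_iUnion.mp hω
          split_ifs at hq with hcnd
          · exact ⟨(q:ℝ), Or.inr ⟨q, rfl, hcnd.1, hcnd.2.1, hq⟩, hcnd.2.2⟩
          · exact absurd hq (notMem_empty ω)
    rw [h1, h2]
    refine MeasurableSet.union ?_ (MeasurableSet.iUnion fun q => ?_)
    · split_ifs
      · exact @MeasurableSet.univ Ω F1
      · exact @MeasurableSet.empty Ω F1
    · split_ifs with hcnd
      · exact hcond_meas q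
      · exact @MeasurableSet.empty Ω F1
  set B : Set Ω := A ∩ {τ | f τ ≤ c τ} with hBdef
  have hcF2 : Measurable[F2] c := hc_meas.mono hle le_rfl
  have hB : MeasurableSet[F2] B :=
    hA.inter (measurableSet_le hfmeas hcF2)
  refine ⟨B, hB, inter_subset_left, ?_⟩
  -- a.e. identification of conditional expectations
  have hcexp : ∀ C : Set Ω, MeasurableSet[F2] C →
      cexpInd F1 F2 P C =ᵐ[P] fun ω => (K ω C).toReal := by
    intro C hC
    have hint : Integrable (C.indicator fun _ => (1:ℝ)) P := (integrable_const 1).indicator hC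
    refine (hKcond _ hint).trans (Filter.Eventually.of_forall fun ω => ?_)
    haveI := hKprob ω
    simpa [measureReal_def, Pi.one_def] using integral_indicator_one (μ := K ω) hC
  have hcexpA := hcexp A hA
  have hcexpB := hcexp B hB
  -- kernel gives indicator values on F1-measurable sets
  have hF1ind : ∀ᵐ ω ∂P, ∀ q : ℚ,
      K ω (c ⁻¹' Iic (q:ℝ)) = if c ω ≤ (q:ℝ) then 1 else 0 := by
    rw [ae_all_iff]
    intro q
    have hCq1 : MeasurableSet[F1] (c ⁻¹' Iic (q:ℝ)) := hc_meas measurableSet_Iic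
    have hint : Integrable ((c ⁻¹' Iic (q:ℝ)).indicator fun _ => (1:ℝ)) P :=
      (integrable_const 1).indicator (hle _ hCq1)
    have h1 : P[(c ⁻¹' Iic (q:ℝ)).indicator (fun _ => (1:ℝ))|F1] =
        (c ⁻¹' Iic (q:ℝ)).indicator (fun _ => (1:ℝ)) :=
      condExp_of_stronglyMeasurable hle (stronglyMeasurable_const.indicator hCq1) hint
    have h2 := hKcond _ hint
    rw [h1] at h2
    filter_upwards [h2] with ω hω
    haveI := hKprob ω
    have h3 : ((K ω) (c ⁻¹' Iic (q:ℝ))).toReal = (c ⁻¹' Iic (q:ℝ)).indicator (fun _ => (1:ℝ)) ω := by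
      rw [hω]
      simpa [measureReal_def, Pi.one_def] using (integral_indicator_one (μ := K ω) (hle _ hCq1)).symm
    by_cases hcq : c ω ≤ (q:ℝ)
    · rw [if_pos hcq]
      have : ((K ω) (c ⁻¹' Iic (q:ℝ))).toReal = 1 := by
        rwa [indicator_of_mem (by exact hcq)] at h3
      exact (ENNReal.toReal_eq_one_iff _).mp this
    · rw [if_neg hcq]
      have : ((K ω) (c ⁻¹' Iic (q:ℝ))).toReal = 0 := by
        rwa [indicator_of_notMem (by exact hcq)] at h3
      rcases ENNReal.toReal_eq_zero_iff _ |>.mp this with h | h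
      · exact h
      · exact absurd h (measure_ne_top _ _)
  -- main argument
  filter_upwards [hcexpA, hcexpB, hatomless, hF1ind] with ω hcA hcB hatom hq
  intro hpos
  haveI := hKprob ω
  rw [hcA] at hpos
  have hane : K ω A ≠ ∞ := measure_ne_top _ _
  have ha0 : K ω A ≠ 0 := by
    intro h0; rw [h0] at hpos; simp at hpos
  -- singletons of f are null
  have hsing : ∀ x : ℝ, K ω (f ⁻¹' {x}) = 0 := by
    intro x
    by_contra hx
    have hxpos : 0 < K ω (f ⁻¹' {x}) := pos_iff_ne_zero.mpr hx
    obtain ⟨B', hB'm, hB'sub, hB'0, hB'lt⟩ := hatom _ (hfmeas (measurableSet_singleton x)) hxpos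
    obtain ⟨S, hS, rfl⟩ := hfpre B' hB'm
    by_cases hxS : x ∈ S
    · have hsup : f ⁻¹' {x} ⊆ f ⁻¹' S := fun τ hτ => by
        rw [mem_preimage] at hτ ⊢; rw [hτ]; exact hxS
      rw [subset_antisymm hB'sub hsup] at hB'lt
      exact lt_irrefl _ hB'lt
    · have : f ⁻¹' S = ∅ := by
        refine eq_empty_of_forall_notMem fun τ hτ => hxS ?_
        have h1 : f τ = x := hB'sub hτ
        rw [mem_preimage, h1] at hτ
        exact hτ
      rw [this] at hB'0
      simp at hB'0
  -- K ω is concentrated on {c = c ω}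
  have hcN : K ω {τ | c τ ≠ c ω} = 0 := by
    have hsub : {τ | c τ ≠ c ω} ⊆ ⋃ q : ℚ,
        (if (q:ℝ) < c ω then c ⁻¹' Iic (q:ℝ) else (c ⁻¹' Iic (q:ℝ))ᶜ) := by
      intro τ hτ
      rcases lt_or_gt_of_ne hτ with h | h
      · obtain ⟨q, hq1, hq2⟩ := exists_rat_btwn h
        refine mem_iUnion.mpr ⟨q, ?_⟩
        rw [if_pos hq2]
        exact hq1.le
      · obtain ⟨q, hq1, hq2⟩ := exists_rat_btwn h
        refine mem_iUnion.mpr ⟨q, ?_⟩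
        rw [if_neg (not_lt.mpr hq1.le)]
        exact not_le.mpr hq2
    refine measure_mono_null hsub (measure_iUnion_null fun q => ?_)
    split_ifs with hqc
    · rw [hq q, if_neg (not_le.mpr hqc)]
    · have hm : MeasurableSet[F2] (c ⁻¹' Iic (q:ℝ)) := hcF2 measurableSet_Iic
      rw [measure_compl hm (measure_ne_top _ _), hq q, if_pos (not_lt.mp hqc), measure_univ,
        tsub_self]
  -- identify K ω B
  have hKB : K ω B = K ω (A ∩ f ⁻¹' Iic (c ω)) := by
    have hdiff : B \ {τ | c τ ≠ c ω} = (A ∩ f ⁻¹' Iic (c ω)) \ {τ | c τ ≠ c ω} := by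
      ext τ
      simp only [hBdef, mem_diff, mem_inter_iff, mem_setOf_eq, mem_preimage, mem_Iic, not_not]
      constructor
      · rintro ⟨⟨hτA, hτle⟩, hτc⟩
        exact ⟨⟨hτA, by rwa [hτc] at hτle⟩, hτc⟩
      · rintro ⟨⟨hτA, hτle⟩, hτc⟩
        exact ⟨⟨hτA, by rwa [hτc]⟩, hτc⟩
    calc K ω B = K ω (B \ {τ | c τ ≠ c ω}) := (measure_diff_null hcN).symm
    _ = K ω ((A ∩ f ⁻¹' Iic (c ω)) \ {τ | c τ ≠ c ω}) := by rw [hdiff]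
    _ = K ω (A ∩ f ⁻¹' Iic (c ω)) := measure_diff_null hcN
  -- upper bound
  have hup : 2 * K ω (A ∩ f ⁻¹' Iic (c ω)) ≤ K ω A := by
    have hIicIio : K ω (A ∩ f ⁻¹' Iic (c ω)) ≤ K ω (A ∩ f ⁻¹' Iio (c ω)) := by
      have hsplit : A ∩ f ⁻¹' Iic (c ω) ⊆ (A ∩ f ⁻¹' Iio (c ω)) ∪ f ⁻¹' {c ω} := by
        rintro τ ⟨hτA, (hτle : f τ ≤ c ω)⟩
        rcases lt_or_eq_of_le hτle with h | h
        · exact Or.inl ⟨hτA, h⟩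
        · exact Or.inr h
      calc K ω (A ∩ f ⁻¹' Iic (c ω)) ≤ K ω (A ∩ f ⁻¹' Iio (c ω)) + K ω (f ⁻¹' {c ω}) :=
            le_trans (measure_mono hsplit) (measure_union_le _ _)
      _ = K ω (A ∩ f ⁻¹' Iio (c ω)) := by rw [hsing (c ω), add_zero]
    have hrep : A ∩ f ⁻¹' Iio (c ω) = ⋃ q : {q : ℚ // 0 < (q:ℝ) ∧ (q:ℝ) < c ω},
        A ∩ f ⁻¹' Iic ((q:ℚ):ℝ) := by
      ext τ
      constructor
      · rintro ⟨hτA, (hτlt : f τ < c ω)⟩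
        have h0 : (0:ℝ) < f τ := (hf01 τ).1
        obtain ⟨q, hq1, hq2⟩ := exists_rat_btwn hτlt
        exact mem_iUnion.mpr ⟨⟨q, lt_trans h0 hq1, hq2⟩, hτA, hq1.le⟩
      · intro hτ
        obtain ⟨⟨q, hq0, hqc⟩, hτA, hτle⟩ := mem_iUnion.mp hτ
        exact ⟨hτA, lt_of_le_of_lt hτle hqc⟩
    have hdir : Directed (· ⊆ ·) (fun q : {q : ℚ // 0 < (q:ℝ) ∧ (q:ℝ) < c ω} =>
        A ∩ f ⁻¹' Iic ((q:ℚ):ℝ)) := by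
      rintro ⟨q1, hq1⟩ ⟨q2, hq2⟩
      refine ⟨⟨max q1 q2, ?_, ?_⟩, ?_, ?_⟩
      · push_cast; exact lt_max_of_lt_left hq1.1
      · push_cast; exact max_lt hq1.2 hq2.2
      · exact inter_subset_inter_right _ (preimage_mono (Iic_subset_Iic.mpr (by push_cast; exact le_max_left _ _)))
      · exact inter_subset_inter_right _ (preimage_mono (Iic_subset_Iic.mpr (by push_cast; exact le_max_right _ _)))
    have hsup : K ω (A ∩ f ⁻¹' Iio (c ω)) = ⨆ q : {q : ℚ // 0 < (q:ℝ) ∧ (q:ℝ) < c ω},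
        K ω (A ∩ f ⁻¹' Iic ((q:ℚ):ℝ)) := by
      rw [hrep]
      exact Directed.measure_iUnion hdir
    have hbound : ∀ q : {q : ℚ // 0 < (q:ℝ) ∧ (q:ℝ) < c ω},
        2 * K ω (A ∩ f ⁻¹' Iic ((q:ℚ):ℝ)) ≤ K ω A := by
      rintro ⟨q, hq0, hqc⟩
      have hqT : (q:ℝ) ∉ T ω := fun hmem => absurd (csInf_le (hTbdd ω) hmem) (not_le.mpr hqc)
      have hq1 : (q:ℝ) < 1 := lt_of_lt_of_le hqc (hc_mem ω).2
      have : ¬ (K ω A ≤ 2 * K ω (A ∩ f ⁻¹' (Iic (q:ℝ)))) := by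
        intro hcontra
        exact hqT (Or.inr ⟨q, rfl, hq0, hq1, hcontra⟩)
      exact (not_le.mp this).le
    calc 2 * K ω (A ∩ f ⁻¹' Iic (c ω)) ≤ 2 * K ω (A ∩ f ⁻¹' Iio (c ω)) := by
          exact mul_le_mul_right hIicIio 2
    _ = ⨆ q : {q : ℚ // 0 < (q:ℝ) ∧ (q:ℝ) < c ω}, 2 * K ω (A ∩ f ⁻¹' Iic ((q:ℚ):ℝ)) := by
          rw [hsup, ENNReal.mul_iSup]
    _ ≤ K ω A := iSup_le hbound
  -- lower bound
  have hlow : K ω A ≤ 2 * K ω (A ∩ f ⁻¹' Iic (c ω)) := by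
    haveI hne : Nonempty {q : ℚ // c ω < (q:ℝ)} := ⟨⟨2, lt_of_le_of_lt (hc_mem ω).2 (by norm_num)⟩⟩
    have hrep : A ∩ f ⁻¹' Iic (c ω) = ⋂ q : {q : ℚ // c ω < (q:ℝ)},
        A ∩ f ⁻¹' Iic ((q:ℚ):ℝ) := by
      ext τ
      constructor
      · rintro ⟨hτA, hτle⟩
        exact mem_iInter.mpr fun ⟨q, hq⟩ => ⟨hτA, le_trans hτle hq.le⟩
      · intro hτ
        have hτA : τ ∈ A := (mem_iInter.mp hτ (Classical.arbitrary _)).1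
        refine ⟨hτA, ?_⟩
        show f τ ≤ c ω
        by_contra hgt
        obtain ⟨q, hq1, hq2⟩ := exists_rat_btwn (not_le.mp hgt : c ω < f τ)
        exact absurd (mem_iInter.mp hτ ⟨q, hq1⟩).2 (not_le.mpr hq2)
    have hdir : Directed (· ⊇ ·) (fun q : {q : ℚ // c ω < (q:ℝ)} =>
        A ∩ f ⁻¹' Iic ((q:ℚ):ℝ)) := by
      rintro ⟨q1, hq1⟩ ⟨q2, hq2⟩
      refine ⟨⟨min q1 q2, ?_⟩, ?_, ?_⟩
      · push_cast; exact lt_min hq1 hq2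
      · exact inter_subset_inter_right _ (preimage_mono (Iic_subset_Iic.mpr (by push_cast; exact min_le_left _ _)))
      · exact inter_subset_inter_right _ (preimage_mono (Iic_subset_Iic.mpr (by push_cast; exact min_le_right _ _)))
    have hinf : K ω (A ∩ f ⁻¹' Iic (c ω)) = ⨅ q : {q : ℚ // c ω < (q:ℝ)},
        K ω (A ∩ f ⁻¹' Iic ((q:ℚ):ℝ)) := by
      rw [hrep]
      exact Directed.measure_iInter (fun q => (hAq_meas _).nullMeasurableSet)
        hdir ⟨Classical.arbitrary _, measure_ne_top _ _⟩
    have hbound : ∀ q : {q : ℚ // c ω < (q:ℝ)},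
        K ω A ≤ 2 * K ω (A ∩ f ⁻¹' Iic ((q:ℚ):ℝ)) := by
      rintro ⟨q, hqc⟩
      by_cases hq1 : (1:ℝ) ≤ (q:ℝ)
      · have hAsub : A ⊆ f ⁻¹' Iic ((q:ℚ):ℝ) := fun τ hτ => le_trans (hf01 τ).2.le hq1
        rw [inter_eq_self_of_subset_left hAsub, two_mul]
        exact le_add_self
      · obtain ⟨x, hxT, hxq⟩ := exists_lt_of_csInf_lt (hTne ω) hqc
        rcases hxT with rfl | ⟨q', rfl, hq'0, hq'1, hq'cond⟩
        · exact absurd hxq (not_lt.mpr (not_le.mp hq1).le)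
        · calc K ω A ≤ 2 * K ω (A ∩ f ⁻¹' Iic ((q':ℚ):ℝ)) := hq'cond
          _ ≤ 2 * K ω (A ∩ f ⁻¹' Iic ((q:ℚ):ℝ)) := by
              exact mul_le_mul_right (measure_mono (inter_subset_inter_right _
                (preimage_mono (Iic_subset_Iic.mpr hxq.le)))) 2
    rw [hinf]
    have hhalf : K ω A / 2 ≤ ⨅ q : {q : ℚ // c ω < (q:ℝ)}, K ω (A ∩ f ⁻¹' Iic ((q:ℚ):ℝ)) := by
      refine le_iInf fun q => ?_
      rw [ENNReal.div_le_iff_le_mul (Or.inl (by norm_num)) (Or.inl (by norm_num))]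
      rw [mul_comm]
      exact hbound q
    calc K ω A = K ω A / 2 * 2 := by
          rw [ENNReal.div_mul_cancel (by norm_num) (by norm_num)]
    _ ≤ (⨅ q : {q : ℚ // c ω < (q:ℝ)}, K ω (A ∩ f ⁻¹' Iic ((q:ℚ):ℝ))) * 2 :=
          mul_le_mul_left hhalf 2
    _ = 2 * ⨅ q : {q : ℚ // c ω < (q:ℝ)}, K ω (A ∩ f ⁻¹' Iic ((q:ℚ):ℝ)) := mul_comm _ _
  -- conclude
  have h2g : 2 * K ω (A ∩ f ⁻¹' Iic (c ω)) = K ω A := le_antisymm hup hlow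
  have hg0 : K ω (A ∩ f ⁻¹' Iic (c ω)) ≠ 0 := by
    intro h0; rw [h0, mul_zero] at h2g; exact ha0 h2g.symm
  have hgne : K ω (A ∩ f ⁻¹' Iic (c ω)) ≠ ∞ := measure_ne_top _ _
  have hglt : K ω (A ∩ f ⁻¹' Iic (c ω)) < K ω A := by
    refine lt_of_le_of_ne (measure_mono inter_subset_left) fun heq => ?_
    rw [heq, two_mul] at h2g
    have : K ω A + K ω A = K ω A + 0 := by rw [add_zero]; exact h2g
    exact ha0 ((ENNReal.add_right_inj hane).mp this)
  rw [hcB, hcA, hKB]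
  exact ⟨ENNReal.toReal_pos hg0 hgne, (ENNReal.toReal_lt_toReal hgne hane).mpr hglt⟩
end

section
/- There exist a probability space (Ω, F2, P), a sub-σ-algebra F1 ⊆ F2, and a kernel K : Ω × F2 → [0,1] such that: K(ω, ·) is a probability measure on F2 for every ω; ω ↦ K(ω, A) is F1-measurable for each A ∈ F2; E[ξ | F1](ω) = ∫ ξ dK(ω,·) P-almost surely for each ξ ∈ L¹(Ω, F2, P); K(ω, ·) is atomless on F2 for every ω ∈ Ω; and yet F2 is NOT atomless conditionally to F1. (Necessarily such an F2 is not countably generated.) -/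
open MeasureTheory ProbabilityTheory Set
open scoped ENNReal

/-! ### The construction

`Xc` is `ℝ` equipped with the countable/co-countable σ-algebra.  The sample space is
`Om = Xc × (ℝ → ℝ)` (second factor: product of Borel lines).  `P` is the image of the
cocountable 0-1 measure `ν` on `Xc` under `t ↦ (t, 0)`; it is a 0-1 measure on `F2`,
so `F2` is certainly not conditionally atomless with respect to
`F1 = comap fst (countable/cocountable)` (which is `P`-trivial).  The kernel
`K (x, f) = image of the uniform measure on `[0,1]` under `u ↦ (x, eₓ u)` (where `eₓ u`
is the function supported at coordinate `x` with value `u`) is atomless at *every* point,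
is `F1`-measurable and realizes the conditional expectation, because every `F2`-measurable
function only depends on countably many coordinates of the second factor. -/

/-- A copy of `ℝ` carrying the countable/cocountable σ-algebra. -/
def Xc : Type := ℝ

/-- Identity map from `Xc` to `ℝ`. -/
def ofXc : Xc → ℝ := fun t => t

lemma ofXc_injective : Function.Injective ofXc := fun _ _ h => h

instance : MeasurableSpace Xc where
  MeasurableSet' s := s.Countable ∨ (sᶜ : Set Xc).Countable
  measurableSet_empty := Or.inl countable_empty
  measurableSet_compl := by
    rintro s (h | h)
    · exact Or.inr (by simpa using h)
    · exact Or.inl h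
  measurableSet_iUnion := by
    intro f h
    by_cases hc : ∀ i, (f i).Countable
    · exact Or.inl (countable_iUnion hc)
    · push_neg at hc
      obtain ⟨i, hi⟩ := hc
      rcases h i with h' | h'
      · exact absurd h' hi
      · exact Or.inr (h'.mono (compl_subset_compl.mpr (subset_iUnion f i)))

lemma measurableSet_Xc_iff {s : Set Xc} :
    MeasurableSet s ↔ s.Countable ∨ (sᶜ : Set Xc).Countable := Iff.rfl

lemma measurableSet_of_countable {s : Set Xc} (hs : s.Countable) : MeasurableSet s :=
  Or.inl hs

instance : Uncountable Xc := inferInstanceAs (Uncountable ℝ)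

open Classical in
/-- The value of the cocountable 0-1 measure. -/
noncomputable def nuFun (s : Set Xc) : ℝ≥0∞ := if s.Countable then 0 else 1

lemma nuFun_of_countable {s : Set Xc} (hs : s.Countable) : nuFun s = 0 := by
  simp [nuFun, hs]

lemma nuFun_of_not_countable {s : Set Xc} (hs : ¬ s.Countable) : nuFun s = 1 := by
  simp [nuFun, hs]

/-- The cocountable 0-1 measure on `Xc`. -/
noncomputable def nu : Measure Xc :=
  Measure.ofMeasurable (fun s _ => nuFun s)
    (nuFun_of_countable countable_empty)
    (by
      intro f hmeas hdisj
      show nuFun (⋃ i, f i) = ∑' i, nuFun (f i)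
      by_cases hc : ∀ i, (f i).Countable
      · rw [nuFun_of_countable (countable_iUnion hc)]
        simp [nuFun_of_countable, hc]
      · push_neg at hc
        obtain ⟨j, hj⟩ := hc
        have hcompl : ((f j)ᶜ : Set Xc).Countable := (hmeas j).resolve_left hj
        rw [nuFun_of_not_countable (fun h => hj (h.mono (subset_iUnion f j)))]
        rw [tsum_eq_single j]
        · rw [nuFun_of_not_countable hj]
        · intro i hij
          have hsub : f i ⊆ (f j)ᶜ := (hdisj hij).subset_compl_right
          rw [nuFun_of_countable (hcompl.mono hsub)])

lemma nu_apply {s : Set Xc} (hs : MeasurableSet s) : nu s = nuFun s :=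
  Measure.ofMeasurable_apply s hs

lemma nu_of_countable {s : Set Xc} (hs : s.Countable) : nu s = 0 := by
  rw [nu_apply (measurableSet_of_countable hs), nuFun_of_countable hs]

lemma nu_of_not_countable {s : Set Xc} (hs : MeasurableSet s) (h : ¬ s.Countable) :
    nu s = 1 := by
  rw [nu_apply hs, nuFun_of_not_countable h]

lemma nu_01 {s : Set Xc} (hs : MeasurableSet s) : nu s = 0 ∨ nu s = 1 := by
  by_cases hc : s.Countable
  · exact Or.inl (nu_of_countable hc)
  · exact Or.inr (nu_of_not_countable hs hc)

lemma countable_of_nu_eq_zero {s : Set Xc} (hs : MeasurableSet s) (h : nu s = 0) :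
    s.Countable := by
  by_contra hc
  rw [nu_of_not_countable hs hc] at h
  exact one_ne_zero h

instance : IsProbabilityMeasure nu :=
  ⟨nu_of_not_countable MeasurableSet.univ not_countable_univ⟩

/-- Every measurable function on `Xc` is constant off a countable set. -/
lemma Xc_ae_const {h : Xc → ℝ} (hm : Measurable h) :
    ∃ r : ℝ, {t | h t ≠ r}.Countable := by
  set T : Set ℝ := {x : ℝ | ¬ (h ⁻¹' (Iic x)).Countable} with hT
  have hmemT : ∀ {x y : ℝ}, x ∈ T → x ≤ y → y ∈ T := by
    intro x y hx hxy hc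
    exact hx (hc.mono (preimage_mono (Iic_subset_Iic.mpr hxy)))
  have hTne : T.Nonempty := by
    by_contra hne
    rw [not_nonempty_iff_eq_empty] at hne
    have hcover : (univ : Set Xc) ⊆ ⋃ n : ℕ, h ⁻¹' (Iic (n : ℝ)) := by
      intro t _
      obtain ⟨n, hn⟩ := exists_nat_ge (h t)
      exact mem_iUnion.mpr ⟨n, hn⟩
    refine not_countable_univ (Set.Countable.mono hcover (countable_iUnion fun n : ℕ => ?_))
    have : (n : ℝ) ∉ T := by rw [hne]; exact notMem_empty _
    simpa [hT, not_not] using this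
  have hTbdd : BddBelow T := by
    have : ∃ n : ℕ, (h ⁻¹' (Iic (-(n : ℝ)))).Countable := by
      by_contra hcc
      push_neg at hcc
      have hcover : (univ : Set Xc) ⊆ ⋃ n : ℕ, (h ⁻¹' (Iic (-(n : ℝ))))ᶜ := by
        intro t _
        obtain ⟨n, hn⟩ := exists_nat_gt (-(h t))
        refine mem_iUnion.mpr ⟨n, ?_⟩
        simp only [mem_compl_iff, mem_preimage, mem_Iic, not_le]
        linarith
      refine not_countable_univ (Set.Countable.mono hcover (countable_iUnion fun n : ℕ => ?_))
      exact (hm measurableSet_Iic).resolve_left (hcc n)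
    obtain ⟨n, hn⟩ := this
    refine ⟨-(n : ℝ), fun x hx => ?_⟩
    by_contra hlt
    push_neg at hlt
    exact hx (hn.mono (preimage_mono (Iic_subset_Iic.mpr hlt.le)))
  set r : ℝ := sInf T with hr
  refine ⟨r, ?_⟩
  have hlow : (h ⁻¹' (Iio r)).Countable := by
    have hcover : h ⁻¹' (Iio r) ⊆ ⋃ n : ℕ, h ⁻¹' (Iic (r - 1 / (n + 1))) := by
      intro t ht
      have hlt : h t < r := ht
      obtain ⟨n, hn⟩ := exists_nat_one_div_lt (sub_pos.mpr hlt)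
      refine mem_iUnion.mpr ⟨n, ?_⟩
      simp only [mem_preimage, mem_Iic]
      have : (1 : ℝ) / (n + 1) < r - h t := hn
      linarith
    refine Set.Countable.mono hcover (countable_iUnion fun n : ℕ => ?_)
    have hnotT : (r - 1 / (n + 1)) ∉ T := by
      intro hmem
      have : r ≤ r - 1 / (n + 1) := csInf_le hTbdd hmem
      have hpos : (0 : ℝ) < 1 / (n + 1) := by positivity
      linarith
    simpa [hT, not_not] using hnotT
  have hhigh : (h ⁻¹' (Ioi r)).Countable := by
    have hcover : h ⁻¹' (Ioi r) ⊆ ⋃ n : ℕ, h ⁻¹' (Ioi (r + 1 / (n + 1))) := by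
      intro t ht
      have hlt : r < h t := ht
      obtain ⟨n, hn⟩ := exists_nat_one_div_lt (sub_pos.mpr hlt)
      refine mem_iUnion.mpr ⟨n, ?_⟩
      simp only [mem_preimage, mem_Ioi]
      have : (1 : ℝ) / (n + 1) < h t - r := hn
      linarith
    refine Set.Countable.mono hcover (countable_iUnion fun n : ℕ => ?_)
    have hex : ∃ y ∈ T, y < r + 1 / (n + 1) := by
      apply exists_lt_of_csInf_lt hTne
      have hpos : (0 : ℝ) < 1 / (n + 1) := by positivity
      linarith
    obtain ⟨y, hyT, hy⟩ := hex
    have hcompl : ((h ⁻¹' (Iic y))ᶜ : Set Xc).Countable :=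
      (hm measurableSet_Iic).resolve_left hyT
    refine hcompl.mono ?_
    intro t ht
    simp only [mem_compl_iff, mem_preimage, mem_Iic, not_le]
    have : r + 1 / (n + 1) < h t := ht
    linarith
  refine Set.Countable.mono ?_ (hlow.union hhigh)
  intro t ht
  rcases lt_or_gt_of_ne (ht : h t ≠ r) with hlt | hgt
  · exact Or.inl hlt
  · exact Or.inr hgt


/-- The zero function, virtual "location" of the 0-1 measure. -/
def zf : ℝ → ℝ := fun _ => 0

/-- The sample space. -/
abbrev Om : Type := Xc × (ℝ → ℝ)

/-- The sub-σ-algebra: the first coordinate. -/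
def FF1 : MeasurableSpace Om := MeasurableSpace.comap Prod.fst inferInstance

lemma FF1_le : FF1 ≤ (inferInstance : MeasurableSpace Om) :=
  measurable_fst.comap_le

lemma meas_pair : Measurable (fun t : Xc => ((t, zf) : Om)) :=
  measurable_id.prodMk measurable_const

/-- The underlying probability measure: a 0-1 measure sitting at a "generic" point `(t, 0)`. -/
noncomputable def PP : Measure Om := Measure.map (fun t : Xc => ((t, zf) : Om)) nu

/-- Uniform distribution on `[0,1]`. -/
noncomputable def lam : Measure ℝ := volume.restrict (Icc (0:ℝ) 1)

instance : IsProbabilityMeasure lam := by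
  constructor
  rw [lam, Measure.restrict_apply_univ, Real.volume_Icc]
  norm_num

/-- The function supported at coordinate `x`, with value `u` there. -/
noncomputable def ee (x : Xc) (u : ℝ) : ℝ → ℝ := fun i => if i = ofXc x then u else 0

lemma ee_apply_self (x : Xc) (u : ℝ) : ee x u (ofXc x) = u := if_pos rfl

lemma ee_apply_ne (x : Xc) (u : ℝ) {i : ℝ} (hi : i ≠ ofXc x) : ee x u i = 0 := if_neg hi

lemma meas_ee (x : Xc) : Measurable (ee x) := by
  apply measurable_pi_lambda
  intro i
  by_cases hi : i = ofXc x
  · simp only [ee, hi, if_true]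
    exact measurable_id
  · simp only [ee, hi, if_false]
    exact measurable_const

/-- The map carrying the uniform distribution into the fibre over `x`. -/
noncomputable def phi (x : Xc) : ℝ → Om := fun u => (x, ee x u)

lemma meas_phi (x : Xc) : Measurable (phi x) :=
  measurable_const.prodMk (meas_ee x)

/-- The atomless kernel. -/
noncomputable def mm (x : Xc) : Measure Om := Measure.map (phi x) lam

noncomputable def KK (ω : Om) : Measure Om := mm ω.1

instance (x : Xc) : IsProbabilityMeasure (mm x) :=
  Measure.isProbabilityMeasure_map (meas_phi x).aemeasurable

instance (ω : Om) : IsProbabilityMeasure (KK ω) := by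
  unfold KK; infer_instance

instance : IsProbabilityMeasure PP :=
  Measure.isProbabilityMeasure_map meas_pair.aemeasurable

lemma PP_apply {S : Set Om} (hS : MeasurableSet S) :
    PP S = nu ((fun t : Xc => ((t, zf) : Om)) ⁻¹' S) :=
  Measure.map_apply meas_pair hS

lemma PP_01 {S : Set Om} (hS : MeasurableSet S) : PP S = 0 ∨ PP S = 1 := by
  rw [PP_apply hS]
  exact nu_01 (meas_pair hS)

lemma mm_apply (x : Xc) {S : Set Om} (hS : MeasurableSet S) :
    mm x S = lam (phi x ⁻¹' S) :=
  Measure.map_apply (meas_phi x) hS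

/-- The "depends on countably many coordinates" σ-algebra. -/
def depSA : MeasurableSpace Om where
  MeasurableSet' S := ∃ J : Set ℝ, J.Countable ∧
    ∀ (t : Xc) (f g : ℝ → ℝ), (∀ i ∈ J, f i = g i) → (((t, f) : Om) ∈ S ↔ ((t, g) : Om) ∈ S)
  measurableSet_empty := ⟨∅, countable_empty, by simp⟩
  measurableSet_compl := by
    rintro S ⟨J, hJc, hJ⟩
    exact ⟨J, hJc, fun t f g h => not_congr (hJ t f g h)⟩
  measurableSet_iUnion := by
    intro F hF
    choose J hJc hJ using hF
    refine ⟨⋃ n, J n, countable_iUnion hJc, fun t f g h => ?_⟩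
    simp only [mem_iUnion]
    exact exists_congr fun n => hJ n t f g fun i hi => h i (mem_iUnion.mpr ⟨n, hi⟩)

lemma dep_le : (inferInstance : MeasurableSpace Om) ≤ depSA := by
  have : (inferInstance : MeasurableSpace Om) =
      MeasurableSpace.comap Prod.fst (inferInstance : MeasurableSpace Xc) ⊔
      MeasurableSpace.comap Prod.snd (inferInstance : MeasurableSpace (ℝ → ℝ)) := rfl
  rw [this]
  apply sup_le
  · rintro S ⟨A, -, rfl⟩
    exact ⟨∅, countable_empty, fun t f g _ => Iff.rfl⟩
  · have hpi : (inferInstance : MeasurableSpace (ℝ → ℝ)) =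
        ⨆ i : ℝ, MeasurableSpace.comap (fun f : ℝ → ℝ => f i) (inferInstance : MeasurableSpace ℝ) := rfl
    rw [hpi, MeasurableSpace.comap_iSup]
    apply iSup_le
    intro i
    rw [MeasurableSpace.comap_comp]
    rintro S ⟨B, -, rfl⟩
    refine ⟨{i}, countable_singleton i, fun t f g h => ?_⟩
    have : f i = g i := h i rfl
    simp only [mem_preimage, Function.comp_apply, this]

/-- Any measurable set depends on countably many coordinates of the second factor. -/
lemma dep_set {S : Set Om} (hS : MeasurableSet S) :
    ∃ J : Set ℝ, J.Countable ∧
      ∀ (t : Xc) (f g : ℝ → ℝ), (∀ i ∈ J, f i = g i) →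
        (((t, f) : Om) ∈ S ↔ ((t, g) : Om) ∈ S) :=
  dep_le S hS

/-- Any measurable function depends on countably many coordinates of the second factor. -/
lemma dep_fun {ξ : Om → ℝ} (hξ : Measurable ξ) :
    ∃ J : Set ℝ, J.Countable ∧
      ∀ (t : Xc) (f g : ℝ → ℝ), (∀ i ∈ J, f i = g i) → ξ (t, f) = ξ (t, g) := by
  have h : ∀ q : ℚ, ∃ J : Set ℝ, J.Countable ∧
      ∀ (t : Xc) (f g : ℝ → ℝ), (∀ i ∈ J, f i = g i) →
        (((t, f) : Om) ∈ ξ ⁻¹' (Iio (q:ℝ)) ↔ ((t, g) : Om) ∈ ξ ⁻¹' (Iio (q:ℝ))) :=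
    fun q => dep_set (hξ measurableSet_Iio)
  choose J hJc hJ using h
  refine ⟨⋃ q : ℚ, J q, countable_iUnion hJc, ?_⟩
  have key : ∀ (t : Xc) (f g : ℝ → ℝ), (∀ i ∈ ⋃ q : ℚ, J q, f i = g i) →
      ξ (t, g) ≤ ξ (t, f) := by
    intro t f g h
    by_contra hlt
    push_neg at hlt
    obtain ⟨q, hq1, hq2⟩ := exists_rat_btwn hlt
    have hf : ((t, f) : Om) ∈ ξ ⁻¹' (Iio (q:ℝ)) := by
      simpa [mem_preimage, mem_Iio] using hq1
    have := (hJ q t f g fun i hi => h i (mem_iUnion.mpr ⟨q, hi⟩)).mp hf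
    simp only [mem_preimage, mem_Iio] at this
    exact absurd hq2 (not_lt.mpr this.le)
  intro t f g h
  have h' : ∀ i ∈ ⋃ q : ℚ, J q, g i = f i := fun i hi => (h i hi).symm
  exact le_antisymm (key t g f h') (key t f g h)

/-- Conditional expectations with respect to `FF1` are a.s. constant. -/
lemma condexp_eq_const {ξ : Om → ℝ} (hξ : Integrable ξ PP) :
    PP[ξ|FF1] =ᵐ[PP] fun _ => ∫ ω, ξ ω ∂PP := by
  have hle : FF1 ≤ (inferInstance : MeasurableSpace Om) := FF1_le
  haveI : SigmaFinite (PP.trim hle) := by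
    haveI := isFiniteMeasure_trim (μ := PP) hle
    infer_instance
  refine (ae_eq_condExp_of_forall_setIntegral_eq hle hξ ?_ ?_ ?_).symm
  · intro s _ hs
    exact (integrableOn_const_iff).mpr (Or.inr hs)
  · rintro s ⟨A, hA, rfl⟩ -
    have hAm : MeasurableSet (Prod.fst ⁻¹' A : Set Om) := measurable_fst hA
    have hval : PP (Prod.fst ⁻¹' A) = nu A := by
      rw [PP_apply hAm]; rfl
    rcases nu_01 hA with h0 | h1
    · have h0' : PP (Prod.fst ⁻¹' A) = 0 := hval.trans h0
      rw [setIntegral_measure_zero _ h0', setIntegral_measure_zero _ h0']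
    · have hcompl : PP ((Prod.fst ⁻¹' A : Set Om)ᶜ) = 0 := by
        have : ((Prod.fst ⁻¹' A : Set Om)ᶜ) = Prod.fst ⁻¹' (Aᶜ) := by
          rw [preimage_compl]
        rw [this, PP_apply (measurable_fst hA.compl)]
        have : nu (Aᶜ) = 0 := by
          rw [measure_compl hA (measure_ne_top nu A), h1, measure_univ, tsub_self]
        exact this
      have hae : (Prod.fst ⁻¹' A : Set Om) =ᵐ[PP] (univ : Set Om) :=
        ae_eq_univ.mpr hcompl
      rw [setIntegral_congr_set hae, setIntegral_congr_set hae, setIntegral_univ, setIntegral_univ]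
      simp
  · exact StronglyMeasurable.aestronglyMeasurable stronglyMeasurable_const

lemma cexpInd_const {B : Set Om} (hB : MeasurableSet B) :
    cexpInd FF1 inferInstance PP B =ᵐ[PP] fun _ => (PP B).toReal := by
  have hint : Integrable (B.indicator fun _ => (1:ℝ)) PP :=
    (integrable_const (1:ℝ)).indicator hB
  have h := condexp_eq_const hint
  have hval : ∫ ω, B.indicator (fun _ => (1:ℝ)) ω ∂PP = (PP B).toReal := by
    rw [integral_indicator_const (1:ℝ) hB]; simp; rfl
  unfold cexpInd
  rw [hval] at h
  exact h

lemma notCA : ¬ CondAtomless FF1 inferInstance PP := by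
  intro h
  obtain ⟨B, hB, -, hae⟩ := h univ MeasurableSet.univ
  have h1 := cexpInd_const (B := univ) MeasurableSet.univ
  have h2 := cexpInd_const hB
  haveI : (ae PP).NeBot := ae_neBot.mpr (IsProbabilityMeasure.ne_zero PP)
  obtain ⟨ω, hω, he1, he2⟩ := (hae.and (h1.and h2)).exists
  rw [he1] at hω
  simp only [measure_univ, ENNReal.toReal_one] at hω
  obtain ⟨hpos, hlt⟩ := hω one_pos
  rw [he2] at hpos hlt
  rcases PP_01 hB with h0 | h0
  · rw [h0] at hpos; simp at hpos
  · rw [h0] at hlt; simp at hlt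

/-- A function agreeing with a measurable function off a countable set is measurable on `Xc`. -/
lemma measXc_of_countable_ne {β : Type*} [MeasurableSpace β] {g h : Xc → β}
    (hh : Measurable h) (hc : {x | g x ≠ h x}.Countable) : Measurable g := by
  intro B hB
  apply measurableSet_Xc_iff.mpr
  have h1 : g ⁻¹' B ⊆ h ⁻¹' B ∪ {x | g x ≠ h x} := by
    intro x hx
    by_cases hgh : g x = h x
    · exact Or.inl (by rw [mem_preimage, ← hgh]; exact hx)
    · exact Or.inr hgh
  have h2 : (g ⁻¹' B)ᶜ ⊆ (h ⁻¹' B)ᶜ ∪ {x | g x ≠ h x} := by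
    intro x hx
    by_cases hgh : g x = h x
    · exact Or.inl (by rw [mem_compl_iff, mem_preimage, ← hgh]; exact hx)
    · exact Or.inr hgh
  rcases measurableSet_Xc_iff.mp (hh hB) with hcnt | hcnt
  · exact Or.inl ((hcnt.union hc).mono h1)
  · exact Or.inr (by
      refine Set.Countable.mono h2 ?_
      exact hcnt.union hc)

lemma kernel_meas {S : Set Om} (hS : MeasurableSet S) :
    Measurable[FF1] fun ω : Om => KK ω S := by
  classical
  obtain ⟨J, hJc, hJ⟩ := dep_set hS
  set sec : Set Xc := (fun t : Xc => ((t, zf) : Om)) ⁻¹' S with hsec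
  have hsecm : MeasurableSet sec := meas_pair hS
  have hg : Measurable fun x : Xc => mm x S := by
    apply measXc_of_countable_ne (h := fun x : Xc => sec.indicator (fun _ => (1:ℝ≥0∞)) x)
      (measurable_const.indicator hsecm)
    have hsub : {x : Xc | mm x S ≠ sec.indicator (fun _ => (1:ℝ≥0∞)) x} ⊆ ofXc ⁻¹' J := by
      intro x hx
      simp only [mem_setOf_eq] at hx
      by_contra hxJ
      apply hx
      have hiff : ∀ u : ℝ, (((x, ee x u) : Om) ∈ S ↔ ((x, zf) : Om) ∈ S) := by
        intro u
        apply hJ x (ee x u) zf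
        intro i hi
        have hne : i ≠ ofXc x := fun he => hxJ (mem_preimage.mpr (show ofXc x ∈ J from he ▸ hi))
        rw [ee_apply_ne x u hne]; rfl
      have hpre : phi x ⁻¹' S = if ((x, zf) : Om) ∈ S then (univ : Set ℝ) else ∅ := by
        ext u
        by_cases hmem : ((x, zf) : Om) ∈ S
        · simp only [if_pos hmem, mem_univ, iff_true, mem_preimage, phi]
          exact (hiff u).mpr hmem
        · simp only [if_neg hmem, mem_empty_iff_false, iff_false, mem_preimage, phi]
          exact fun hc => hmem ((hiff u).mp hc)
      rw [mm_apply x hS, hpre]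
      by_cases hmem : ((x, zf) : Om) ∈ S
      · rw [if_pos hmem, measure_univ, indicator_of_mem (by exact hmem) _]
      · rw [if_neg hmem, measure_empty, indicator_of_notMem (by exact hmem) _]
    exact Set.Countable.mono hsub (hJc.preimage ofXc_injective)
  exact hg.comp (measurable_iff_comap_le.mpr le_rfl)

/-- The kernel `KK` realizes the conditional expectation with respect to `FF1`. -/
lemma kernel_repr {ξ : Om → ℝ} (hξ : Integrable ξ PP) :
    PP[ξ|FF1] =ᵐ[PP] fun ω => ∫ τ, ξ τ ∂(KK ω) := by
  have hcond := condexp_eq_const hξ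
  set c := ∫ ω, ξ ω ∂PP with hc
  obtain sm := hξ.1
  set ξ' := sm.mk ξ with hξ'
  have hsm : StronglyMeasurable ξ' := sm.stronglyMeasurable_mk
  have haeq : ξ =ᵐ[PP] ξ' := sm.ae_eq_mk
  have hmeas' : Measurable ξ' := hsm.measurable
  obtain ⟨N, hNsub, hNmeas, hN0⟩ :=
    exists_measurable_superset_of_null (ae_iff.mp haeq)
  obtain ⟨J1, hJ1c, hJ1⟩ := dep_fun hmeas'
  obtain ⟨J2, hJ2c, hJ2⟩ := dep_set hNmeas
  have hhm : Measurable fun t : Xc => ξ' (t, zf) := hmeas'.comp meas_pair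
  obtain ⟨r, hr⟩ := Xc_ae_const hhm
  have hsecN : ((fun t : Xc => ((t, zf) : Om)) ⁻¹' N).Countable := by
    apply countable_of_nu_eq_zero (meas_pair hNmeas)
    rw [← PP_apply hNmeas]
    exact hN0
  have hc_eq : c = r := by
    have h1 : c = ∫ ω, ξ' ω ∂PP := integral_congr_ae haeq
    have h2 : ∫ ω, ξ' ω ∂PP = ∫ t, ξ' (t, zf) ∂nu :=
      integral_map meas_pair.aemeasurable hsm.aestronglyMeasurable
    have h3 : ∫ t, ξ' (t, zf) ∂nu = r := by
      have hae' : (fun t : Xc => ξ' (t, zf)) =ᵐ[nu] fun _ => r := by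
        apply ae_iff.mpr
        simpa using nu_of_countable hr
      rw [integral_congr_ae hae', integral_const]
      simp
    rw [h1, h2, h3]
  set badX : Set Xc := ((ofXc ⁻¹' (J1 ∪ J2)) ∪ {t : Xc | ξ' (t, zf) ≠ r}) ∪
      ((fun t : Xc => ((t, zf) : Om)) ⁻¹' N) with hbadX
  have hbadc : badX.Countable :=
    ((((hJ1c.union hJ2c).preimage ofXc_injective).union hr)).union hsecN
  have hgood : ∀ᵐ ω ∂PP, ω.1 ∉ badX := by
    have hm : MeasurableSet (Prod.fst ⁻¹' badX : Set Om) :=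
      measurable_fst (measurableSet_of_countable hbadc)
    have h0 : PP (Prod.fst ⁻¹' badX) = 0 := by
      rw [PP_apply hm]
      exact nu_of_countable hbadc
    apply ae_iff.mpr
    have hset : {ω : Om | ¬ ω.1 ∉ badX} = Prod.fst ⁻¹' badX := by
      ext ω; simp [not_not]
    rw [hset]
    exact h0
  refine hcond.trans ?_
  filter_upwards [hgood] with ω hω
  have hx1 : ofXc ω.1 ∉ J1 := fun h => hω (Or.inl (Or.inl (Or.inl h)))
  have hx2 : ofXc ω.1 ∉ J2 := fun h => hω (Or.inl (Or.inl (Or.inr h)))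
  have hx3 : ξ' (ω.1, zf) = r := by
    by_contra h
    exact hω (Or.inl (Or.inr h))
  have hx4 : ((ω.1, zf) : Om) ∉ N := fun h => hω (Or.inr h)
  have hmmN : mm ω.1 N = 0 := by
    rw [mm_apply _ hNmeas]
    have hempty : phi ω.1 ⁻¹' N = ∅ := by
      ext u
      simp only [mem_preimage, mem_empty_iff_false, iff_false, phi]
      intro hcmem
      apply hx4
      refine (hJ2 ω.1 (ee ω.1 u) zf fun i hi => ?_).mp hcmem
      have hne : i ≠ ofXc ω.1 := fun he => hx2 (show ofXc ω.1 ∈ J2 from he ▸ hi)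
      rw [ee_apply_ne _ _ hne]; rfl
    rw [hempty, measure_empty]
  have haeqK : ξ =ᵐ[mm ω.1] ξ' := by
    apply ae_iff.mpr
    exact measure_mono_null (fun τ hτ => hNsub hτ) hmmN
  show c = ∫ τ, ξ τ ∂(KK ω)
  have e1 : ∫ τ, ξ τ ∂(KK ω) = ∫ τ, ξ' τ ∂(mm ω.1) := integral_congr_ae haeqK
  have e2 : ∫ τ, ξ' τ ∂(mm ω.1) = ∫ u, ξ' (phi ω.1 u) ∂lam :=
    integral_map (meas_phi ω.1).aemeasurable hsm.aestronglyMeasurable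
  have e3 : ∫ u, ξ' (phi ω.1 u) ∂lam = ∫ _u, ξ' (ω.1, zf) ∂lam := by
    apply integral_congr_ae (ae_of_all _ ?_)
    intro u
    refine hJ1 ω.1 (ee ω.1 u) zf fun i hi => ?_
    have hne : i ≠ ofXc ω.1 := fun he => hx1 (show ofXc ω.1 ∈ J1 from he ▸ hi)
    rw [ee_apply_ne _ _ hne]; rfl
  have e4 : ∫ _u, ξ' (ω.1, zf) ∂lam = ξ' (ω.1, zf) := by
    rw [integral_const]; simp
  rw [e1, e2, e3, e4, hx3, hc_eq]

/-- The kernel is atomless at every point. -/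
lemma kernel_atomless : ∀ (ω : Om) (A : Set Om), MeasurableSet A → 0 < KK ω A →
    ∃ B : Set Om, MeasurableSet B ∧ B ⊆ A ∧ 0 < KK ω B ∧ KK ω B < KK ω A := by
  intro ω A hA hpos
  set x := ω.1 with hx
  set W : Set ℝ := phi x ⁻¹' A with hW
  have hWm : MeasurableSet W := meas_phi x hA
  set F : ℝ → ℝ≥0∞ := fun c => lam (W ∩ Iic c) with hF
  set G : ℝ → ℝ := fun c => (F c).toReal with hG
  have hall_ne : ∀ c, F c ≠ ∞ := fun c => measure_ne_top lam _
  have hsplit : ∀ {c c' : ℝ}, c ≤ c' → F c' = F c + lam (W ∩ Ioc c c') := by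
    intro c c' hcc
    have hdec : W ∩ Iic c' = (W ∩ Iic c) ∪ (W ∩ Ioc c c') := by
      rw [← inter_union_distrib_left, Iic_union_Ioc_eq_Iic hcc]
    have hdisj : Disjoint (W ∩ Iic c) (W ∩ Ioc c c') :=
      (Iic_disjoint_Ioc le_rfl).mono inter_subset_right inter_subset_right
    rw [hF]
    simp only
    rw [hdec, measure_union hdisj (hWm.inter measurableSet_Ioc)]
  have hIoc_bound : ∀ {c c' : ℝ}, lam (W ∩ Ioc c c') ≤ ENNReal.ofReal (c' - c) := by
    intro c c'
    calc lam (W ∩ Ioc c c') ≤ lam (Ioc c c') := measure_mono inter_subset_right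
    _ ≤ volume (Ioc c c') := Measure.le_iff'.mp Measure.restrict_le_self _
    _ = ENNReal.ofReal (c' - c) := Real.volume_Ioc
  have hlip : LipschitzWith 1 G := by
    apply LipschitzWith.of_dist_le_mul
    intro a b
    wlog hab : a ≤ b generalizing a b
    · rw [dist_comm a b, dist_comm (G a) (G b)]
      exact this b a (le_of_not_ge hab)
    have hIne : lam (W ∩ Ioc a b) ≠ ∞ := measure_ne_top lam _
    have hine : G b = G a + (lam (W ∩ Ioc a b)).toReal := by
      rw [hG]
      simp only
      rw [hsplit hab, ENNReal.toReal_add (hall_ne a) hIne]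
    have h2 : (lam (W ∩ Ioc a b)).toReal ≤ b - a := by
      calc (lam (W ∩ Ioc a b)).toReal ≤ (ENNReal.ofReal (b - a)).toReal :=
        ENNReal.toReal_mono ENNReal.ofReal_ne_top hIoc_bound
      _ = b - a := ENNReal.toReal_ofReal (by linarith)
    have h0 : (0:ℝ) ≤ (lam (W ∩ Ioc a b)).toReal := ENNReal.toReal_nonneg
    rw [NNReal.coe_one, one_mul, Real.dist_eq, Real.dist_eq]
    rw [abs_of_nonpos (by linarith), abs_of_nonpos (by linarith)]
    linarith
  have hKA : KK ω A = lam W := by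
    rw [show KK ω = mm x from rfl, mm_apply x hA]
  have hF2 : F 2 = KK ω A := by
    have hdec : W = (W ∩ Iic 2) ∪ (W ∩ Ioi 2) := by
      rw [← inter_union_distrib_left, Iic_union_Ioi, inter_univ]
    have hdisj : Disjoint (W ∩ Iic 2) (W ∩ Ioi 2) :=
      (Iic_disjoint_Ioi le_rfl).mono inter_subset_right inter_subset_right
    have hIoi : lam (W ∩ Ioi (2:ℝ)) = 0 := by
      apply le_antisymm _ zero_le
      calc lam (W ∩ Ioi (2:ℝ)) ≤ lam (Ioi 2) := measure_mono inter_subset_right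
      _ = volume (Ioi 2 ∩ Icc 0 1) := Measure.restrict_apply measurableSet_Ioi
      _ = 0 := by
        have : Ioi (2:ℝ) ∩ Icc 0 1 = ∅ :=
          eq_empty_iff_forall_notMem.mpr fun u hu => by
            obtain ⟨h1, h2, h3⟩ := hu
            rw [mem_Ioi] at h1
            linarith
        rw [this, measure_empty]
    rw [hKA]
    conv_rhs => rw [hdec]
    rw [measure_union hdisj (hWm.inter measurableSet_Ioi), hIoi, add_zero]
  have hFneg : F (-1) = 0 := by
    apply le_antisymm _ zero_le
    calc F (-1) ≤ lam (Iic (-1)) := measure_mono inter_subset_right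
    _ = volume (Iic (-1) ∩ Icc 0 1) := Measure.restrict_apply measurableSet_Iic
    _ = 0 := by
      have : Iic (-1:ℝ) ∩ Icc 0 1 = ∅ :=
        eq_empty_iff_forall_notMem.mpr fun u hu => by
          obtain ⟨h1, h2, h3⟩ := hu
          rw [mem_Iic] at h1
          linarith
      rw [this, measure_empty]
  have hAne : KK ω A ≠ ∞ := measure_ne_top _ _
  have hApos : 0 < (KK ω A).toReal := ENNReal.toReal_pos (ne_of_gt hpos) hAne
  set y := (KK ω A).toReal / 2 with hy
  have hy0 : 0 < y := half_pos hApos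
  have hylt : y < (KK ω A).toReal := half_lt_self hApos
  have hmem : y ∈ Icc (G (-1)) (G 2) := by
    constructor
    · show (F (-1)).toReal ≤ y
      rw [hFneg]
      simpa using hy0.le
    · show y ≤ (F 2).toReal
      rw [hF2]
      exact hylt.le
  obtain ⟨cc, -, hcc⟩ :=
    intermediate_value_Icc (by norm_num : (-1:ℝ) ≤ 2) hlip.continuous.continuousOn hmem
  set T : Set Om := {p : Om | p.2 (ofXc x) ≤ cc} with hT
  have hTm : MeasurableSet T :=
    ((measurable_pi_apply (ofXc x)).comp measurable_snd) measurableSet_Iic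
  have hKB : KK ω (A ∩ T) = F cc := by
    rw [show KK ω = mm x from rfl, mm_apply x (hA.inter hTm), hF]
    simp only
    congr 1
    rw [preimage_inter]
    congr 1
    ext u
    simp only [mem_preimage, mem_setOf_eq, phi, mem_inter_iff, mem_Iic, hT]
    rw [ee_apply_self]
  have hBne : KK ω (A ∩ T) ≠ ∞ := measure_ne_top _ _
  have htr : (KK ω (A ∩ T)).toReal = y := by
    rw [hKB]; exact hcc
  refine ⟨A ∩ T, hA.inter hTm, inter_subset_left, ?_, ?_⟩
  · rcases eq_or_ne (KK ω (A ∩ T)) 0 with h | h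
    · rw [h] at htr
      simp at htr
      exact absurd htr.symm (ne_of_gt hy0)
    · exact pos_iff_ne_zero.mpr h
  · refine (ENNReal.toReal_lt_toReal hBne hAne).mp ?_
    rw [htr]
    exact hylt

theorem stmt12 :
    ∃ (Ω : Type) (F2 : MeasurableSpace Ω) (F1 : MeasurableSpace Ω)
      (P : @Measure Ω F2) (K : Ω → @Measure Ω F2),
      F1 ≤ F2 ∧ @IsProbabilityMeasure Ω F2 P ∧
      IsCondKernel F1 F2 P K ∧
      (∀ ω, ∀ A : Set Ω, MeasurableSet[F2] A → 0 < K ω A →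
        ∃ B : Set Ω, MeasurableSet[F2] B ∧ B ⊆ A ∧ 0 < K ω B ∧ K ω B < K ω A) ∧
      ¬ CondAtomless F1 F2 P := by
  refine ⟨Om, inferInstance, FF1, PP, KK, FF1_le, inferInstance,
    ⟨fun ω => inferInstance, fun A hA => kernel_meas hA, fun ξ hξ => kernel_repr hξ⟩,
    kernel_atomless, notCA⟩
end

section
/- Let Q_1, …, Q_n be probability measures on a measurable space (Ω, A). The following are equivalent: (1) (Q_1, …, Q_n) is conditionally atomless, i.e., there exist a probability measure Q with Q_k ≪ Q for each k and a random variable X on (Ω, A) whose law under Q is atomless such that the random vector (dQ_1/dQ, …, dQ_n/dQ) is independent of X under Q; (2) in this definition one can take Q = (1/n)(Q_1 + … + Q_n); (3) in this definition X can be taken to be uniformly distributed on [0,1] under Q. -/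
open MeasureTheory ProbabilityTheory Set Filter
open scoped ENNReal

section helpers

lemma map_cdf_of_atomless (ρ : Measure ℝ) [IsProbabilityMeasure ρ] (h0 : ∀ x : ℝ, ρ {x} = 0) :
    Measure.map (cdf ρ) ρ = volume.restrict (Icc (0:ℝ) 1) := by
  have hfm : Measurable (cdf ρ) := (cdf ρ).mono.measurable
  have hprob : IsProbabilityMeasure (Measure.map (cdf ρ) ρ) :=
    Measure.isProbabilityMeasure_map hfm.aemeasurable
  refine Measure.ext_of_Iic _ _ (fun p => ?_)
  rw [Measure.map_apply hfm measurableSet_Iic, Measure.restrict_apply measurableSet_Iic]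
  rcases lt_or_ge p 0 with hp0 | hp0
  · have h1 : (cdf ρ) ⁻¹' (Iic p) = ∅ := by
      ext x; simp only [mem_preimage, mem_Iic, mem_empty_iff_false, iff_false, not_le]
      exact lt_of_lt_of_le hp0 (cdf_nonneg ρ x)
    have h2 : Iic p ∩ Icc (0:ℝ) 1 = ∅ := by
      ext x; simp only [mem_inter_iff, mem_Iic, mem_Icc, mem_empty_iff_false, iff_false]
      rintro ⟨hx, hx0, -⟩; linarith
    simp [h1, h2]
  rcases le_or_gt 1 p with hp1 | hp1
  · have h1 : (cdf ρ) ⁻¹' (Iic p) = univ := by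
      ext x; simp only [mem_preimage, mem_Iic, mem_univ, iff_true]
      exact (cdf_le_one ρ x).trans hp1
    have h2 : Iic p ∩ Icc (0:ℝ) 1 = Icc (0:ℝ) 1 := by
      apply inter_eq_self_of_subset_right
      intro x hx; exact hx.2.trans hp1
    simp [h1, h2, Real.volume_Icc]
  · have h2 : Iic p ∩ Icc (0:ℝ) 1 = Icc (0:ℝ) p := by
      ext x; simp only [mem_inter_iff, mem_Iic, mem_Icc]
      constructor
      · rintro ⟨h, h0', -⟩; exact ⟨h0', h⟩
      · rintro ⟨h0', h⟩; exact ⟨h, h0', h.trans hp1.le⟩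
    rw [h2, Real.volume_Icc]
    set A := (cdf ρ) ⁻¹' (Iic p) with hA
    rcases eq_empty_or_nonempty A with hAe | hne
    · have hple : p ≤ 0 := by
        refine ge_of_tendsto' (tendsto_cdf_atBot ρ) (fun x => ?_)
        by_contra hlt
        exact (eq_empty_iff_forall_notMem.mp hAe x) (le_of_not_ge hlt)
      have : p = 0 := le_antisymm hple hp0
      simp [hAe, this]
    · obtain ⟨b, hb⟩ : ∃ b, p < cdf ρ b :=
        ((tendsto_cdf_atTop ρ).eventually (eventually_gt_nhds hp1)).exists
      have hAb : A ⊆ Iic b := by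
        intro x hx
        by_contra hbx
        exact absurd ((monotone_cdf ρ (le_of_not_ge hbx)).trans hx) (not_le.mpr hb)
      have bdd : BddAbove A := ⟨b, fun x hx => hAb hx⟩
      set a := sSup A with ha
      have hIio : Iio a ⊆ A := by
        intro y hy
        obtain ⟨x, hxA, hyx⟩ := exists_lt_of_lt_csSup hne hy
        exact le_trans (monotone_cdf ρ hyx.le) hxA
      have hsub : A ⊆ Iic a := fun x hx => le_csSup bdd hx
      have hIioIic : ρ (Iio a) = ρ (Iic a) := by
        apply le_antisymm (measure_mono Iio_subset_Iic_self)
        calc ρ (Iic a) ≤ ρ (Iio a ∪ {a}) := by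
              apply measure_mono; intro x hx
              rcases lt_or_eq_of_le (mem_Iic.mp hx) with h | h
              · exact Or.inl h
              · exact Or.inr (by simp [h])
          _ ≤ ρ (Iio a) + ρ {a} := measure_union_le _ _
          _ = ρ (Iio a) := by rw [h0 a, add_zero]
      have hρA : ρ A = ρ (Iic a) := by
        refine le_antisymm (measure_mono hsub) ?_
        rw [← hIioIic]; exact measure_mono hIio
      -- `cdf ρ a ≤ p`
      have hUnion : Iio a = ⋃ n : ℕ, Iic (a - 1/(n+1)) := by
        ext x
        simp only [mem_Iio, mem_iUnion, mem_Iic]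
        constructor
        · intro hx
          obtain ⟨n, hn⟩ := exists_nat_one_div_lt (sub_pos.mpr hx)
          exact ⟨n, by linarith⟩
        · rintro ⟨n, hn⟩
          have : (0:ℝ) < 1/(n+1) := by positivity
          linarith
      have hle : ρ (Iic a) ≤ ENNReal.ofReal p := by
        rw [← hIioIic, hUnion]
        rw [Directed.measure_iUnion]
        · refine iSup_le (fun n => ?_)
          have hmem : a - 1/(n+1) ∈ A := hIio (by
            simp only [mem_Iio]
            have : (0:ℝ) < 1/(n+1) := by positivity
            linarith)
          rw [← ofReal_cdf ρ]
          exact ENNReal.ofReal_le_ofReal hmem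
        · intro n m
          refine ⟨max n m, Iic_subset_Iic.mpr ?_, Iic_subset_Iic.mpr ?_⟩ <;>
          · apply sub_le_sub_left
            rw [div_le_div_iff₀ (by positivity) (by positivity)]
            have h1 : (n:ℝ) ≤ max n m := Nat.cast_le.mpr (le_max_left n m)
            have h2 : (m:ℝ) ≤ max n m := Nat.cast_le.mpr (le_max_right n m)
            push_cast at h1 h2 ⊢
            nlinarith
      have hfa_le : cdf ρ a ≤ p := by
        have := hle
        rw [← ofReal_cdf ρ a] at this
        exact (ENNReal.ofReal_le_ofReal_iff hp0).mp this
      have hfa_ge : p ≤ cdf ρ a := by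
        have hrc : Filter.Tendsto (cdf ρ) (nhdsWithin a (Ioi a)) (nhds (cdf ρ a)) :=
          ((cdf ρ).right_continuous a).mono (Ioi_subset_Ici le_rfl) |>.tendsto
        refine ge_of_tendsto hrc ?_
        filter_upwards [self_mem_nhdsWithin] with x hx
        by_contra hcon
        have hxA : x ∈ A := le_of_not_ge hcon
        exact absurd (hsub hxA) (not_le.mpr hx : ¬ x ≤ a)
      rw [hρA, ← ofReal_cdf ρ a, le_antisymm hfa_le hfa_ge, sub_zero]

lemma withDensity_inter_eq {Ω β γ : Type*} [MeasurableSpace Ω] [MeasurableSpace β]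
    [MeasurableSpace γ] {ν : Measure Ω} [IsProbabilityMeasure ν] {X : Ω → β} {F : Ω → γ}
    (hX : Measurable X) (hF : Measurable F) (hind : IndepFun X F ν)
    {g : γ → ℝ≥0∞} (hg : Measurable g) {s : Set β} (hs : MeasurableSet s)
    {t : Set γ} (ht : MeasurableSet t) :
    (ν.withDensity (g ∘ F)) (X ⁻¹' s ∩ F ⁻¹' t)
      = ν (X ⁻¹' s) * (ν.withDensity (g ∘ F)) (F ⁻¹' t) := by
  rw [withDensity_apply _ ((hX hs).inter (hF ht)), withDensity_apply _ (hF ht),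
    ← lintegral_indicator ((hX hs).inter (hF ht)), ← lintegral_indicator (hF ht)]
  have hind2 : IndepFun ((s.indicator (1 : β → ℝ≥0∞)) ∘ X) ((t.indicator g) ∘ F) ν :=
    hind.comp (measurable_one.indicator hs) (hg.indicator ht)
  calc ∫⁻ ω, (X ⁻¹' s ∩ F ⁻¹' t).indicator (g ∘ F) ω ∂ν
      = ∫⁻ ω, (((s.indicator (1 : β → ℝ≥0∞)) ∘ X) * ((t.indicator g) ∘ F)) ω ∂ν := by
        refine lintegral_congr fun ω => ?_
        by_cases h1 : X ω ∈ s <;> by_cases h2 : F ω ∈ t <;>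
          simp [Set.indicator, h1, h2, Set.mem_inter_iff]
    _ = (∫⁻ ω, ((s.indicator (1 : β → ℝ≥0∞)) ∘ X) ω ∂ν)
          * ∫⁻ ω, ((t.indicator g) ∘ F) ω ∂ν :=
        lintegral_mul_eq_lintegral_mul_lintegral_of_indepFun
          ((measurable_one.indicator hs).comp hX) ((hg.indicator ht).comp hF) hind2
    _ = ν (X ⁻¹' s) * ∫⁻ ω, (F ⁻¹' t).indicator (g ∘ F) ω ∂ν := by
        have h1 : ((s.indicator (1 : β → ℝ≥0∞)) ∘ X) = (X ⁻¹' s).indicator (1 : Ω → ℝ≥0∞) := by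
          funext ω; by_cases h : X ω ∈ s <;> simp [Set.indicator, h]
        have h2 : ∫⁻ ω, ((t.indicator g) ∘ F) ω ∂ν
            = ∫⁻ ω, (F ⁻¹' t).indicator (g ∘ F) ω ∂ν := by
          refine lintegral_congr fun ω => ?_
          by_cases h : F ω ∈ t <;> simp [Set.indicator, h]
        rw [h1, lintegral_indicator_one (hX hs), h2]

end helpers

theorem stmt13 {Ω : Type*} [mA : MeasurableSpace Ω] {n : ℕ} (hn : 0 < n)
    (Q : Fin n → Measure Ω) (hQprob : ∀ k, IsProbabilityMeasure (Q k)) :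
    List.TFAE
      [ -- (1) `(Q_1, …, Q_n)` is conditionally atomless
        (∃ (ν : Measure Ω) (X : Ω → ℝ), IsProbabilityMeasure ν ∧ (∀ k, Q k ≪ ν) ∧
          Measurable X ∧ (∀ x : ℝ, Measure.map X ν {x} = 0) ∧
          IndepFun X (fun ω k => (Q k).rnDeriv ν ω) ν),
        -- (2) one can take `ν = (1/n)(Q_1 + … + Q_n)`
        (∃ X : Ω → ℝ, Measurable X ∧
          (∀ x : ℝ, Measure.map X ((n : ℝ≥0∞)⁻¹ • ∑ k, Q k) {x} = 0) ∧
          IndepFun X (fun ω k => (Q k).rnDeriv ((n : ℝ≥0∞)⁻¹ • ∑ k, Q k) ω)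
            ((n : ℝ≥0∞)⁻¹ • ∑ k, Q k)),
        -- (3) `X` can be taken uniformly distributed on `[0,1]`
        (∃ (ν : Measure Ω) (X : Ω → ℝ), IsProbabilityMeasure ν ∧ (∀ k, Q k ≪ ν) ∧
          Measurable X ∧ Measure.map X ν = volume.restrict (Set.Icc (0 : ℝ) 1) ∧
          IndepFun X (fun ω k => (Q k).rnDeriv ν ω) ν) ] := by
  have hn0 : (n : ℝ≥0∞) ≠ 0 := Nat.cast_ne_zero.mpr hn.ne'
  have hntop : (n : ℝ≥0∞) ≠ ∞ := ENNReal.natCast_ne_top n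
  set μ : Measure Ω := (n : ℝ≥0∞)⁻¹ • ∑ k, Q k with hμdef
  have hμapp : ∀ s : Set Ω, μ s = (n : ℝ≥0∞)⁻¹ * ∑ k, Q k s := by
    intro s
    rw [hμdef, Measure.smul_apply, Measure.finset_sum_apply, smul_eq_mul]
  have hμprob : IsProbabilityMeasure μ := by
    constructor
    rw [hμapp]
    simp only [measure_univ, Finset.sum_const, Finset.card_univ, Fintype.card_fin, nsmul_eq_mul,
      mul_one]
    exact ENNReal.inv_mul_cancel hn0 hntop
  have hQμ : ∀ k, Q k ≪ μ := by
    intro k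
    refine Measure.AbsolutelyContinuous.mk (fun s _ h0 => ?_)
    rw [hμapp] at h0
    rcases mul_eq_zero.mp h0 with h | h
    · exact absurd h (ENNReal.inv_ne_zero.mpr hntop)
    · exact (Finset.sum_eq_zero_iff.mp h) k (Finset.mem_univ k)
  tfae_have 2 → 1
  | ⟨X, hX, hatom, hind⟩ => ⟨μ, X, hμprob, hQμ, hX, hatom, hind⟩
  tfae_have 3 → 1
  | ⟨ν, X, hνp, habs, hX, hmap, hind⟩ => by
    refine ⟨ν, X, hνp, habs, hX, fun x => ?_, hind⟩
    rw [hmap, Measure.restrict_apply (measurableSet_singleton x)]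
    exact measure_mono_null inter_subset_left (Real.volume_singleton)
  tfae_have 1 → 3
  | ⟨ν, X, hνp, habs, hX, hatom, hind⟩ => by
    set ρ : Measure ℝ := Measure.map X ν with hρdef
    haveI : IsProbabilityMeasure ρ := Measure.isProbabilityMeasure_map hX.aemeasurable
    have hfm : Measurable (cdf ρ) := (cdf ρ).mono.measurable
    refine ⟨ν, fun ω => cdf ρ (X ω), hνp, habs, hfm.comp hX, ?_, ?_⟩
    · have : Measure.map (fun ω => cdf ρ (X ω)) ν = Measure.map (cdf ρ) ρ := by
        rw [hρdef, Measure.map_map hfm hX]; rfl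
      rw [this, map_cdf_of_atomless ρ hatom]
    · exact hind.comp hfm measurable_id
  tfae_have 1 → 2
  | ⟨ν, X, hνp, habs, hX, hatom, hind⟩ => by
    haveI := hνp
    have hμν : μ ≪ ν := by
      refine Measure.AbsolutelyContinuous.mk (fun s hs h0 => ?_)
      rw [hμapp]
      have : ∀ k ∈ Finset.univ, Q k s = 0 := fun k _ => (habs k) h0
      rw [Finset.sum_eq_zero this, mul_zero]
    set F : Ω → (Fin n → ℝ≥0∞) := fun ω k => (Q k).rnDeriv ν ω with hFdef
    have hF : Measurable F :=
      measurable_pi_lambda _ (fun k => Measure.measurable_rnDeriv _ _)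
    set g : (Fin n → ℝ≥0∞) → ℝ≥0∞ := fun v => (n : ℝ≥0∞)⁻¹ * ∑ k, v k with hgdef
    have hg : Measurable g :=
      (Finset.measurable_sum Finset.univ (fun k _ => measurable_pi_apply k)).const_mul _
    have hgF : Measurable (g ∘ F) := hg.comp hF
    have hwd : ν.withDensity (g ∘ F) = μ := by
      ext s hs
      rw [withDensity_apply _ hs, hμapp]
      have hmeas : ∀ k ∈ Finset.univ, Measurable fun ω => (Q k).rnDeriv ν ω :=
        fun k _ => Measure.measurable_rnDeriv _ _
      calc ∫⁻ ω in s, (g ∘ F) ω ∂ν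
          = ∫⁻ ω in s, (n : ℝ≥0∞)⁻¹ * ∑ k, (Q k).rnDeriv ν ω ∂ν := rfl
        _ = (n : ℝ≥0∞)⁻¹ * ∫⁻ ω in s, ∑ k, (Q k).rnDeriv ν ω ∂ν :=
            lintegral_const_mul _ (Finset.measurable_sum Finset.univ hmeas)
        _ = (n : ℝ≥0∞)⁻¹ * ∑ k, ∫⁻ ω in s, (Q k).rnDeriv ν ω ∂ν := by
            rw [lintegral_finset_sum' Finset.univ (fun k _ => (hmeas k (Finset.mem_univ k)).aemeasurable)]
        _ = (n : ℝ≥0∞)⁻¹ * ∑ k, Q k s := by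
            congr 1
            exact Finset.sum_congr rfl fun k _ => Measure.setLIntegral_rnDeriv (habs k) s
    have hkey : ∀ (s : Set ℝ) (t : Set (Fin n → ℝ≥0∞)), MeasurableSet s → MeasurableSet t →
        μ (X ⁻¹' s ∩ F ⁻¹' t) = ν (X ⁻¹' s) * μ (F ⁻¹' t) := by
      intro s t hs ht
      rw [← hwd]
      exact withDensity_inter_eq hX hF hind hg hs ht
    have hXs : ∀ s : Set ℝ, MeasurableSet s → μ (X ⁻¹' s) = ν (X ⁻¹' s) := by
      intro s hs
      have := hkey s univ hs MeasurableSet.univ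
      simpa [measure_univ] using this
    have hatomμ : ∀ x : ℝ, Measure.map X μ {x} = 0 := by
      intro x
      rw [Measure.map_apply hX (measurableSet_singleton x),
        hXs _ (measurableSet_singleton x),
        ← Measure.map_apply hX (measurableSet_singleton x)]
      exact hatom x
    have hindμ : IndepFun X F μ := by
      rw [indepFun_iff_measure_inter_preimage_eq_mul]
      intro s t hs ht
      rw [hkey s t hs ht, hXs s hs]
    -- rewrite the rnDeriv vector w.r.t. μ as a function of F
    have hrn : μ.rnDeriv ν =ᵐ[ν] g ∘ F := by
      rw [← hwd]
      exact Measure.rnDeriv_withDensity ν hgF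
    have hrnμ : μ.rnDeriv ν =ᵐ[μ] g ∘ F := hμν.ae_le hrn
    have hpos : ∀ᵐ ω ∂μ, 0 < μ.rnDeriv ν ω := Measure.rnDeriv_pos hμν
    have hlt : ∀ᵐ ω ∂μ, μ.rnDeriv ν ω < ∞ := hμν.ae_le (Measure.rnDeriv_lt_top μ ν)
    have hGk : ∀ k, ∀ᵐ ω ∂μ, (Q k).rnDeriv μ ω = F ω k / g (F ω) := by
      intro k
      have h1 : (Q k).rnDeriv μ * μ.rnDeriv ν =ᵐ[μ] (Q k).rnDeriv ν :=
        hμν.ae_le (Measure.rnDeriv_mul_rnDeriv (hQμ k))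
      filter_upwards [h1, hrnμ, hpos, hlt] with ω hmul hgf hp hl
      have hFk : F ω k = (Q k).rnDeriv ν ω := rfl
      rw [hFk, show g (F ω) = (g ∘ F) ω from rfl, ← hgf]
      refine (ENNReal.eq_div_iff hp.ne' hl.ne).mpr ?_
      rw [mul_comm]
      exact hmul
    set φ : (Fin n → ℝ≥0∞) → (Fin n → ℝ≥0∞) := fun v k => v k / g v with hφdef
    have hφ : Measurable φ :=
      measurable_pi_lambda _ (fun k => (measurable_pi_apply k).div hg)
    have hG : (fun ω k => (Q k).rnDeriv μ ω) =ᵐ[μ] φ ∘ F := by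
      have := ae_all_iff.mpr hGk
      filter_upwards [this] with ω hω
      funext k
      exact hω k
    refine ⟨X, hX, hatomμ, ?_⟩
    have hcomp : IndepFun X (φ ∘ F) μ := hindμ.comp measurable_id hφ
    exact hcomp.congr (EventuallyEq.rfl) hG.symm
  tfae_finish
end
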